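/- arXiv:1801.03533 — 7 statements merged into one kernel-verified Lean document; each statement's English description precedes it below -/
import Mathlib

section
/- Fix δ > 0, α > 0, and c > 0 (with c = α β^{-(1+δ)} for β > 1). For each integer k ≥ 1 define φ_k = [α^{1/(1+δ)} c^{δ/(1+δ)} (1+c)^{k−1} / B(k−1−1/(1+δ), k−1)]·[(1+c^{-1})^{δ/(1+δ)} − Σ_{j=0}^{k−1} B(j−1/(1+δ), j)(1+c)^{−j}], where B(s,j) = Γ(s+1)/(Γ(j+1)Γ(s−j+1)). Then for every integer k ≥ 1, φ_{k+1} > φ_k. (Consequently, if the Rooney Rule produces a positive expected change at k finalists, it also does so at k+1 finalists, for sufficiently large n.) -/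
open Real Finset

/-- Generalized binomial coefficient `B(s,j) = Γ(s+1)/(Γ(j+1)Γ(s−j+1))`. -/
noncomputable def genBinom (s : ℝ) (j : ℕ) : ℝ :=
  Real.Gamma (s + 1) / (Real.Gamma ((j : ℝ) + 1) * Real.Gamma (s - (j : ℝ) + 1))

/-- The function `φ_k` (as a function of `c = αβ^{-(1+δ)}`). -/
noncomputable def phiK (δ α c : ℝ) (k : ℕ) : ℝ :=
  α ^ (1 / (1 + δ)) * c ^ (δ / (1 + δ)) * (1 + c) ^ (k - 1) /
      genBinom ((k : ℝ) - 1 - 1 / (1 + δ)) (k - 1) *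
    ((1 + c⁻¹) ^ (δ / (1 + δ)) -
      ∑ j ∈ Finset.range k, genBinom ((j : ℝ) - 1 / (1 + δ)) j * (1 + c) ^ (-(j : ℝ)))

namespace PhiAux

noncomputable def bcoef (e : ℝ) (j : ℕ) : ℝ := genBinom ((j : ℝ) - e) j

lemma bcoef_def (e : ℝ) (j : ℕ) :
    bcoef e j = Real.Gamma ((j : ℝ) + 1 - e) /
      (Real.Gamma ((j : ℝ) + 1) * Real.Gamma (1 - e)) := by
  unfold bcoef genBinom
  rw [show (j : ℝ) - e + 1 = (j : ℝ) + 1 - e by ring,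
    show (j : ℝ) - e - (j : ℝ) + 1 = 1 - e by ring]

lemma bcoef_pos {e : ℝ} (he1 : e < 1) (j : ℕ) : 0 < bcoef e j := by
  have hj : (0:ℝ) ≤ (j : ℝ) := Nat.cast_nonneg j
  rw [bcoef_def]
  exact div_pos (Real.Gamma_pos_of_pos (by linarith))
    (mul_pos (Real.Gamma_pos_of_pos (by linarith)) (Real.Gamma_pos_of_pos (by linarith)))

lemma bcoef_zero {e : ℝ} (he1 : e < 1) : bcoef e 0 = 1 := by
  have h : Real.Gamma (1 - e) ≠ 0 := (Real.Gamma_pos_of_pos (by linarith)).ne'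
  rw [bcoef_def]
  norm_num [Real.Gamma_one]
  exact h

lemma bcoef_succ {e : ℝ} (he0 : 0 < e) (he1 : e < 1) (j : ℕ) :
    ((j : ℝ) + 1) * bcoef e (j + 1) = ((j : ℝ) + 1 - e) * bcoef e j := by
  have hj : (0:ℝ) ≤ (j : ℝ) := Nat.cast_nonneg j
  have h1 : ((j:ℝ) + 1 - e) ≠ 0 := by linarith
  have h2 : ((j:ℝ) + 1) ≠ 0 := by linarith
  have hg1 : Real.Gamma ((j:ℝ) + 1 + 1 - e) = ((j:ℝ) + 1 - e) * Real.Gamma ((j:ℝ) + 1 - e) := by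
    rw [show (j:ℝ) + 1 + 1 - e = ((j:ℝ) + 1 - e) + 1 by ring, Real.Gamma_add_one h1]
  have hg2 : Real.Gamma ((j:ℝ) + 1 + 1) = ((j:ℝ) + 1) * Real.Gamma ((j:ℝ) + 1) := by
    rw [show (j:ℝ) + 1 + 1 = ((j:ℝ) + 1) + 1 by ring, Real.Gamma_add_one h2]
  have p1 : Real.Gamma ((j:ℝ)+1) ≠ 0 := (Real.Gamma_pos_of_pos (by linarith)).ne'
  have p2 : Real.Gamma (1-e) ≠ 0 := (Real.Gamma_pos_of_pos (by linarith)).ne'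
  rw [bcoef_def, bcoef_def]
  push_cast
  rw [hg1, hg2]
  field_simp

noncomputable def Ik (e : ℝ) (m : ℕ) (y : ℝ) : ℝ := ∫ t in (0:ℝ)..y, t ^ m * (1 - t) ^ (-e)

lemma integrand_contOn (e : ℝ) (m : ℕ) :
    ContinuousOn (fun t : ℝ => t ^ m * (1 - t) ^ (-e)) (Set.Iio 1) := by
  refine ((continuous_pow m).continuousOn).mul ?_
  refine (continuousOn_const.sub continuousOn_id).rpow_const fun t ht => Or.inl ?_
  have ht1 : t < 1 := ht
  exact sub_ne_zero.mpr ht1.ne'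

lemma integrand_intble (e : ℝ) (m : ℕ) {y : ℝ} (hy0 : 0 ≤ y) (hy1 : y < 1) :
    IntervalIntegrable (fun t : ℝ => t ^ m * (1 - t) ^ (-e)) MeasureTheory.volume 0 y := by
  apply ((integrand_contOn e m).mono ?_).intervalIntegrable
  rw [Set.uIcc_of_le hy0]
  intro t ht
  exact lt_of_le_of_lt ht.2 hy1

lemma Ik_hasDeriv (e : ℝ) (m : ℕ) {y : ℝ} (hy0 : 0 ≤ y) (hy1 : y < 1) :
    HasDerivAt (Ik e m) (y ^ m * (1 - y) ^ (-e)) y :=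
  intervalIntegral.integral_hasDerivAt_right (integrand_intble e m hy0 hy1)
    ((integrand_contOn e m).stronglyMeasurableAtFilter isOpen_Iio y hy1)
    ((integrand_contOn e m).continuousAt (Iio_mem_nhds hy1))

lemma Ik_zero' (e : ℝ) (m : ℕ) : Ik e m 0 = 0 := intervalIntegral.integral_same

lemma Ik_pos (e : ℝ) (m : ℕ) {y : ℝ} (hy0 : 0 < y) (hy1 : y < 1) : 0 < Ik e m y := by
  apply intervalIntegral.intervalIntegral_pos_of_pos_on (integrand_intble e m hy0.le hy1) _ hy0
  intro t ht
  have h1 : 0 < 1 - t := by linarith [ht.2]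
  exact mul_pos (pow_pos ht.1 m) (Real.rpow_pos_of_pos h1 _)

lemma one_sub_rpow_split {e y : ℝ} (hy : 0 < 1 - y) (p q : ℝ) :
    (1 - y) ^ (p + q) = (1 - y) ^ p * (1 - y) ^ q := Real.rpow_add hy p q

/-- Integration by parts step:
`(m+1) I_m = (m+2-e) I_{m+1} + y^{m+1} (1-y)^{1-e}`. -/
lemma Ik_step {e : ℝ} (he0 : 0 < e) (he1 : e < 1) (m : ℕ) {y : ℝ} (hy0 : 0 ≤ y) (hy1 : y < 1) :
    ((m : ℝ) + 1) * Ik e m y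
      = ((m : ℝ) + 2 - e) * Ik e (m + 1) y + y ^ (m + 1) * (1 - y) ^ (1 - e) := by
  set f : ℝ → ℝ := fun t => ((m:ℝ)+1) * (t ^ m * (1 - t) ^ (-e))
      - ((m:ℝ)+2-e) * (t ^ (m+1) * (1 - t) ^ (-e)) with hf
  have hF : ∀ t ∈ Set.uIcc (0:ℝ) y, HasDerivAt (fun t : ℝ => t ^ (m+1) * (1 - t) ^ (1-e)) (f t) t := by
    intro t ht
    rw [Set.uIcc_of_le hy0] at ht
    have ht1 : t < 1 := lt_of_le_of_lt ht.2 hy1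
    have htt : 0 < 1 - t := by linarith
    have h1 : HasDerivAt (fun t : ℝ => (1 - t) ^ (1-e)) ((0-1) * (1-e) * (1-t) ^ (1-e-1)) t :=
      ((hasDerivAt_const t (1:ℝ)).sub (hasDerivAt_id t)).rpow_const (Or.inl htt.ne')
    have h2 := (hasDerivAt_pow (m+1) t).mul h1
    have hsplit : (1 - t) ^ (1-e) = (1 - t) * (1 - t) ^ (-e) := by
      have h := (Real.rpow_add htt 1 (-e)).symm
      rw [Real.rpow_one, show (1:ℝ) + -e = 1 - e by ring] at h
      exact h.symm
    have hsplit2 : (1 - t) ^ (1-e-1) = (1 - t) ^ (-e) := by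
      congr 1
      ring
    have heq : (↑(m+1) * t ^ (m + 1 - 1) * (1 - t) ^ (1-e)
        + t ^ (m+1) * ((0-1) * (1-e) * (1 - t) ^ (1-e-1))) = f t := by
      rw [hf]
      simp only [Nat.add_sub_cancel]
      rw [hsplit, hsplit2]
      push_cast
      ring
    exact heq ▸ h2
  have hint : IntervalIntegrable f MeasureTheory.volume 0 y := by
    exact ((integrand_intble e m hy0 hy1).const_mul _).sub
      ((integrand_intble e (m+1) hy0 hy1).const_mul _)
  have := intervalIntegral.integral_eq_sub_of_hasDerivAt hF hint
  rw [hf] at this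
  rw [intervalIntegral.integral_sub ((integrand_intble e m hy0 hy1).const_mul _)
      ((integrand_intble e (m+1) hy0 hy1).const_mul _),
    intervalIntegral.integral_const_mul, intervalIntegral.integral_const_mul] at this
  have h0 : (0:ℝ) ^ (m+1) * (1 - 0) ^ (1-e) = 0 := by simp
  rw [h0] at this
  have hIm : (∫ t in (0:ℝ)..y, t ^ m * (1 - t) ^ (-e)) = Ik e m y := rfl
  have hIm1 : (∫ t in (0:ℝ)..y, t ^ (m+1) * (1 - t) ^ (-e)) = Ik e (m+1) y := rfl
  rw [hIm, hIm1] at this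
  linarith

lemma Ik_zero_eval {e : ℝ} (he0 : 0 < e) (he1 : e < 1) {y : ℝ} (hy0 : 0 ≤ y) (hy1 : y < 1) :
    Ik e 0 y = (1 - (1 - y) ^ (1 - e)) / (1 - e) := by
  have hne : (1:ℝ) - e ≠ 0 := by linarith
  have hF : ∀ t ∈ Set.uIcc (0:ℝ) y,
      HasDerivAt (fun t : ℝ => -(1 - t) ^ (1-e) / (1-e)) (t ^ 0 * (1 - t) ^ (-e)) t := by
    intro t ht
    rw [Set.uIcc_of_le hy0] at ht
    have ht1 : t < 1 := lt_of_le_of_lt ht.2 hy1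
    have htt : 0 < 1 - t := by linarith
    have h1 : HasDerivAt (fun t : ℝ => (1 - t) ^ (1-e)) ((0-1) * (1-e) * (1-t) ^ (1-e-1)) t :=
      ((hasDerivAt_const t (1:ℝ)).sub (hasDerivAt_id t)).rpow_const (Or.inl htt.ne')
    have h2 := (h1.neg).div_const (1-e)
    have hsplit2 : (1 - t) ^ (1-e-1) = (1 - t) ^ (-e) := by
      congr 1
      ring
    have heq : -((0-1) * (1-e) * (1 - t) ^ (1-e-1)) / (1-e) = t ^ 0 * (1 - t) ^ (-e) := by
      rw [hsplit2]
      field_simp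
      ring
    exact heq ▸ h2
  have hint : IntervalIntegrable (fun t : ℝ => t ^ 0 * (1 - t) ^ (-e))
      MeasureTheory.volume 0 y := integrand_intble e 0 hy0 hy1
  have := intervalIntegral.integral_eq_sub_of_hasDerivAt hF hint
  have hIe : (∫ t in (0:ℝ)..y, t ^ 0 * (1 - t) ^ (-e)) = Ik e 0 y := rfl
  rw [hIe] at this
  rw [this]
  norm_num [Real.one_rpow]
  ring

/-- The incomplete-beta closed form for the tail `S_{n+1}`. -/
lemma sum_formula {e : ℝ} (he0 : 0 < e) (he1 : e < 1) {x : ℝ} (hx0 : 0 < x) (hx1 : x < 1)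
    (n : ℕ) :
    (1 - x) ^ (e - 1) - ∑ j ∈ Finset.range (n + 1), bcoef e j * x ^ j
      = ((n : ℝ) + 1) * bcoef e (n + 1) * (1 - x) ^ (e - 1) * Ik e n x := by
  have hxx : (0:ℝ) < 1 - x := by linarith
  have key : (1 - x) ^ (e - 1) * (1 - x) ^ (1 - e) = 1 := by
    rw [← Real.rpow_add hxx]; norm_num
  induction n with
  | zero =>
    have hb1 : bcoef e 1 = 1 - e := by
      have h := bcoef_succ he0 he1 0
      rw [bcoef_zero he1] at h
      push_cast at h
      linarith
    have hne : (1:ℝ) - e ≠ 0 := by linarith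
    have h2 : Ik e 0 x * (1 - e) = 1 - (1 - x) ^ (1 - e) := by
      rw [Ik_zero_eval he0 he1 hx0.le hx1, div_mul_cancel₀ _ hne]
    rw [Finset.sum_range_one, bcoef_zero he1, hb1]
    push_cast
    linear_combination (-( (1-x) ^ (e-1))) * h2 + key
  | succ n ih =>
    have hstep := Ik_step he0 he1 n hx0.le hx1
    have hsucc := bcoef_succ he0 he1 (n+1)
    rw [Finset.sum_range_succ]
    push_cast at hsucc hstep ⊢
    linear_combination ih + (bcoef e (n+1) * ((1-x) ^ (e-1))) * hstep
      + (bcoef e (n+1) * x ^ (n+1)) * key + (-(((1-x) ^ (e-1)) * Ik e (n+1) x)) * hsucc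

/-- The key strict inequality `(n+2-e) I_{n+1} > (n+1-e) x I_n`. -/
lemma key_ineq {e : ℝ} (he0 : 0 < e) (he1 : e < 1) {x : ℝ} (hx0 : 0 < x) (hx1 : x < 1)
    (n : ℕ) :
    ((n:ℝ) + 1 - e) * x * Ik e n x < ((n:ℝ) + 2 - e) * Ik e (n+1) x := by
  set K : ℝ → ℝ := fun y => y ^ (n+1) * (1 - y) ^ (-e) - ((n:ℝ)+1-e) * Ik e n y with hKdef
  set J : ℝ → ℝ := fun y => ((n:ℝ)+2-e) * Ik e (n+1) y - ((n:ℝ)+1-e) * (y * Ik e n y) with hJdef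
  have hK : ∀ y ∈ Set.Icc (0:ℝ) x, HasDerivAt K (e * y ^ n * (1 - y) ^ (-e-1)) y := by
    intro y hy
    have hy1 : y < 1 := lt_of_le_of_lt hy.2 hx1
    have hyy : 0 < 1 - y := by linarith
    have h1 : HasDerivAt (fun t : ℝ => (1 - t) ^ (-e)) ((0-1) * (-e) * (1-y) ^ (-e-1)) y :=
      ((hasDerivAt_const y (1:ℝ)).sub (hasDerivAt_id y)).rpow_const (Or.inl hyy.ne')
    have h2 := (hasDerivAt_pow (n+1) y).mul h1
    have h3 := (Ik_hasDeriv e n hy.1 hy1).const_mul (((n:ℝ)+1-e))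
    have h4 := h2.sub h3
    have hsplit : (1 - y) ^ (-e) = (1 - y) * (1 - y) ^ (-e-1) := by
      have h := (Real.rpow_add hyy 1 (-e-1)).symm
      rw [Real.rpow_one, show (1:ℝ) + (-e-1) = -e by ring] at h
      exact h.symm
    have heq : (↑(n+1) * y ^ (n + 1 - 1) * (1 - y) ^ (-e)
        + y ^ (n+1) * ((0-1) * (-e) * (1 - y) ^ (-e-1)))
        - ((n:ℝ)+1-e) * (y ^ n * (1 - y) ^ (-e)) = e * y ^ n * (1 - y) ^ (-e-1) := by
      simp only [Nat.add_sub_cancel]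
      rw [hsplit]
      push_cast
      ring
    exact heq ▸ h4
  have hK0 : K 0 = 0 := by
    rw [hKdef]
    simp [Ik_zero' e n]
  have hKmono : StrictMonoOn K (Set.Icc 0 x) := by
    apply strictMonoOn_of_hasDerivWithinAt_pos (convex_Icc 0 x)
      (fun y hy => (hK y hy).continuousAt.continuousWithinAt)
      (fun y hy => ((hK y (interior_subset hy)).hasDerivWithinAt))
    intro y hy
    rw [interior_Icc] at hy
    have hy1 : y < 1 := lt_of_lt_of_le hy.2 hx1.le
    have hyy : 0 < 1 - y := by linarith
    exact mul_pos (mul_pos he0 (pow_pos hy.1 n)) (Real.rpow_pos_of_pos hyy _)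
  have hKpos : ∀ y ∈ Set.Icc (0:ℝ) x, 0 < y → 0 < K y := by
    intro y hy hy0
    have := hKmono (Set.left_mem_Icc.mpr hx0.le) hy hy0
    rw [hK0] at this
    exact this
  have hJ : ∀ y ∈ Set.Icc (0:ℝ) x, HasDerivAt J (K y) y := by
    intro y hy
    have hy1 : y < 1 := lt_of_le_of_lt hy.2 hx1
    have h1 := (Ik_hasDeriv e (n+1) hy.1 hy1).const_mul (((n:ℝ)+2-e))
    have h2 := (((hasDerivAt_id y).mul (Ik_hasDeriv e n hy.1 hy1)).const_mul (((n:ℝ)+1-e)))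
    have h3 := h1.sub h2
    have heq : ((n:ℝ)+2-e) * (y ^ (n+1) * (1 - y) ^ (-e))
        - ((n:ℝ)+1-e) * (1 * Ik e n y + id y * (y ^ n * (1 - y) ^ (-e))) = K y := by
      rw [hKdef]
      simp only [id]
      ring
    exact heq ▸ h3
  have hJ0 : J 0 = 0 := by
    rw [hJdef]
    simp [Ik_zero' e n, Ik_zero' e (n+1)]
  have hJmono : StrictMonoOn J (Set.Icc 0 x) := by
    apply strictMonoOn_of_hasDerivWithinAt_pos (convex_Icc 0 x)
      (fun y hy => (hJ y hy).continuousAt.continuousWithinAt)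
      (fun y hy => ((hJ y (interior_subset hy)).hasDerivWithinAt))
    intro y hy
    rw [interior_Icc] at hy
    exact hKpos y (Set.Ioo_subset_Icc_self hy) hy.1
  have := hJmono (Set.left_mem_Icc.mpr hx0.le) (Set.right_mem_Icc.mpr hx0.le) hx0
  rw [hJ0] at this
  rw [hJdef] at this
  simp only at this
  linarith

end PhiAux

open PhiAux in
/-- Evaluation of `φ_{n+1}` via the incomplete beta integral. -/
lemma phiK_eval (δ α c : ℝ) (hδ : 0 < δ) (hα : 0 < α) (hc : 0 < c) (n : ℕ) :
    phiK δ α c (n+1) =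
      α ^ (1/(1+δ)) * c ^ (δ/(1+δ)) * (1 - (1+c)⁻¹) ^ ((1/(1+δ)) - 1) * (1+c)^n *
        (((n:ℝ) + 1 - 1/(1+δ)) * Ik (1/(1+δ)) n ((1+c)⁻¹)) := by
  set e := 1/(1+δ) with he
  set x := (1+c)⁻¹ with hxdef
  have h1δ : 0 < 1 + δ := by linarith
  have he0 : 0 < e := by rw [he]; positivity
  have he1 : e < 1 := by rw [he, div_lt_one h1δ]; linarith
  have hde : δ / (1 + δ) = 1 - e := by rw [he]; field_simp; ring
  have h1c : 0 < 1 + c := by linarith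
  have hx0 : 0 < x := by rw [hxdef]; positivity
  have hx1 : x < 1 := by rw [hxdef]; rw [inv_lt_one_iff₀]; right; linarith
  have h1mx : 0 < 1 - x := by linarith
  have hpow : ∀ j : ℕ, (1+c) ^ (-(j:ℝ)) = x ^ j := by
    intro j
    rw [Real.rpow_neg h1c.le, Real.rpow_natCast, hxdef, inv_pow]
  have hinv : (1 + c⁻¹) = (1-x)⁻¹ := by
    rw [hxdef]
    have hc' : c ≠ 0 := hc.ne'
    field_simp
    ring_nf
    rw [mul_inv_cancel₀ hc', sq, mul_assoc, mul_inv_cancel₀ hc']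
    ring
  have hbase : (1 + c⁻¹) ^ (δ/(1+δ)) = (1-x) ^ (e-1) := by
    rw [hde, hinv, Real.inv_rpow h1mx.le, ← Real.rpow_neg h1mx.le,
      show -(1-e) = e - 1 by ring]
  have hgenarg : ((n+1:ℕ):ℝ) - 1 - e = (n:ℝ) - e := by push_cast; ring
  have hbne : bcoef e n ≠ 0 := (bcoef_pos he1 n).ne'
  have hsucc := bcoef_succ he0 he1 n
  unfold phiK
  simp only [Nat.add_sub_cancel]
  rw [hgenarg]
  have hsum : ∑ j ∈ Finset.range (n+1), genBinom ((j:ℝ) - e) j * (1+c) ^ (-(j:ℝ))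
      = ∑ j ∈ Finset.range (n+1), bcoef e j * x ^ j := by
    refine Finset.sum_congr rfl fun j _ => ?_
    rw [hpow j]
    rfl
  rw [hsum, hbase]
  have hform := sum_formula he0 he1 hx0 hx1 n
  rw [hform]
  have : genBinom ((n:ℝ) - e) n = bcoef e n := rfl
  rw [this]
  rw [div_mul_eq_mul_div, div_eq_iff hbne]
  linear_combination (α ^ e * c ^ (δ/(1+δ)) * (1+c)^n * ((1-x) ^ (e-1)) * Ik e n x) * hsucc

open PhiAux in
/-- `φ_{k+1} > φ_k` for every integer `k ≥ 1`: increasing the number of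
finalists cannot make the Rooney Rule go from beneficial to harmful. -/
theorem phiK_strict_mono_in_k (δ α c : ℝ) (hδ : 0 < δ) (hα : 0 < α) (hc : 0 < c) :
    ∀ k : ℕ, 1 ≤ k → phiK δ α c k < phiK δ α c (k + 1) := by
  intro k hk
  obtain ⟨n, rfl⟩ : ∃ n, k = n + 1 := ⟨k - 1, (Nat.succ_pred_eq_of_pos hk).symm⟩
  set e := 1/(1+δ) with he
  set x := (1+c)⁻¹ with hxdef
  have h1δ : 0 < 1 + δ := by linarith
  have he0 : 0 < e := by rw [he]; positivity
  have he1 : e < 1 := by rw [he, div_lt_one h1δ]; linarith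
  have h1c : 0 < 1 + c := by linarith
  have hx0 : 0 < x := by rw [hxdef]; positivity
  have hx1 : x < 1 := by rw [hxdef]; rw [inv_lt_one_iff₀]; right; linarith
  have h1mx : 0 < 1 - x := by linarith
  have hmul : x * (1 + c) = 1 := by rw [hxdef]; field_simp
  have h1 := phiK_eval δ α c hδ hα hc n
  have h2 := phiK_eval δ α c hδ hα hc (n+1)
  rw [h1, h2]
  set A := α ^ (1/(1+δ)) * c ^ (δ/(1+δ)) * (1 - (1+c)⁻¹) ^ ((1/(1+δ)) - 1) with hA
  have hApos : 0 < A := by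
    rw [hA]
    have := Real.rpow_pos_of_pos hα (1/(1+δ))
    have := Real.rpow_pos_of_pos hc (δ/(1+δ))
    have := Real.rpow_pos_of_pos h1mx ((1/(1+δ)) - 1)
    positivity
  have hkey := key_ineq he0 he1 hx0 hx1 n
  have hCpos : 0 < A * (1+c)^n := mul_pos hApos (pow_pos h1c n)
  have hlhs : A * (1+c)^n * (((n:ℝ) + 1 - e) * Ik e n x)
      = (A * (1+c)^n) * ((1+c) * (((n:ℝ) + 1 - e) * x * Ik e n x)) := by
    linear_combination (-(A * (1+c)^n * ((n:ℝ)+1-e) * Ik e n x)) * hmul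
  have hrhs : A * (1+c)^(n+1) * ((((n+1:ℕ):ℝ) + 1 - e) * Ik e (n+1) x)
      = (A * (1+c)^n) * ((1+c) * (((n:ℝ) + 2 - e) * Ik e (n+1) x)) := by
    push_cast
    ring
  rw [hlhs, hrhs]
  apply mul_lt_mul_of_pos_left _ hCpos
  exact mul_lt_mul_of_pos_left hkey h1c
end

section
/- Fix δ > 0, α with 0 < α ≤ 1, β > 1, and set c = α β^{-(1+δ)}. Then there exist a > 0 and n₀ such that for all n ≥ n₀ with αn a positive integer and all integers k with 1 ≤ k ≤ (1−c) ln n, the quantity C_n = ∫₁^∞ y f_{(n-k+1:n)}(y) F_{(αn:αn)}(βy) dy and the quantity D_n = (1 + α β^{-(1+δ)})^{−(k − 1/(1+δ))}·∫₁^∞ y f_{(n-k+1:n)}(y) dy satisfy C_n/D_n ≤ 1 + a(ln n)²/n and D_n/C_n ≤ 1 + a(ln n)²/n. -/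
open MeasureTheory Real Finset

/-- Density of the `p`-th smallest of `m` i.i.d. samples from the power law
distribution with `P(Z ≥ t) = t^{-(1+δ)}` on `[1,∞)`. -/
noncomputable def plPdf (δ : ℝ) (p m : ℕ) (x : ℝ) : ℝ :=
  if 1 ≤ x then
    (1 + δ) * ((m : ℝ) - (p : ℝ) + 1) * (m.choose (p - 1) : ℝ) *
      (1 - x ^ (-(1 + δ))) ^ (p - 1) * (x ^ (-(1 + δ))) ^ (m - p + 1) * x⁻¹
  else 0

/-- CDF of the `p`-th smallest of `m` i.i.d. samples from the power law
distribution with `P(Z ≥ t) = t^{-(1+δ)}` on `[1,∞)`. -/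
noncomputable def plCdf (δ : ℝ) (p m : ℕ) (x : ℝ) : ℝ :=
  if 1 ≤ x then
    ∑ j ∈ Finset.Icc p m,
      (m.choose j : ℝ) * (1 - x ^ (-(1 + δ))) ^ j * (x ^ (-(1 + δ))) ^ (m - j)
  else 0

noncomputable def plG (δ : ℝ) (k Q : ℕ) : ℝ :=
  ∫ y in Set.Ioi (1:ℝ), (1 - y ^ (-(1+δ)))^Q * (y ^ (-(1+δ)))^k

noncomputable def plH (δ b : ℝ) (k q m : ℕ) : ℝ :=
  ∫ y in Set.Ioi (1:ℝ),
    (1 - y ^ (-(1+δ)))^q * (y ^ (-(1+δ)))^k * (1 - b * y ^ (-(1+δ)))^m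

section PLaux
open Set


lemma plg_mem {δ : ℝ} (hδ : 0 < δ) {y : ℝ} (hy : 1 < y) :
    y ^ (-(1+δ)) ∈ Set.Ioo (0:ℝ) 1 := by
  constructor
  · positivity
  · exact Real.rpow_lt_one_of_one_lt_of_neg hy (by linarith)

lemma plg_contOn {δ : ℝ} (Q k : ℕ) :
    ContinuousOn (fun y : ℝ => (1 - y ^ (-(1+δ)))^Q * (y ^ (-(1+δ)))^k) (Set.Ioi 1) := by
  have h : ContinuousOn (fun y : ℝ => y ^ (-(1+δ))) (Set.Ioi 1) :=
    ContinuousOn.rpow_const continuousOn_id (fun y hy => Or.inl (by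
      have : (1:ℝ) < y := hy
      positivity))
  exact ((continuousOn_const.sub h).pow Q).mul (h.pow k)

lemma plg_int {δ : ℝ} (hδ : 0 < δ) {k : ℕ} (hk : 1 ≤ k) (Q : ℕ) :
    IntegrableOn (fun y : ℝ => (1 - y ^ (-(1+δ)))^Q * (y ^ (-(1+δ)))^k) (Set.Ioi 1) := by
  have hmaj : IntegrableOn (fun y : ℝ => y ^ ((-(1+δ)) * k)) (Set.Ioi 1) := by
    apply integrableOn_Ioi_rpow_of_lt _ one_pos
    have : (1:ℝ) ≤ k := by exact_mod_cast hk
    nlinarith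
  refine Integrable.mono hmaj ((plg_contOn Q k).aestronglyMeasurable measurableSet_Ioi) ?_
  filter_upwards [ae_restrict_mem measurableSet_Ioi] with y hy
  have hy1 : (1:ℝ) < y := hy
  obtain ⟨hu0, hu1⟩ := plg_mem hδ hy1
  have h1 : (0:ℝ) ≤ 1 - y ^ (-(1+δ)) := by linarith
  have heq : y ^ ((-(1+δ)) * k) = (y ^ (-(1+δ)))^k := by
    rw [Real.rpow_mul (by linarith : (0:ℝ) ≤ y), Real.rpow_natCast]
  rw [Real.norm_eq_abs, Real.norm_eq_abs, heq, abs_of_nonneg (by positivity),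
    abs_of_nonneg (by positivity)]
  have : (1 - y ^ (-(1+δ)))^Q ≤ 1 := pow_le_one₀ h1 (by linarith)
  nlinarith [pow_pos hu0 k, pow_nonneg hu0.le k]

lemma plG_pos {δ : ℝ} (hδ : 0 < δ) {k : ℕ} (hk : 1 ≤ k) (Q : ℕ) :
    0 < plG δ k Q := by
  rw [plG, setIntegral_pos_iff_support_of_nonneg_ae _ (plg_int hδ hk Q)]
  · have hsub : Set.Ioi (1:ℝ) ⊆ Function.support
        (fun y : ℝ => (1 - y ^ (-(1+δ)))^Q * (y ^ (-(1+δ)))^k) ∩ Set.Ioi 1 := by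
      intro y hy
      have hy1 : (1:ℝ) < y := hy
      obtain ⟨hu0, hu1⟩ := plg_mem hδ hy1
      refine ⟨?_, hy⟩
      have : 0 < (1 - y ^ (-(1+δ)))^Q * (y ^ (-(1+δ)))^k := by
        have h1 : (0:ℝ) < 1 - y ^ (-(1+δ)) := by linarith
        positivity
      exact ne_of_gt this
    refine lt_of_lt_of_le ?_ (measure_mono hsub)
    simp
  · filter_upwards [ae_restrict_mem measurableSet_Ioi] with y hy
    have hy1 : (1:ℝ) < y := hy
    obtain ⟨hu0, hu1⟩ := plg_mem hδ hy1
    have h1 : (0:ℝ) ≤ 1 - y ^ (-(1+δ)) := by linarith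
    positivity

lemma plG_succ {δ : ℝ} (hδ : 0 < δ) {k : ℕ} (hk : 1 ≤ k) (Q : ℕ) :
    plG δ k (Q+1) * (((Q:ℝ)+1) + ((k:ℝ) - 1/(1+δ))) = ((Q:ℝ)+1) * plG δ k Q := by
  set p : ℝ := -(1+δ) with hp
  set w : ℝ := 1 + p * k with hw
  have h1δ : (0:ℝ) < 1 + δ := by linarith
  have hk1 : (1:ℝ) ≤ (k:ℝ) := by exact_mod_cast hk
  have hwneg : w < 0 := by
    have : p * k ≤ p * 1 := by
      apply mul_le_mul_of_nonpos_left hk1 (by rw [hp]; linarith)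
    rw [hw]; nlinarith
  set c₁ : ℝ := ((Q:ℝ)+1) * (1+δ) with hc₁
  set c₂ : ℝ := w - ((Q:ℝ)+1) * (1+δ) with hc₂
  -- the combo function
  set dfun : ℝ → ℝ := fun y =>
    c₁ * ((1 - y ^ p)^Q * (y ^ p)^k) + c₂ * ((1 - y ^ p)^(Q+1) * (y ^ p)^k) with hdfun
  have hderiv : ∀ y ∈ Set.Ici (1:ℝ),
      HasDerivAt (fun y : ℝ => (1 - y ^ p)^(Q+1) * y ^ w) (dfun y) y := by
    intro y hy
    have hy0 : (0:ℝ) < y := lt_of_lt_of_le one_pos hy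
    have h1 : HasDerivAt (fun x : ℝ => x ^ p) (p * y ^ (p - 1)) y :=
      Real.hasDerivAt_rpow_const (Or.inl hy0.ne')
    have h2 : HasDerivAt (fun x : ℝ => 1 - x ^ p) (-(p * y ^ (p - 1))) y := by
      simpa using h1.const_sub 1
    have h3 : HasDerivAt (fun x : ℝ => (1 - x ^ p)^(Q+1))
        ((((Q:ℝ)+1) * (1 - y ^ p)^Q) * (-(p * y ^ (p - 1)))) y := by
      have := h2.fun_pow (Q+1)
      simpa [Nat.add_sub_cancel, mul_comm, mul_assoc, mul_left_comm] using this
    have h4 : HasDerivAt (fun x : ℝ => x ^ w) (w * y ^ (w - 1)) y :=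
      Real.hasDerivAt_rpow_const (Or.inl hy0.ne')
    have h5 := h3.fun_mul h4
    refine h5.congr_deriv ?_
    symm
    -- algebra: dfun y equals the raw derivative
    have hpk : (y ^ p)^k = y ^ (p * k) := by
      rw [← Real.rpow_natCast (y ^ p) k, ← Real.rpow_mul hy0.le]
    have hyp : y ^ (p - 1) * y ^ w = y ^ p * (y ^ p)^k := by
      rw [hpk, ← Real.rpow_add hy0, ← Real.rpow_add hy0]
      congr 1
      rw [hw]; ring
    have hyw : y ^ (w - 1) = (y ^ p)^k := by
      rw [hpk]
      congr 1
      rw [hw]; ring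
    rw [hdfun]
    linear_combination (((Q:ℝ)+1) * p * (1 - y ^ p)^Q) * hyp
      - ((1 - y ^ p)^(Q+1) * w) * hyw
      + (((Q:ℝ)+1) * (1 - y ^ p)^Q * y ^ p * (y ^ p)^k
        + (((Q:ℝ)+1) * (1 - y ^ p)^(Q+1) * (y ^ p)^k) * 0) * hp
      + ((1 - y ^ p)^Q * (y ^ p)^k - (1 - y ^ p)^(Q+1) * (y ^ p)^k) * hc₁
      + ((1 - y ^ p)^(Q+1) * (y ^ p)^k) * ((by rw [hc₂, hw, hc₁] : c₂ = 1 + p * (k:ℝ) - c₁))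
  have hint : IntegrableOn dfun (Set.Ioi 1) :=
    ((plg_int hδ hk Q).const_mul c₁).add ((plg_int hδ hk (Q+1)).const_mul c₂)
  have htend : Filter.Tendsto (fun y : ℝ => (1 - y ^ p)^(Q+1) * y ^ w)
      Filter.atTop (nhds 0) := by
    have t1 : Filter.Tendsto (fun y : ℝ => y ^ p) Filter.atTop (nhds 0) := by
      have := tendsto_rpow_neg_atTop (y := 1+δ) h1δ
      simpa [hp] using this
    have t2 : Filter.Tendsto (fun y : ℝ => (1 - y ^ p)^(Q+1)) Filter.atTop (nhds 1) := by
      have := ((tendsto_const_nhds (x := (1:ℝ))).sub t1).pow (Q+1)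
      simpa using this
    have t3 : Filter.Tendsto (fun y : ℝ => y ^ w) Filter.atTop (nhds 0) := by
      have := tendsto_rpow_neg_atTop (y := -w) (by linarith)
      simpa using this
    simpa using t2.mul t3
  have hFTC := integral_Ioi_of_hasDerivAt_of_tendsto' hderiv hint htend
  have hF1 : (1 - (1:ℝ) ^ p)^(Q+1) * (1:ℝ) ^ w = 0 := by
    simp
  rw [hF1, sub_zero] at hFTC
  have hval : ∫ y in Set.Ioi (1:ℝ), dfun y
      = c₁ * plG δ k Q + c₂ * plG δ k (Q+1) := by
    rw [hdfun]
    rw [integral_add ((plg_int hδ hk Q).const_mul c₁) ((plg_int hδ hk (Q+1)).const_mul c₂)]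
    rw [integral_const_mul, integral_const_mul, plG, plG]
  rw [hval] at hFTC
  -- hFTC : c₁ * G Q + c₂ * G (Q+1) = 0
  have h1δ' : (1+δ) ≠ 0 := ne_of_gt h1δ
  have key2 : plG δ k (Q+1) * (-c₂) = ((Q:ℝ)+1) * plG δ k Q * (1+δ) := by
    linear_combination (-1 : ℝ) * hFTC + (plG δ k Q) * hc₁
  have hexp : (((Q:ℝ)+1) + ((k:ℝ) - 1/(1+δ))) = -c₂ / (1+δ) := by
    rw [hc₂, hw, hp]
    field_simp
    ring
  rw [hexp, mul_div_assoc' , key2]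
  field_simp

lemma inv_one_add_le_exp {t : ℝ} (ht : 0 ≤ t) : (1+t)⁻¹ ≤ Real.exp (t^2 - t) := by
  have h1 : (0:ℝ) < 1 + t := by linarith
  have hE : 1 + (t^2 - t) ≤ Real.exp (t^2 - t) := by
    have := Real.add_one_le_exp (t^2 - t); linarith
  rw [inv_le_iff_one_le_mul₀ h1]
  have hid : ((1:ℝ) + (t^2 - t)) * (1 + t) = 1 + t^3 := by ring
  nlinarith [pow_nonneg ht 3]

lemma log_ratio_lb {x : ℝ} (hx : 2 ≤ x) : 1/x ≤ Real.log (x/(x-1)) := by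
  have hx0 : (0:ℝ) < x := by linarith
  have hx1 : (0:ℝ) < x - 1 := by linarith
  have h0 : (0:ℝ) < (x-1)/x := by positivity
  have h1 := Real.log_le_sub_one_of_pos h0
  have h2 : Real.log ((x-1)/x) = -Real.log (x/(x-1)) := by
    rw [← Real.log_inv]
    congr 1
    rw [inv_div]
  have h3 : (x-1)/x - 1 = -(1/x) := by
    field_simp
    ring
  linarith

lemma log_ratio_ub {x : ℝ} (hx : 1 ≤ x) : Real.log ((x+1)/x) ≤ 1/x := by
  have hx0 : (0:ℝ) < x := by linarith
  have h1 := Real.log_le_sub_one_of_pos (by positivity : (0:ℝ) < (x+1)/x)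
  have h3 : (x+1)/x - 1 = 1/x := by field_simp; ring
  linarith

lemma seq_ratio_lower (G : ℕ → ℝ) (A : ℝ) (hA : 0 < A) (hpos : ∀ Q, 0 < G Q)
    (hrec : ∀ Q, G (Q+1) * (((Q:ℝ)+1) + A) = ((Q:ℝ)+1) * G Q) :
    ∀ Q, 1 ≤ Q → ∀ M, G Q * (((Q:ℝ)/((Q:ℝ)+M)) ^ A) ≤ G (Q+M) := by
  intro Q hQ M
  induction M with
  | zero => simp [div_self (by positivity : ((Q:ℝ)) ≠ 0), Real.one_rpow]
  | succ M ih =>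
    have hQR : (1:ℝ) ≤ (Q:ℝ) := by exact_mod_cast hQ
    have hM0 : (0:ℝ) ≤ (M:ℝ) := Nat.cast_nonneg M
    set x : ℝ := (Q:ℝ) + M + 1 with hx
    have hx2 : (2:ℝ) ≤ x := by rw [hx]; linarith
    have hx0 : (0:ℝ) < x := by linarith
    have hx1 : (0:ℝ) < x - 1 := by linarith
    have hxA : (0:ℝ) < x + A := by linarith
    have hstep : G (Q+M+1) * (x + A) = x * G (Q+M) := by
      have h := hrec (Q+M)
      push_cast at h
      linear_combination h + (G (Q+M+1) - G (Q+M)) * hx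
    have hdiv : G (Q+M+1) = G (Q+M) * (x/(x+A)) := by
      field_simp
      linear_combination hstep
    -- key inequality ((x-1)/x)^A ≤ x/(x+A)
    have hrpow : (x+A)/x ≤ ((x/(x-1)) ^ A) := by
      have h1 : ((x/(x-1)) ^ A) = Real.exp (Real.log (x/(x-1)) * A) :=
        Real.rpow_def_of_pos (by positivity) A
      rw [h1]
      have h2 : (x+A)/x = A/x + 1 := by field_simp; ring
      rw [h2]
      calc A/x + 1 ≤ Real.exp (A/x) := Real.add_one_le_exp _
        _ ≤ Real.exp (Real.log (x/(x-1)) * A) := by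
            apply Real.exp_le_exp.mpr
            have := mul_le_mul_of_nonneg_left (log_ratio_lb hx2) hA.le
            calc A/x = A * (1/x) := by ring
              _ ≤ A * Real.log (x/(x-1)) := this
              _ = Real.log (x/(x-1)) * A := by ring
    have hkey : (((x-1)/x) ^ A) ≤ x/(x+A) := by
      have hpos1 : (0:ℝ) < (x+A)/x := by positivity
      have hpos2 : (0:ℝ) < ((x/(x-1)) ^ A) := by positivity
      have hinv := one_div_le_one_div_of_le hpos1 hrpow
      rw [one_div_div] at hinv
      have heqb : (x-1)/x = (x/(x-1))⁻¹ := by rw [inv_div]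
      rw [heqb, Real.inv_rpow (by positivity)]
      calc ((x/(x-1)) ^ A)⁻¹ = 1/((x/(x-1)) ^ A) := by rw [one_div]
        _ ≤ x/(x+A) := hinv
    -- combine
    have h6 : ((Q:ℝ)/((Q:ℝ)+(M+1):ℝ))^A ≤ ((Q:ℝ)/((Q:ℝ)+M))^A * (x/(x+A)) := by
      have heq : (Q:ℝ)/((Q:ℝ)+(M+1):ℝ) = ((Q:ℝ)/((Q:ℝ)+M)) * ((x-1)/x) := by
        rw [hx]
        have h1 : ((Q:ℝ)+M+1) - 1 = (Q:ℝ)+M := by ring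
        have hQM : (0:ℝ) < (Q:ℝ)+M := by linarith
        rw [h1, div_mul_div_comm, mul_comm ((Q:ℝ)) ((Q:ℝ)+M),
          mul_div_mul_left _ _ (ne_of_gt hQM)]
        ring_nf
      rw [heq, Real.mul_rpow (by positivity) (by positivity)]
      exact mul_le_mul_of_nonneg_left hkey (by positivity)
    have hfin : G Q * (((Q:ℝ)/((Q:ℝ)+(M+1):ℝ)) ^ A) ≤ G (Q+M+1) := by
      calc G Q * (((Q:ℝ)/((Q:ℝ)+(M+1):ℝ)) ^ A)
          ≤ G Q * (((Q:ℝ)/((Q:ℝ)+M))^A * (x/(x+A))) :=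
            mul_le_mul_of_nonneg_left h6 (hpos Q).le
        _ = (G Q * ((Q:ℝ)/((Q:ℝ)+M))^A) * (x/(x+A)) := by ring
        _ ≤ G (Q+M) * (x/(x+A)) := mul_le_mul_of_nonneg_right ih (by positivity)
        _ = G (Q+M+1) := hdiv.symm
    have hcast : ((Q:ℝ)+((M+1:ℕ):ℝ)) = ((Q:ℝ)+(M+1):ℝ) := by push_cast; ring
    calc G Q * (((Q:ℝ)/((Q:ℝ)+((M+1:ℕ):ℝ))) ^ A)
        = G Q * (((Q:ℝ)/((Q:ℝ)+(M+1):ℝ)) ^ A) := by rw [hcast]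
      _ ≤ G (Q+M+1) := hfin

lemma seq_ratio_upper (G : ℕ → ℝ) (A : ℝ) (hA : 0 < A) (hpos : ∀ Q, 0 < G Q)
    (hrec : ∀ Q, G (Q+1) * (((Q:ℝ)+1) + A) = ((Q:ℝ)+1) * G Q) :
    ∀ Q M, G (Q+M) ≤ G Q * ((((Q:ℝ)+1)/((Q:ℝ)+M+1)) ^ A)
      * Real.exp (A^2 * M / ((Q:ℝ)+1)^2) := by
  intro Q M
  induction M with
  | zero =>
    simp [div_self (by positivity : ((Q:ℝ)+1) ≠ 0), Real.one_rpow]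
  | succ M ih =>
    have hM0 : (0:ℝ) ≤ (M:ℝ) := Nat.cast_nonneg M
    have hQ0 : (0:ℝ) ≤ (Q:ℝ) := Nat.cast_nonneg Q
    set x : ℝ := (Q:ℝ) + M + 1 with hx
    have hx1 : (1:ℝ) ≤ x := by rw [hx]; linarith
    have hx0 : (0:ℝ) < x := by linarith
    have hxA : (0:ℝ) < x + A := by linarith
    have hQ1 : (0:ℝ) < (Q:ℝ)+1 := by linarith
    have hxQ : (Q:ℝ)+1 ≤ x := by rw [hx]; linarith
    have hstep : G (Q+M+1) * (x + A) = x * G (Q+M) := by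
      have h := hrec (Q+M)
      push_cast at h
      linear_combination h + (G (Q+M+1) - G (Q+M)) * hx
    have hdiv : G (Q+M+1) = G (Q+M) * (x/(x+A)) := by
      field_simp
      linear_combination hstep
    have hkey : x/(x+A) ≤ ((x/(x+1)) ^ A) * Real.exp (A^2/((Q:ℝ)+1)^2) := by
      have h1 : (1:ℝ) + A/x = (x+A)/x := by
        rw [add_div, div_self (ne_of_gt hx0)]
      have hlg : -(1/x) ≤ Real.log (x/(x+1)) := by
        have h2 := log_ratio_ub hx1
        have heq : Real.log (x/(x+1)) = -Real.log ((x+1)/x) := by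
          rw [← Real.log_inv]; congr 1; rw [inv_div]
        linarith
      have hA2 : A^2/x^2 ≤ A^2/((Q:ℝ)+1)^2 := by
        gcongr
      calc x/(x+A) = (1 + A/x)⁻¹ := by rw [h1, inv_div]
        _ ≤ Real.exp ((A/x)^2 - A/x) := inv_one_add_le_exp (by positivity)
        _ ≤ Real.exp (Real.log (x/(x+1)) * A + A^2/((Q:ℝ)+1)^2) := by
            apply Real.exp_le_exp.mpr
            have e1 : (A/x)^2 = A^2/x^2 := by rw [div_pow]
            have e2 : -(1/x) * A ≤ Real.log (x/(x+1)) * A :=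
              mul_le_mul_of_nonneg_right hlg hA.le
            have e3 : -(1/x) * A = -(A/x) := by ring
            linarith
        _ = ((x/(x+1))^A) * Real.exp (A^2/((Q:ℝ)+1)^2) := by
            rw [Real.exp_add, Real.rpow_def_of_pos (by positivity)]
    have heq2 : ((Q:ℝ)+1)/(x+1) = (((Q:ℝ)+1)/x) * (x/(x+1)) := by
      rw [div_mul_div_comm, mul_comm ((Q:ℝ)+1) x, mul_div_mul_left _ _ (ne_of_gt hx0)]
    push_cast
    have e : ((Q:ℝ)+((M:ℝ)+1)+1 : ℝ) = x + 1 := by rw [hx]; ring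
    rw [e]
    show G (Q+M+1) ≤ _
    calc G (Q+M+1) = G (Q+M) * (x/(x+A)) := hdiv
      _ ≤ (G Q * ((((Q:ℝ)+1)/x) ^ A) * Real.exp (A^2 * M / ((Q:ℝ)+1)^2)) * (x/(x+A)) := by
          apply mul_le_mul_of_nonneg_right _ (by positivity)
          have := ih
          rw [hx]
          exact this
      _ ≤ (G Q * ((((Q:ℝ)+1)/x) ^ A) * Real.exp (A^2 * M / ((Q:ℝ)+1)^2))
            * (((x/(x+1)) ^ A) * Real.exp (A^2/((Q:ℝ)+1)^2)) := by
          apply mul_le_mul_of_nonneg_left hkey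
          have h5 := hpos Q
          positivity
      _ = G Q * (((((Q:ℝ)+1)/x) ^ A) * ((x/(x+1)) ^ A))
            * (Real.exp (A^2 * M / ((Q:ℝ)+1)^2) * Real.exp (A^2/((Q:ℝ)+1)^2)) := by
          ring
      _ = G Q * ((((Q:ℝ)+1)/(x+1)) ^ A) * Real.exp (A^2 * ((M:ℝ)+1) / ((Q:ℝ)+1)^2) := by
          rw [← Real.mul_rpow (by positivity) (by positivity), ← heq2, ← Real.exp_add]
          congr 1
          field_simp

lemma rpow_one_sub_le {u b : ℝ} (hu0 : 0 < u) (hu1 : u < 1) (hb0 : 0 ≤ b) (hb1 : b ≤ 1) :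
    (1-u) ^ b ≤ 1 - b*u := by
  have h1 : (0:ℝ) < 1 - u := by linarith
  have h2 : (0:ℝ) < 1 - b*u := by nlinarith
  have hcc := strictConcaveOn_log_Ioi.concaveOn
  have h3 := hcc.2 (Set.mem_Ioi.mpr one_pos) (Set.mem_Ioi.mpr h1)
    (by linarith : (0:ℝ) ≤ 1 - b) hb0 (by ring)
  simp only [smul_eq_mul, Real.log_one, mul_one, mul_zero] at h3
  have h4 : 1 - b + b * (1-u) = 1 - b*u := by ring
  rw [h4] at h3
  have h5 : (1-u) ^ b = Real.exp (Real.log (1-u) * b) := Real.rpow_def_of_pos h1 b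
  rw [h5, ← Real.exp_log h2]
  apply Real.exp_le_exp.mpr
  have : b * Real.log (1-u) = Real.log (1-u) * b := by ring
  linarith [h3]

lemma exp_le_one_add_two {x : ℝ} (h0 : 0 ≤ x) (h1 : x ≤ 1/2) : Real.exp x ≤ 1+2*x := by
  have h2 := Real.add_one_le_exp (-x)
  have h3 : (0:ℝ) < 1 - x := by linarith
  have hprod : Real.exp x * Real.exp (-x) = 1 := by
    rw [← Real.exp_add, add_neg_cancel, Real.exp_zero]
  nlinarith [mul_le_mul_of_nonneg_left h2 (Real.exp_pos x).le, Real.exp_pos x]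

lemma exp_neg_le_pow_mul {u C : ℝ} {M₁ : ℕ} (hu0 : 0 ≤ u) (hu2 : u ≤ 1/2)
    (hM : (M₁:ℝ) ≤ C) :
    Real.exp (-(C*u)) ≤ (1-u)^M₁ * Real.exp (2*C*u^2) := by
  have h1 : (0:ℝ) < 1 - u := by linarith
  have hlog : -(u+2*u^2) ≤ Real.log (1-u) := by
    rw [Real.le_log_iff_exp_le h1]
    have hE := Real.add_one_le_exp (u+2*u^2)
    have hprod : Real.exp (-(u+2*u^2)) * Real.exp (u+2*u^2) = 1 := by
      rw [← Real.exp_add, neg_add_cancel, Real.exp_zero]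
    nlinarith [mul_le_mul_of_nonneg_left hE (Real.exp_pos (-(u+2*u^2))).le,
      Real.exp_pos (-(u+2*u^2)), sq_nonneg u, mul_nonneg (mul_nonneg hu0 hu0) hu0]
  have h2 : (1-u)^M₁ = Real.exp ((M₁:ℝ) * Real.log (1-u)) := by
    rw [Real.exp_nat_mul, Real.exp_log h1]
  rw [h2, ← Real.exp_add]
  apply Real.exp_le_exp.mpr
  have h3 := mul_le_mul_of_nonneg_left hlog (Nat.cast_nonneg M₁ : (0:ℝ) ≤ (M₁:ℝ))
  have hM0 : (0:ℝ) ≤ (M₁:ℝ) := Nat.cast_nonneg M₁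
  nlinarith [mul_le_mul_of_nonneg_right hM hu0, mul_le_mul_of_nonneg_right hM (sq_nonneg u)]

lemma plh_int {δ b : ℝ} (hδ : 0 < δ) (hb0 : 0 < b) (hb1 : b < 1) {k : ℕ} (hk : 1 ≤ k)
    (q m : ℕ) :
    IntegrableOn (fun y : ℝ =>
      (1 - y ^ (-(1+δ)))^q * (y ^ (-(1+δ)))^k * (1 - b * y ^ (-(1+δ)))^m)
      (Set.Ioi 1) := by
  have hcont : ContinuousOn (fun y : ℝ =>
      (1 - y ^ (-(1+δ)))^q * (y ^ (-(1+δ)))^k * (1 - b * y ^ (-(1+δ)))^m) (Set.Ioi 1) := by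
    have h : ContinuousOn (fun y : ℝ => y ^ (-(1+δ))) (Set.Ioi 1) :=
      ContinuousOn.rpow_const continuousOn_id (fun y hy => Or.inl (by
        have : (1:ℝ) < y := hy
        positivity))
    exact (plg_contOn q k).mul ((continuousOn_const.sub (h.const_smul b)).pow m)
  refine Integrable.mono (plg_int hδ hk q) (hcont.aestronglyMeasurable measurableSet_Ioi) ?_
  filter_upwards [ae_restrict_mem measurableSet_Ioi] with y hy
  have hy1 : (1:ℝ) < y := hy
  obtain ⟨hu0, hu1⟩ := plg_mem hδ hy1
  have h1 : (0:ℝ) ≤ 1 - y ^ (-(1+δ)) := by linarith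
  have h2 : (0:ℝ) ≤ 1 - b * y ^ (-(1+δ)) := by nlinarith
  have h3 : (1 - b * y ^ (-(1+δ)))^m ≤ 1 := pow_le_one₀ h2 (by nlinarith)
  rw [Real.norm_eq_abs, Real.norm_eq_abs, abs_of_nonneg (by positivity),
    abs_of_nonneg (by positivity)]
  nlinarith [mul_nonneg (pow_nonneg h1 q) (pow_nonneg hu0.le k),
    pow_nonneg h2 m]

lemma plH_ge {δ b cn : ℝ} (hδ : 0 < δ) (hb0 : 0 < b) (hb1 : b < 1) {k : ℕ} (hk : 1 ≤ k)
    {q m M₂ : ℕ} (hbm : b*(m:ℝ) = cn) (hM₂ : cn ≤ (M₂:ℝ)) :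
    plG δ k (q+M₂) ≤ plH δ b k q m := by
  rw [plG, plH]
  apply setIntegral_mono_on (plg_int hδ hk (q+M₂)) (plh_int hδ hb0 hb1 hk q m)
    measurableSet_Ioi
  intro y hy
  have hy1 : (1:ℝ) < y := hy
  obtain ⟨hu0, hu1⟩ := plg_mem hδ hy1
  set u : ℝ := y ^ (-(1+δ)) with hu
  have h1 : (0:ℝ) ≤ 1 - u := by linarith
  have hkey : (1-u)^M₂ ≤ (1 - b*u)^m := by
    calc (1-u)^M₂ = (1-u) ^ ((M₂:ℕ):ℝ) := (Real.rpow_natCast _ _).symm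
      _ ≤ (1-u) ^ (cn:ℝ) := Real.rpow_le_rpow_of_exponent_ge (by linarith) (by linarith) hM₂
      _ = ((1-u) ^ (b:ℝ)) ^ m := by
          rw [← hbm, Real.rpow_mul (by linarith), Real.rpow_natCast]
      _ ≤ (1 - b*u)^m := by
          apply pow_le_pow_left₀ (by positivity) (rpow_one_sub_le hu0 hu1 hb0.le hb1.le)
  calc (1-u)^(q+M₂) * u^k = ((1-u)^q * u^k) * (1-u)^M₂ := by rw [pow_add]; ring
    _ ≤ ((1-u)^q * u^k) * (1-b*u)^m := by
        apply mul_le_mul_of_nonneg_left hkey (by positivity)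
    _ = (1-u)^q * u^k * (1-b*u)^m := by ring

lemma plH_le {δ b cn u₀ : ℝ} (hδ : 0 < δ) (hb0 : 0 < b) (hb1 : b < 1) {k : ℕ} (hk : 1 ≤ k)
    {q m M₁ Q' : ℕ} (hbm : b*(m:ℝ) = cn) (hM₁ : (M₁:ℝ) ≤ cn) (hcn0 : 0 ≤ cn)
    (hu₀0 : 0 < u₀) (hu₀2 : u₀ ≤ 1/2) (hQ'q : Q' ≤ q) :
    plH δ b k q m ≤ Real.exp (2*cn*u₀^2) * plG δ k (q+M₁)
      + (1-u₀)^(q-Q') * plG δ k Q' := by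
  rw [plH, plG, plG, ← integral_const_mul, ← integral_const_mul, ← integral_add
    ((plg_int hδ hk (q+M₁)).const_mul _) ((plg_int hδ hk Q').const_mul _)]
  apply setIntegral_mono_on (plh_int hδ hb0 hb1 hk q m) _ measurableSet_Ioi
  swap
  · exact ((plg_int hδ hk (q+M₁)).const_mul _).add ((plg_int hδ hk Q').const_mul _)
  intro y hy
  have hy1 : (1:ℝ) < y := hy
  obtain ⟨hu0, hu1⟩ := plg_mem hδ hy1
  set u : ℝ := y ^ (-(1+δ)) with hu
  have h1 : (0:ℝ) ≤ 1 - u := by linarith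
  have h2 : (0:ℝ) ≤ 1 - b*u := by nlinarith
  have hE₁ : (0:ℝ) < Real.exp (2*cn*u₀^2) := Real.exp_pos _
  rcases le_or_gt u u₀ with hcase | hcase
  · -- small u: main term dominates
    have hbu : (1-b*u)^m ≤ Real.exp (-(cn*u)) := by
      have ha : 1-b*u ≤ Real.exp (-(b*u)) := by
        have := Real.add_one_le_exp (-(b*u)); linarith
      calc (1-b*u)^m ≤ (Real.exp (-(b*u)))^m := pow_le_pow_left₀ h2 ha m
        _ = Real.exp ((m:ℝ) * -(b*u)) := (Real.exp_nat_mul _ m).symm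
        _ = Real.exp (-(cn*u)) := by rw [← hbm]; ring_nf
    have hexp : Real.exp (-(cn*u)) ≤ (1-u)^M₁ * Real.exp (2*cn*u₀^2) := by
      calc Real.exp (-(cn*u)) ≤ (1-u)^M₁ * Real.exp (2*cn*u^2) :=
            exp_neg_le_pow_mul hu0.le (by linarith) hM₁
        _ ≤ (1-u)^M₁ * Real.exp (2*cn*u₀^2) := by
            apply mul_le_mul_of_nonneg_left _ (pow_nonneg h1 M₁)
            apply Real.exp_le_exp.mpr
            have hsq : u^2 ≤ u₀^2 := by nlinarith
            nlinarith
    have hmain : (1-u)^q * u^k * (1-b*u)^m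
        ≤ Real.exp (2*cn*u₀^2) * ((1-u)^(q+M₁) * u^k) := by
      calc (1-u)^q * u^k * (1-b*u)^m ≤ (1-u)^q * u^k * ((1-u)^M₁ * Real.exp (2*cn*u₀^2)) := by
            apply mul_le_mul_of_nonneg_left (hbu.trans hexp) (by positivity)
        _ = Real.exp (2*cn*u₀^2) * ((1-u)^(q+M₁) * u^k) := by rw [pow_add]; ring
    have h30 : (0:ℝ) ≤ 1-u₀ := by linarith
    have hpos2 : 0 ≤ (1-u₀)^(q-Q') * ((1-u)^Q' * u^k) :=
      mul_nonneg (pow_nonneg h30 _) (by positivity)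
    linarith
  · -- large u: tail term dominates
    have hbu1 : (1-b*u)^m ≤ 1 := pow_le_one₀ h2 (by nlinarith)
    have hsplit : (1-u)^q ≤ (1-u₀)^(q-Q') * (1-u)^Q' := by
      have hq : q = (q - Q') + Q' := by omega
      calc (1-u)^q = (1-u)^(q-Q') * (1-u)^Q' := by rw [← pow_add, ← hq]
        _ ≤ (1-u₀)^(q-Q') * (1-u)^Q' := by
            apply mul_le_mul_of_nonneg_right (pow_le_pow_left₀ h1 (by linarith) _)
              (pow_nonneg h1 Q')
    have htail : (1-u)^q * u^k * (1-b*u)^m ≤ (1-u₀)^(q-Q') * ((1-u)^Q' * u^k) := by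
      calc (1-u)^q * u^k * (1-b*u)^m ≤ (1-u)^q * u^k * 1 := by
            apply mul_le_mul_of_nonneg_left hbu1 (by positivity)
        _ = (1-u)^q * u^k := by ring
        _ ≤ ((1-u₀)^(q-Q') * (1-u)^Q') * u^k := by
            apply mul_le_mul_of_nonneg_right hsplit (by positivity)
        _ = (1-u₀)^(q-Q') * ((1-u)^Q' * u^k) := by ring
    have hpos1 : 0 ≤ Real.exp (2*cn*u₀^2) * ((1-u)^(q+M₁) * u^k) := by positivity
    linarith

lemma den_eq (δ : ℝ) (n k : ℕ) (hk : 1 ≤ k) (hkn : k ≤ n) :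
    ∫ y in Set.Ioi (1:ℝ), y * plPdf δ (n-k+1) n y
      = ((1+δ) * k * (n.choose (n-k))) * plG δ k (n-k) := by
  rw [plG, ← integral_const_mul]
  apply setIntegral_congr_fun measurableSet_Ioi
  intro y hy
  have hy1 : (1:ℝ) < y := hy
  have hy0 : (0:ℝ) < y := by linarith
  simp only [plPdf, if_pos hy1.le]
  have e1 : n - k + 1 - 1 = n - k := by omega
  have e2 : n - (n - k + 1) + 1 = k := by omega
  have e3 : ((n:ℝ) - ((n-k+1:ℕ):ℝ) + 1) = (k:ℝ) := by
    rw [Nat.cast_add, Nat.cast_sub hkn, Nat.cast_one]; ring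
  rw [e1, e2, e3]
  field_simp

lemma num_eq (δ β b : ℝ) (hβ : 1 < β) (hb : b = β^(-(1+δ))) (n k m : ℕ)
    (hk : 1 ≤ k) (hkn : k ≤ n) :
    ∫ y in Set.Ioi (1:ℝ), y * plPdf δ (n-k+1) n y * plCdf δ m m (β*y)
      = ((1+δ) * k * (n.choose (n-k))) * plH δ b k (n-k) m := by
  rw [plH, ← integral_const_mul]
  apply setIntegral_congr_fun measurableSet_Ioi
  intro y hy
  have hy1 : (1:ℝ) < y := hy
  have hy0 : (0:ℝ) < y := by linarith
  have hβ0 : (0:ℝ) < β := by linarith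
  have hcdf : plCdf δ m m (β*y) = (1 - b * y ^ (-(1+δ)))^m := by
    have hby : (1:ℝ) ≤ β * y := by nlinarith
    simp only [plCdf, if_pos hby]
    rw [Finset.Icc_self, Finset.sum_singleton]
    have : ((β*y) ^ (-(1+δ))) = b * y ^ (-(1+δ)) := by
      rw [hb, Real.mul_rpow hβ0.le hy0.le]
    rw [this]
    simp
  show y * plPdf δ (n-k+1) n y * plCdf δ m m (β*y)
    = ((1+δ) * k * (n.choose (n-k))) *
      ((1 - y ^ (-(1+δ)))^(n-k) * (y ^ (-(1+δ)))^k * (1 - b * y ^ (-(1+δ)))^m)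
  rw [hcdf]
  simp only [plPdf, if_pos hy1.le]
  have e1 : n - k + 1 - 1 = n - k := by omega
  have e2 : n - (n - k + 1) + 1 = k := by omega
  have e3 : ((n:ℝ) - ((n-k+1:ℕ):ℝ) + 1) = (k:ℝ) := by
    rw [Nat.cast_add, Nat.cast_sub hkn, Nat.cast_one]; ring
  rw [e1, e2, e3]
  field_simp

end PLaux

section PLmain
open Set

set_option maxHeartbeats 4000000 in
/-- `E[Y_{(n-k+1:n)}·1{X_{(αn:αn)} < β Y_{(n-k+1:n)}}]` is within a
multiplicative factor `1 ± O((ln n)²/n)` of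
`(1 + αβ^{-(1+δ)})^{−(k − 1/(1+δ))}·E[Y_{(n-k+1:n)}]`. -/
theorem expected_Y_conditional_approx
    (δ α β : ℝ) (hδ : 0 < δ) (hα0 : 0 < α) (hα1 : α ≤ 1) (hβ : 1 < β)
    (c : ℝ) (hc : c = α * β ^ (-(1 + δ))) :
    ∃ a : ℝ, 0 < a ∧ ∃ n₀ : ℕ, ∀ n : ℕ, n₀ ≤ n → ∀ m : ℕ, 0 < m → (m : ℝ) = α * n →
      ∀ k : ℕ, 1 ≤ k → (k : ℝ) ≤ (1 - c) * Real.log n →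
        (∫ y in Set.Ioi (1 : ℝ), y * plPdf δ (n - k + 1) n y * plCdf δ m m (β * y)) /
            ((1 + α * β ^ (-(1 + δ))) ^ (-((k : ℝ) - 1 / (1 + δ))) *
              ∫ y in Set.Ioi (1 : ℝ), y * plPdf δ (n - k + 1) n y)
          ≤ 1 + a * (Real.log n) ^ 2 / n ∧
        ((1 + α * β ^ (-(1 + δ))) ^ (-((k : ℝ) - 1 / (1 + δ))) *
            ∫ y in Set.Ioi (1 : ℝ), y * plPdf δ (n - k + 1) n y) /
            (∫ y in Set.Ioi (1 : ℝ), y * plPdf δ (n - k + 1) n y * plCdf δ m m (β * y))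
          ≤ 1 + a * (Real.log n) ^ 2 / n := by
  refine ⟨4000, by norm_num, 10^12, ?_⟩
  intro n hn m hm hmα k hk1 hkc
  -- basic quantities
  have hnR : (1000000000000:ℝ) ≤ (n:ℝ) := by
    have h := hn
    norm_num at h
    exact_mod_cast h
  have hn0 : (0:ℝ) < n := by linarith only [hnR]
  set L : ℝ := Real.log n with hL
  set r : ℝ := (n:ℝ) ^ ((1:ℝ)/4) with hr
  have hr0 : 0 < r := Real.rpow_pos_of_pos hn0 _
  have hr4 : r^4 = (n:ℝ) := by
    rw [hr, ← Real.rpow_natCast ((n:ℝ) ^ ((1:ℝ)/4)) 4, ← Real.rpow_mul hn0.le]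
    norm_num
  have hr1000 : (1000:ℝ) ≤ r := by
    by_contra hcon
    push_neg at hcon
    have h1 : r^4 < 1000^4 := by
      apply pow_lt_pow_left₀ hcon hr0.le (by norm_num)
    rw [hr4] at h1
    have h2 : (1000:ℝ)^4 = 1000000000000 := by norm_num
    rw [h2] at h1
    linarith only [h1, hnR]
  have hL4r : L ≤ 4*r := by
    have h1 : Real.log r = (1/4) * L := by rw [hr, Real.log_rpow hn0]
    have h2 : Real.log r ≤ r - 1 := Real.log_le_sub_one_of_pos hr0
    linarith only [h1, h2, hr0]
  -- b, c facts
  set b : ℝ := β ^ (-(1+δ)) with hbdef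
  have hβ0 : (0:ℝ) < β := by linarith only [hβ]
  have hb0 : 0 < b := Real.rpow_pos_of_pos hβ0 _
  have hb1 : b < 1 := Real.rpow_lt_one_of_one_lt_of_neg hβ (by linarith only [hδ])
  have hc0 : 0 < c := by rw [hc]; positivity
  have hc1 : c < 1 := by
    calc c = α * b := hc
      _ ≤ 1 * b := mul_le_mul_of_nonneg_right hα1 hb0.le
      _ = b := one_mul b
      _ < 1 := hb1
  have hL0 : 0 ≤ L := Real.log_nonneg (by linarith only [hnR])
  have hk1R : (1:ℝ) ≤ (k:ℝ) := by exact_mod_cast hk1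
  have hkL : (k:ℝ) ≤ L := by
    have h1 : 0 ≤ c * L := mul_nonneg hc0.le hL0
    have h2 : (1-c)*L = L - c*L := by ring
    rw [h2] at hkc
    linarith only [hkc, h1]
  have hL1 : 1 ≤ L := le_trans hk1R hkL
  have hr3 : (10:ℝ)^9 ≤ r^3 := by
    have h1 := pow_le_pow_left₀ (by norm_num : (0:ℝ) ≤ 1000) hr1000 3
    norm_num at h1 ⊢
    linarith only [h1]
  have h168 : 168*r ≤ (n:ℝ) := by
    have h1 := mul_le_mul_of_nonneg_right hr3 hr0.le
    have e : r^3*r = r^4 := by ring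
    rw [e, hr4] at h1
    linarith only [h1, hr0]
  have h4r : 4*r ≤ (n:ℝ)/2 := by linarith only [h168, hr0]
  have hkn2 : (k:ℝ) ≤ (n:ℝ)/2 := by linarith only [hkL, hL4r, h4r]
  have hkn : k ≤ n := by
    have h1 : (k:ℝ) ≤ (n:ℝ) := by linarith only [hkn2, hn0]
    exact_mod_cast h1
  set q : ℕ := n - k with hqdef
  have hq : (q:ℝ) = (n:ℝ) - (k:ℝ) := by rw [hqdef, Nat.cast_sub hkn]
  have hqhalf : (n:ℝ)/2 ≤ (q:ℝ) := by rw [hq]; linarith only [hkn2]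
  have hq0R : (0:ℝ) < q := by linarith only [hqhalf, hn0]
  have hq1 : 1 ≤ q := by
    have h1 : (1:ℝ) ≤ (q:ℝ) := by linarith only [hqhalf, hnR]
    exact_mod_cast h1
  have hq2 : 2 ≤ q := by
    have h1 : (2:ℝ) ≤ (q:ℝ) := by linarith only [hqhalf, hnR]
    exact_mod_cast h1
  -- cn, floors and ceils
  have hcn0 : (0:ℝ) ≤ c*n := by positivity
  have hcnn : c*(n:ℝ) ≤ (n:ℝ) := by
    have := mul_le_mul_of_nonneg_right hc1.le hn0.le
    linarith only [this]
  have hbm : b*(m:ℝ) = c*(n:ℝ) := by rw [hmα, hc]; ring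
  set M₁ : ℕ := ⌊c*(n:ℝ)⌋₊ with hM₁def
  set M₂ : ℕ := ⌈c*(n:ℝ)⌉₊ with hM₂def
  set Q' : ℕ := q/2 with hQ'def
  set u₀ : ℝ := 21*L/(n:ℝ) with hu₀def
  have hM₁le : (M₁:ℝ) ≤ c*n := Nat.floor_le hcn0
  have hM₁gt : c*n - 1 < (M₁:ℝ) := by
    have := Nat.lt_floor_add_one (c*(n:ℝ)); linarith only [this]
  have hM₂ge : c*n ≤ (M₂:ℝ) := Nat.le_ceil _
  have hM₂lt : (M₂:ℝ) < c*n + 1 := by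
    have := Nat.ceil_lt_add_one hcn0; linarith only [this]
  have hu₀0 : 0 < u₀ := by
    rw [hu₀def]
    have : 0 < 21*L := by linarith only [hL1]
    positivity
  have h42 : 42*L ≤ (n:ℝ) := by linarith only [hL4r, h168, hr0]
  have hu₀2 : u₀ ≤ 1/2 := by
    rw [hu₀def, div_le_iff₀ hn0]
    linarith only [h42]
  have hQ'1 : 1 ≤ Q' := by rw [hQ'def]; omega
  have hQ'q : Q' ≤ q := Nat.div_le_self _ _
  have hQ'0R : (0:ℝ) < (Q':ℝ) := by exact_mod_cast hQ'1
  have hq3Q' : (q:ℝ) ≤ 3*(Q':ℝ) := by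
    have h : q ≤ 3*Q' := by rw [hQ'def]; omega
    exact_mod_cast h
  have hqQ'4 : (n:ℝ)/4 ≤ ((q-Q':ℕ):ℝ) := by
    have h : q ≤ 2*(q - Q') := by rw [hQ'def]; omega
    have h2 : (q:ℝ) ≤ 2*((q-Q':ℕ):ℝ) := by exact_mod_cast h
    linarith only [h2, hqhalf]
  -- A and the sequence
  have hs1 : 1/(1+δ) < 1 := by
    rw [div_lt_one (by linarith only [hδ])]; linarith only [hδ]
  have hs0 : 0 < 1/(1+δ) := by positivity
  set A : ℝ := (k:ℝ) - 1/(1+δ) with hA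
  have hA0 : 0 < A := by rw [hA]; linarith only [hk1R, hs1]
  have hAk : A ≤ (k:ℝ) := by rw [hA]; linarith only [hs0]
  have hAL : A ≤ L := le_trans hAk hkL
  set GG : ℕ → ℝ := plG δ k with hGG
  have hGpos : ∀ Q, 0 < GG Q := fun Q => plG_pos hδ hk1 Q
  have hrec : ∀ Q, GG (Q+1) * (((Q:ℝ)+1) + A) = ((Q:ℝ)+1) * GG Q := by
    intro Q; rw [hA]; exact plG_succ hδ hk1 Q
  -- t
  set t : ℝ := L^2/(n:ℝ) with ht
  have ht0 : 0 < t := by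
    rw [ht]
    have : (0:ℝ) < L^2 := by positivity
    positivity
  have hts : 62500 * L^2 ≤ (n:ℝ) := by
    have hr2 : (1000000:ℝ) ≤ r^2 := by
      have h := mul_le_mul hr1000 hr1000 (by norm_num) (le_trans (by norm_num) hr1000)
      calc (1000000:ℝ) = 1000*1000 := by norm_num
        _ ≤ r*r := h
        _ = r^2 := (sq r).symm
    have hL2 : L^2 ≤ 16*r^2 := by
      calc L^2 = L*L := sq L
        _ ≤ (4*r)*(4*r) := mul_le_mul hL4r hL4r hL0 (by positivity)
        _ = 16*r^2 := by ring
    have h2 := mul_le_mul_of_nonneg_right hr2 (sq_nonneg r)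
    have e : r^2*r^2 = r^4 := by ring
    rw [e, hr4] at h2
    linarith only [h2, hL2, sq_nonneg r, hr2]
  have htsmall : t ≤ 1/62500 := by
    rw [ht, div_le_div_iff₀ hn0 (by norm_num)]
    linarith only [hts]
  -- kappa
  set κ : ℝ := 1 + c with hκ
  have hκ1 : 1 < κ := by rw [hκ]; linarith only [hc0]
  have hκ0 : 0 < κ := by linarith only [hκ1]
  have hκ2 : κ ≤ 2 := by rw [hκ]; linarith only [hc1]
  have hκA0 : 0 < κ ^ A := Real.rpow_pos_of_pos hκ0 _
  -- H bounds
  set H : ℝ := plH δ b k q m with hH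
  have hH_ge : GG (q+M₂) ≤ H := plH_ge hδ hb0 hb1 hk1 hbm hM₂ge
  have hH0 : 0 < H := lt_of_lt_of_le (hGpos _) hH_ge
  have hH_le : H ≤ Real.exp (2*(c*n)*u₀^2) * GG (q+M₁) + (1-u₀)^(q-Q') * GG Q' :=
    plH_le hδ hb0 hb1 hk1 hbm hM₁le hcn0 hu₀0 hu₀2 hQ'q
  -- ***** ineq2 : GG q ≤ (1+4000t) * (κ^A * H)
  have hlow := seq_ratio_lower GG A hA0 hGpos hrec q hq1 M₂
  have hM₂0 : (0:ℝ) ≤ (M₂:ℝ) := Nat.cast_nonneg _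
  have hqM₂0 : (0:ℝ) < (q:ℝ)+(M₂:ℝ) := by linarith only [hq0R, hM₂0]
  have hk0R : (0:ℝ) ≤ (k:ℝ) := by linarith only [hk1R]
  have hck : c*(k:ℝ) ≤ (k:ℝ) := by
    have h := mul_le_mul_of_nonneg_right hc1.le hk0R
    linarith only [h]
  have hck' : c ≤ c*(k:ℝ) := by
    have := mul_le_mul_of_nonneg_left hk1R hc0.le
    linarith only [this]
  have hκq : κ*(q:ℝ) = (q:ℝ) + c*n - c*k := by rw [hκ, hq]; ring
  have hwA : (((q:ℝ)+M₂)/(κ*q)) ^ A ≤ 1 + 8*t := by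
    have hκq0 : (0:ℝ) < κ*q := by positivity
    have hwpos : (0:ℝ) < ((q:ℝ)+M₂)/(κ*q) := by positivity
    have hnum : (q:ℝ)+M₂ - κ*q ≤ 2*(k:ℝ) := by
      rw [hκq]
      linarith only [hM₂lt, hck, hk1R]
    have hw2 : ((q:ℝ)+M₂)/(κ*q) - 1 ≤ 2*(k:ℝ)/(q:ℝ) := by
      have e1 : ((q:ℝ)+M₂)/(κ*q) - 1 = ((q:ℝ)+M₂ - κ*q)/(κ*q) := by
        field_simp
      rw [e1]
      exact div_le_div₀ (by positivity) hnum hq0R (le_mul_of_one_le_left hq0R.le hκ1.le)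
    have hlog : Real.log (((q:ℝ)+M₂)/(κ*q)) ≤ 2*(k:ℝ)/(q:ℝ) :=
      le_trans (Real.log_le_sub_one_of_pos hwpos) (by linarith only [hw2])
    have hcross : (2*(k:ℝ)/(q:ℝ))*A ≤ 4*t := by
      have e4 : 4*t = (4*L^2)/(n:ℝ) := by rw [ht]; ring
      rw [e4, div_mul_eq_mul_div, div_le_div_iff₀ hq0R hn0]
      have p1 : (k:ℝ)*A ≤ L*L := mul_le_mul hkL hAL hA0.le hL0
      have p2 : ((k:ℝ)*A)*(n:ℝ) ≤ (L*L)*(n:ℝ) := mul_le_mul_of_nonneg_right p1 hn0.le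
      have p3 : (L*L)*(n:ℝ) ≤ (L*L)*(2*(q:ℝ)) := by
        apply mul_le_mul_of_nonneg_left (by linarith only [hqhalf]) (by positivity)
      nlinarith only [p2, p3]
    have h1 : (((q:ℝ)+M₂)/(κ*q)) ^ A = Real.exp (Real.log (((q:ℝ)+M₂)/(κ*q)) * A) :=
      Real.rpow_def_of_pos hwpos _
    have h3 : Real.log (((q:ℝ)+M₂)/(κ*q)) * A ≤ 4*t := by
      have h4 := mul_le_mul_of_nonneg_right hlog hA0.le
      linarith only [h4, hcross]
    rw [h1]
    calc Real.exp (Real.log (((q:ℝ)+M₂)/(κ*q)) * A) ≤ Real.exp (4*t) :=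
          Real.exp_le_exp.mpr h3
      _ ≤ 1 + 2*(4*t) := exp_le_one_add_two (by positivity) (by linarith only [htsmall])
      _ = 1 + 8*t := by ring
  have hineq2 : GG q ≤ (1+4000*t) * (κ ^ A * H) := by
    have hρ : GG q * (((q:ℝ)/((q:ℝ)+M₂)) ^ A) ≤ GG (q+M₂) := hlow
    have hcombo : κ ^ A * (((q:ℝ)/((q:ℝ)+M₂)) ^ A) = ((κ*q)/((q:ℝ)+M₂)) ^ A := by
      rw [← Real.mul_rpow hκ0.le (by positivity), mul_div_assoc]
    have hbig : (1:ℝ) ≤ (1+4000*t) * (((κ*q)/((q:ℝ)+M₂)) ^ A) := by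
      have hinv : ((κ*q)/((q:ℝ)+M₂)) ^ A = ((((q:ℝ)+M₂)/(κ*q)) ^ A)⁻¹ := by
        rw [← Real.inv_rpow (by positivity), inv_div]
      rw [hinv]
      have hx0 : (0:ℝ) < (((q:ℝ)+M₂)/(κ*q)) ^ A := by positivity
      have hle : (((q:ℝ)+M₂)/(κ*q)) ^ A ≤ 1+4000*t :=
        le_trans hwA (by linarith only [ht0])
      calc (1:ℝ) = ((((q:ℝ)+M₂)/(κ*q)) ^ A) * ((((q:ℝ)+M₂)/(κ*q)) ^ A)⁻¹ :=
            (mul_inv_cancel₀ (ne_of_gt hx0)).symm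
        _ ≤ (1+4000*t) * ((((q:ℝ)+M₂)/(κ*q)) ^ A)⁻¹ :=
            mul_le_mul_of_nonneg_right hle (by positivity)
    calc GG q = GG q * 1 := (mul_one _).symm
      _ ≤ GG q * ((1+4000*t) * (((κ*q)/((q:ℝ)+M₂)) ^ A)) :=
          mul_le_mul_of_nonneg_left hbig (hGpos q).le
      _ = (1+4000*t) * ((κ^A * (((q:ℝ)/((q:ℝ)+M₂)) ^ A)) * GG q) := by
          rw [hcombo]; ring
      _ = (1+4000*t) * (κ^A * (GG q * (((q:ℝ)/((q:ℝ)+M₂)) ^ A))) := by ring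
      _ ≤ (1+4000*t) * (κ^A * GG (q+M₂)) := by
          apply mul_le_mul_of_nonneg_left _ (by positivity)
          exact mul_le_mul_of_nonneg_left hρ hκA0.le
      _ ≤ (1+4000*t) * (κ^A * H) := by
          apply mul_le_mul_of_nonneg_left (mul_le_mul_of_nonneg_left hH_ge hκA0.le)
            (by positivity)
  -- ***** ineq1 : κ^A * H ≤ (1+4000t) * GG q
  have hup := seq_ratio_upper GG A hA0 hGpos hrec q M₁
  have hM₁0 : (0:ℝ) ≤ (M₁:ℝ) := Nat.cast_nonneg _
  have hqM₁1 : (0:ℝ) < (q:ℝ)+M₁+1 := by linarith only [hq0R, hM₁0]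
  -- Part I : κ^A * (E₁ * GG (q+M₁)) ≤ exp (888 t) * GG q
  have hratA : ((κ*((q:ℝ)+1))/((q:ℝ)+M₁+1)) ^ A ≤ Real.exp (2*t) := by
    have hwpos : (0:ℝ) < (κ*((q:ℝ)+1))/((q:ℝ)+M₁+1) := by positivity
    have hnum : κ*((q:ℝ)+1) - ((q:ℝ)+M₁+1) ≤ 1 := by
      have e1 : κ*((q:ℝ)+1) = (q:ℝ)+1 + c*n - c*k + c := by rw [hκ, hq]; ring
      rw [e1]
      linarith only [hM₁gt, hck']
    have hw2 : (κ*((q:ℝ)+1))/((q:ℝ)+M₁+1) - 1 ≤ 1/(q:ℝ) := by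
      have e1 : (κ*((q:ℝ)+1))/((q:ℝ)+M₁+1) - 1
          = (κ*((q:ℝ)+1) - ((q:ℝ)+M₁+1))/((q:ℝ)+M₁+1) := by field_simp
      rw [e1]
      exact div_le_div₀ (by norm_num) hnum hq0R (by linarith only [hM₁0])
    have hlog : Real.log ((κ*((q:ℝ)+1))/((q:ℝ)+M₁+1)) ≤ 1/(q:ℝ) :=
      le_trans (Real.log_le_sub_one_of_pos hwpos) (by linarith only [hw2])
    have hcross : (1/(q:ℝ))*A ≤ 2*t := by
      have e4 : 2*t = (2*L^2)/(n:ℝ) := by rw [ht]; ring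
      rw [e4, div_mul_eq_mul_div, div_le_div_iff₀ hq0R hn0]
      have hLL : L ≤ L^2 := by nlinarith only [hL1]
      have p2 : A*(n:ℝ) ≤ L*(n:ℝ) := mul_le_mul_of_nonneg_right hAL hn0.le
      have p3 : L*(n:ℝ) ≤ L*(2*(q:ℝ)) :=
        mul_le_mul_of_nonneg_left (by linarith only [hqhalf]) hL0
      have p4 : L*(2*(q:ℝ)) ≤ L^2*(2*(q:ℝ)) :=
        mul_le_mul_of_nonneg_right hLL (by linarith only [hq0R])
      nlinarith only [p2, p3, p4]
    have h1 : ((κ*((q:ℝ)+1))/((q:ℝ)+M₁+1)) ^ A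
        = Real.exp (Real.log ((κ*((q:ℝ)+1))/((q:ℝ)+M₁+1)) * A) :=
      Real.rpow_def_of_pos hwpos _
    rw [h1]
    apply Real.exp_le_exp.mpr
    have h4 := mul_le_mul_of_nonneg_right hlog hA0.le
    calc Real.log ((κ*((q:ℝ)+1))/((q:ℝ)+M₁+1)) * A ≤ (1/(q:ℝ))*A := h4
      _ ≤ 2*t := hcross
  have hX : A^2 * M₁ / ((q:ℝ)+1)^2 ≤ 4*t := by
    have hAL2 : A^2 ≤ L^2 := pow_le_pow_left₀ hA0.le hAL 2
    have hM₁n : (M₁:ℝ) ≤ (n:ℝ) := le_trans hM₁le hcnn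
    have hq12 : (n:ℝ)/2 ≤ (q:ℝ)+1 := by linarith only [hqhalf]
    have hsq : ((n:ℝ)/2)^2 ≤ ((q:ℝ)+1)^2 := pow_le_pow_left₀ (by positivity) hq12 2
    have e4 : 4*t = (4*L^2)/(n:ℝ) := by rw [ht]; ring
    rw [e4, div_le_div_iff₀ (by positivity) hn0]
    have s1 : A^2*(M₁:ℝ) ≤ L^2*(n:ℝ) :=
      mul_le_mul hAL2 hM₁n (Nat.cast_nonneg _) (sq_nonneg L)
    have s2 : A^2*(M₁:ℝ)*(n:ℝ) ≤ L^2*(n:ℝ)*(n:ℝ) := mul_le_mul_of_nonneg_right s1 hn0.le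
    have s4 : L^2*((n:ℝ)*(n:ℝ)) ≤ L^2*(4*(((q:ℝ)+1)^2)) := by
      apply mul_le_mul_of_nonneg_left _ (sq_nonneg L)
      nlinarith only [hsq]
    nlinarith only [s2, s4]
  have hE₁b : 2*(c*(n:ℝ))*u₀^2 ≤ 882*t := by
    have e1 : 2*(c*(n:ℝ))*u₀^2 = 882*c*(L^2/(n:ℝ)) := by
      rw [hu₀def]
      field_simp
      ring
    rw [e1, ← ht]
    have h2 : c*t ≤ 1*t := mul_le_mul_of_nonneg_right hc1.le ht0.le
    nlinarith only [h2, ht0]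
  have hPartI : κ^A * (Real.exp (2*(c*(n:ℝ))*u₀^2) * GG (q+M₁))
      ≤ Real.exp (888*t) * GG q := by
    have hR0 : (0:ℝ) ≤ (((q:ℝ)+1)/((q:ℝ)+M₁+1)) ^ A := by positivity
    have hcombo : κ^A * ((((q:ℝ)+1)/((q:ℝ)+M₁+1)) ^ A)
        = ((κ*((q:ℝ)+1))/((q:ℝ)+M₁+1)) ^ A := by
      rw [← Real.mul_rpow hκ0.le (by positivity), mul_div_assoc]
    have hupκ : κ^A * GG (q+M₁)
        ≤ (((κ*((q:ℝ)+1))/((q:ℝ)+M₁+1)) ^ A * Real.exp (A^2*M₁/((q:ℝ)+1)^2)) * GG q := by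
      calc κ^A * GG (q+M₁)
          ≤ κ^A * (GG q * ((((q:ℝ)+1)/((q:ℝ)+M₁+1)) ^ A) * Real.exp (A^2*M₁/((q:ℝ)+1)^2)) :=
            mul_le_mul_of_nonneg_left hup hκA0.le
        _ = ((κ^A * ((((q:ℝ)+1)/((q:ℝ)+M₁+1)) ^ A)) * Real.exp (A^2*M₁/((q:ℝ)+1)^2)) * GG q := by
            ring
        _ = (((κ*((q:ℝ)+1))/((q:ℝ)+M₁+1)) ^ A * Real.exp (A^2*M₁/((q:ℝ)+1)^2)) * GG q := by
            rw [hcombo]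
    have hfac : ((κ*((q:ℝ)+1))/((q:ℝ)+M₁+1)) ^ A * Real.exp (A^2*M₁/((q:ℝ)+1)^2)
        ≤ Real.exp (2*t) * Real.exp (4*t) :=
      mul_le_mul hratA (Real.exp_le_exp.mpr hX) (Real.exp_pos _).le (Real.exp_pos _).le
    calc κ^A * (Real.exp (2*(c*(n:ℝ))*u₀^2) * GG (q+M₁))
        = Real.exp (2*(c*(n:ℝ))*u₀^2) * (κ^A * GG (q+M₁)) := by ring
      _ ≤ Real.exp (882*t) * (κ^A * GG (q+M₁)) := by
          exact mul_le_mul_of_nonneg_right (Real.exp_le_exp.mpr hE₁b)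
            (mul_nonneg hκA0.le (hGpos _).le)
      _ ≤ Real.exp (882*t) *
            ((((κ*((q:ℝ)+1))/((q:ℝ)+M₁+1)) ^ A * Real.exp (A^2*M₁/((q:ℝ)+1)^2)) * GG q) := by
          apply mul_le_mul_of_nonneg_left hupκ (Real.exp_pos _).le
      _ ≤ Real.exp (882*t) * ((Real.exp (2*t) * Real.exp (4*t)) * GG q) := by
          apply mul_le_mul_of_nonneg_left
            (mul_le_mul_of_nonneg_right hfac (hGpos q).le) (Real.exp_pos _).le
      _ = (Real.exp (882*t) * Real.exp (2*t) * Real.exp (4*t)) * GG q := by ring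
      _ = Real.exp (888*t) * GG q := by
          rw [← Real.exp_add, ← Real.exp_add]
          congr 1
          ring
  -- Part II : κ^A * (E₂ * GG Q') ≤ t * GG q
  have hPartII : κ^A * ((1-u₀)^(q-Q') * GG Q') ≤ t * GG q := by
    have hlow2 := seq_ratio_lower GG A hA0 hGpos hrec Q' hQ'1 (q-Q')
    have hidx : Q' + (q - Q') = q := by omega
    rw [hidx] at hlow2
    have hcastQ : (Q':ℝ)+((q-Q':ℕ):ℝ) = (q:ℝ) := by
      rw [Nat.cast_sub hQ'q]; ring
    rw [hcastQ] at hlow2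
    have hσ0 : (0:ℝ) < ((Q':ℝ)/(q:ℝ)) ^ A := by positivity
    have hGQ' : GG Q' ≤ GG q * (((q:ℝ)/(Q':ℝ)) ^ A) := by
      have h1 : GG Q' ≤ GG q / (((Q':ℝ)/(q:ℝ)) ^ A) := by
        rw [le_div_iff₀ hσ0]
        exact hlow2
      have h2 : GG q / (((Q':ℝ)/(q:ℝ)) ^ A) = GG q * (((q:ℝ)/(Q':ℝ)) ^ A) := by
        rw [div_eq_mul_inv, ← Real.inv_rpow (by positivity), inv_div]
      rw [h2] at h1
      exact h1
    have hκAe : κ^A ≤ Real.exp A := by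
      have h1 : κ^A = Real.exp (Real.log κ * A) := Real.rpow_def_of_pos hκ0 _
      rw [h1]
      apply Real.exp_le_exp.mpr
      have h2 : Real.log κ ≤ 1 := by
        have := Real.log_le_sub_one_of_pos hκ0
        linarith only [this, hκ2]
      have := mul_le_mul_of_nonneg_right h2 hA0.le
      linarith only [this]
    have hqQ'A : ((q:ℝ)/(Q':ℝ)) ^ A ≤ Real.exp (2*A) := by
      have hpos : (0:ℝ) < (q:ℝ)/(Q':ℝ) := by positivity
      have h1 : ((q:ℝ)/(Q':ℝ)) ^ A = Real.exp (Real.log ((q:ℝ)/(Q':ℝ)) * A) :=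
        Real.rpow_def_of_pos hpos _
      rw [h1]
      apply Real.exp_le_exp.mpr
      have h2 : Real.log ((q:ℝ)/(Q':ℝ)) ≤ 2 := by
        have h3 := Real.log_le_sub_one_of_pos hpos
        have h4 : (q:ℝ)/(Q':ℝ) ≤ 3 := by
          rw [div_le_iff₀ hQ'0R]
          linarith only [hq3Q']
        linarith only [h3, h4]
      have := mul_le_mul_of_nonneg_right h2 hA0.le
      linarith only [this]
    have hE₂ : (1-u₀)^(q-Q') ≤ Real.exp (-(u₀*((q-Q':ℕ):ℝ))) := by
      have h1 : 1-u₀ ≤ Real.exp (-u₀) := by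
        have := Real.add_one_le_exp (-u₀); linarith only [this]
      calc (1-u₀)^(q-Q') ≤ (Real.exp (-u₀))^(q-Q') :=
            pow_le_pow_left₀ (by linarith only [hu₀2]) h1 _
        _ = Real.exp (((q-Q':ℕ):ℝ) * (-u₀)) := (Real.exp_nat_mul _ _).symm
        _ = Real.exp (-(u₀*((q-Q':ℕ):ℝ))) := by ring_nf
    have hexps : Real.exp A * Real.exp (2*A) * Real.exp (-(u₀*((q-Q':ℕ):ℝ)))
        ≤ Real.exp (-(2*L)) := by
      rw [← Real.exp_add, ← Real.exp_add]
      apply Real.exp_le_exp.mpr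
      have h5 : 21*L/4 ≤ u₀*((q-Q':ℕ):ℝ) := by
        have h6 := mul_le_mul_of_nonneg_left hqQ'4 hu₀0.le
        have e : u₀*((n:ℝ)/4) = 21*L/4 := by
          rw [hu₀def]
          field_simp
        rw [e] at h6
        exact h6
      have h7 : 3*A ≤ 3*L := by linarith only [hAL]
      linarith only [h5, h7, hL1]
    have hcollect : κ^A * (((q:ℝ)/(Q':ℝ)) ^ A) * ((1-u₀)^(q-Q'))
        ≤ Real.exp (-(2*L)) := by
      calc κ^A * (((q:ℝ)/(Q':ℝ)) ^ A) * ((1-u₀)^(q-Q'))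
          ≤ Real.exp A * Real.exp (2*A) * Real.exp (-(u₀*((q-Q':ℕ):ℝ))) := by
            apply mul_le_mul _ hE₂ (pow_nonneg (by linarith only [hu₀2]) _) (by positivity)
            exact mul_le_mul hκAe hqQ'A (by positivity) (Real.exp_pos _).le
        _ ≤ Real.exp (-(2*L)) := hexps
    have hexp2L : Real.exp (-(2*L)) ≤ t := by
      have hEL : Real.exp L = (n:ℝ) := Real.exp_log hn0
      have h1 : Real.exp (-(2*L)) = ((n:ℝ)*(n:ℝ))⁻¹ := by
        rw [show -(2*L) = -L + -L by ring, Real.exp_add, ← hEL]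
        rw [Real.exp_neg, mul_inv]
      rw [h1, ht]
      have h3 : ((n:ℝ)*(n:ℝ))⁻¹ ≤ 1/(n:ℝ) := by
        rw [one_div]
        apply inv_anti₀ hn0
        nlinarith only [hn0, hnR]
      have h4 : 1/(n:ℝ) ≤ L^2/(n:ℝ) := by
        gcongr
        nlinarith only [hL1]
      linarith only [h3, h4]
    calc κ^A * ((1-u₀)^(q-Q') * GG Q')
        ≤ κ^A * ((1-u₀)^(q-Q') * (GG q * (((q:ℝ)/(Q':ℝ)) ^ A))) := by
          apply mul_le_mul_of_nonneg_left _ hκA0.le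
          apply mul_le_mul_of_nonneg_left hGQ' (pow_nonneg (by linarith only [hu₀2]) _)
      _ = (κ^A * (((q:ℝ)/(Q':ℝ)) ^ A) * ((1-u₀)^(q-Q'))) * GG q := by ring
      _ ≤ Real.exp (-(2*L)) * GG q :=
          mul_le_mul_of_nonneg_right hcollect (hGpos q).le
      _ ≤ t * GG q := mul_le_mul_of_nonneg_right hexp2L (hGpos q).le
  have hineq1 : κ^A * H ≤ (1+4000*t) * GG q := by
    have h888 : Real.exp (888*t) ≤ 1 + 1776*t := by
      have := exp_le_one_add_two (x := 888*t) (by positivity) (by linarith only [htsmall])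
      linarith only [this]
    calc κ^A * H
        ≤ κ^A * (Real.exp (2*(c*(n:ℝ))*u₀^2) * GG (q+M₁) + (1-u₀)^(q-Q') * GG Q') :=
          mul_le_mul_of_nonneg_left hH_le hκA0.le
      _ = κ^A * (Real.exp (2*(c*(n:ℝ))*u₀^2) * GG (q+M₁))
          + κ^A * ((1-u₀)^(q-Q') * GG Q') := by ring
      _ ≤ Real.exp (888*t) * GG q + t * GG q := add_le_add hPartI hPartII
      _ ≤ (1+1776*t) * GG q + t * GG q := by
          apply add_le_add (mul_le_mul_of_nonneg_right h888 (hGpos q).le) le_rfl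
      _ = (1+1777*t) * GG q := by ring
      _ ≤ (1+4000*t) * GG q := by
          apply mul_le_mul_of_nonneg_right _ (hGpos q).le
          linarith only [ht0]
  -- ***** final conversion
  have hchoose : (0:ℝ) < ((n.choose (n-k)):ℝ) := by
    exact_mod_cast Nat.choose_pos (Nat.sub_le n k)
  have hC₀ : (0:ℝ) < (1+δ) * k * (n.choose (n-k)) := by
    have hkpos : (0:ℝ) < (k:ℝ) := by linarith only [hk1R]
    have h1δ : (0:ℝ) < 1+δ := by linarith only [hδ]
    positivity
  set C₀ : ℝ := (1+δ) * k * (n.choose (n-k)) with hC₀def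
  have hden := den_eq δ n k hk1 hkn
  have hnum := num_eq δ β b hβ hbdef n k m hk1 hkn
  rw [← hqdef] at hden hnum
  have hκα : 1+α*β^(-(1+δ)) = κ := by rw [hκ, hc, hbdef]
  have hexpA : -((k:ℝ) - 1/(1+δ)) = -A := by rw [hA]
  have hκnegA : κ^(-A) = (κ^A)⁻¹ := Real.rpow_neg hκ0.le A
  have hGq := hGpos q
  have hgoalrw : (1:ℝ) + 4000*(Real.log n)^2/(n:ℝ) = 1 + 4000*t := by
    rw [ht, ← hL]; ring
  have hinvmul : (κ^A)⁻¹*(κ^A) = 1 := inv_mul_cancel₀ (ne_of_gt hκA0)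
  constructor
  · -- C/D
    rw [hnum, hden, hκα, hexpA, hκnegA, hgoalrw]
    rw [div_le_iff₀ (by positivity)]
    calc C₀*(plH δ b k q m) = C₀*H := by rw [hH]
      _ = C₀*((κ^A)⁻¹*(κ^A))*H := by rw [hinvmul, mul_one]
      _ = (C₀*(κ^A)⁻¹)*(κ^A*H) := by ring
      _ ≤ (C₀*(κ^A)⁻¹)*((1+4000*t)*GG q) := by
          apply mul_le_mul_of_nonneg_left hineq1 (by positivity)
      _ = (1+4000*t)*((κ^A)⁻¹*(C₀*GG q)) := by ring
  · -- D/C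
    rw [hnum, hden, hκα, hexpA, hκnegA, hgoalrw]
    rw [div_le_iff₀ (by positivity)]
    calc (κ^A)⁻¹*(C₀*GG q) ≤ (κ^A)⁻¹*(C₀*((1+4000*t)*(κ^A*H))) := by
          apply mul_le_mul_of_nonneg_left
            (mul_le_mul_of_nonneg_left hineq2 hC₀.le) (by positivity)
      _ = (1+4000*t)*(((κ^A)⁻¹*(κ^A))*(C₀*H)) := by ring
      _ = (1+4000*t)*(C₀*(plH δ b k q m)) := by rw [hinvmul, one_mul, hH]

end PLmain
end

section
/- Let μ be a probability distribution on [0,1] with a continuous density f such that sup{x : f(x) > 0} = 1, and let F be its CDF. Let b : ℝ → ℝ be any function such that b(x) ≤ T for all x ≥ 0, where T < 1 is a fixed constant with F(T) < 1. For each n, let X₁,…,Xₙ,Y₁,…,Yₙ be i.i.d. with law μ, let X_{(n:n)} = max_i X_i, and let Y_{(n-1:n)} be the second largest of Y₁,…,Yₙ. Then for all sufficiently large n, the event G = {b(X_{(n:n)}) < Y_{(n-1:n)}} has positive probability and E[(X_{(n:n)} − Y_{(n-1:n)})·1_G] > 0; equivalently, E[X_{(n:n)} − Y_{(n-1:n)}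 | b(X_{(n:n)}) < Y_{(n-1:n)}] > 0. -/
open MeasureTheory Real

/-- The `k`-th smallest value (1-indexed) among `v 0, …, v (n-1)`;
`ostat v n` is the maximum and `ostat v (n-1)` the second largest. -/
noncomputable def ostat {n : ℕ} (v : Fin n → ℝ) (k : ℕ) : ℝ :=
  (List.insertionSort (· ≤ ·) (List.ofFn v)).getD (k - 1) 0

lemma countP_eq_sum {α : Type*} (l : List α) (q : α → Prop) [DecidablePred q] :
    l.countP (fun a => decide (q a)) = (l.map fun a => if q a then (1:ℕ) else 0).sum := by
  induction l with
  | nil => simp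
  | cons a l ih => by_cases h : q a <;> simp [List.countP_cons, ih, h, Nat.add_comm]

lemma sorted_getD_le_iff {l : List ℝ} (hs : l.Pairwise (· ≤ ·)) {k : ℕ}
    (hk1 : 1 ≤ k) (hk2 : k ≤ l.length) {x : ℝ} :
    l.getD (k-1) 0 ≤ x ↔ k ≤ l.countP (fun y => decide (y ≤ x)) := by
  have hkl : k - 1 < l.length := lt_of_lt_of_le (Nat.sub_lt hk1 one_pos) hk2
  rw [List.getD_eq_getElem _ _ hkl]
  constructor
  · intro h
    have h1 : l.countP (fun y => decide (y ≤ x))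
        = (l.take k).countP (fun y => decide (y ≤ x))
          + (l.drop k).countP (fun y => decide (y ≤ x)) := by
      conv_lhs => rw [← List.take_append_drop k l, List.countP_append]
    have h2 : (l.take k).countP (fun y => decide (y ≤ x)) = (l.take k).length := by
      rw [List.countP_eq_length]
      intro a ha
      rw [List.mem_take_iff_getElem] at ha
      obtain ⟨i, hi, rfl⟩ := ha
      have hik : i ≤ k - 1 := Nat.le_sub_one_of_lt (lt_of_lt_of_le hi inf_le_left)
      have : l[i] ≤ l[k-1] := by
        rcases eq_or_lt_of_le hik with h' | h'
        · simp [h']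
        · exact List.pairwise_iff_getElem.mp hs i (k-1) _ _ h'
      simpa using this.trans h
    have h3 : (l.take k).length = k := by simp [List.length_take, hk2]
    omega
  · intro h
    by_contra hx
    push_neg at hx
    have h1 : l.countP (fun y => decide (y ≤ x))
        = (l.take (k-1)).countP (fun y => decide (y ≤ x))
          + (l.drop (k-1)).countP (fun y => decide (y ≤ x)) := by
      conv_lhs => rw [← List.take_append_drop (k-1) l, List.countP_append]
    have h2 : (l.drop (k-1)).countP (fun y => decide (y ≤ x)) = 0 := by
      rw [List.countP_eq_zero]
      intro a ha
      rw [List.mem_drop_iff_getElem] at ha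
      obtain ⟨i, hi, rfl⟩ := ha
      have hle : l[k-1] ≤ l[k-1+i] := by
        rcases Nat.eq_zero_or_pos i with h' | h'
        · simp [h']
        · exact List.pairwise_iff_getElem.mp hs (k-1) (k-1+i) _ _ (by omega)
      have : x < l[k-1+i] := lt_of_lt_of_le hx hle
      simpa using not_le_of_gt this
    have h3 : (l.take (k-1)).length ≤ k - 1 := by simp [List.length_take]
    have h4 : (l.take (k-1)).countP (fun y => decide (y ≤ x)) ≤ (l.take (k-1)).length :=
      List.countP_le_length
    omega

lemma ostat_le_iff {n : ℕ} (v : Fin n → ℝ) {k : ℕ} (hk1 : 1 ≤ k) (hk2 : k ≤ n) (x : ℝ) :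
    ostat v k ≤ x ↔ k ≤ (Finset.univ.filter fun i => v i ≤ x).card := by
  unfold ostat
  rw [sorted_getD_le_iff (List.pairwise_insertionSort _ _) hk1
      (by simpa [List.length_insertionSort] using hk2)]
  rw [(List.perm_insertionSort _ _).countP_eq]
  have : (List.ofFn v).countP (fun y => decide (y ≤ x))
      = (Finset.univ.filter fun i => v i ≤ x).card := by
    rw [List.ofFn_eq_map, List.countP_map,
      Finset.card_filter, Fin.sum_univ_def]
    rw [show ((fun y => decide (y ≤ x)) ∘ v) = (fun i => decide (v i ≤ x)) from rfl]
    rw [countP_eq_sum (q := fun i => v i ≤ x)]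
  rw [this]

lemma ostat_max_le_iff {n : ℕ} (hn : 1 ≤ n) (v : Fin n → ℝ) (x : ℝ) :
    ostat v n ≤ x ↔ ∀ i, v i ≤ x := by
  rw [ostat_le_iff v hn le_rfl x]
  constructor
  · intro h i
    have hcard : (Finset.univ.filter fun i => v i ≤ x).card ≤ n := by
      simpa using Finset.card_filter_le Finset.univ (fun i => v i ≤ x)
    have : (Finset.univ.filter fun i => v i ≤ x) = Finset.univ := by
      apply Finset.eq_univ_of_card
      · simpa using le_antisymm hcard h
    have := Finset.mem_filter.mp (this ▸ Finset.mem_univ i)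
    exact this.2
  · intro h
    have : (Finset.univ.filter fun i => v i ≤ x) = Finset.univ :=
      Finset.filter_true_of_mem (fun i _ => h i)
    simp [this]

lemma ostat_snd_le_iff {n : ℕ} (hn : 2 ≤ n) (v : Fin n → ℝ) (x : ℝ) :
    ostat v (n-1) ≤ x ↔ (Finset.univ.filter fun i => x < v i).card ≤ 1 := by
  rw [ostat_le_iff v (by omega) (by omega) x]
  have hfeq : (Finset.univ.filter fun i => x < v i)
      = (Finset.univ.filter fun i => ¬ v i ≤ x) :=
    Finset.filter_congr (fun i _ => by rw [not_le])
  have hsplit : (Finset.univ.filter fun i => v i ≤ x).card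
      + (Finset.univ.filter fun i => x < v i).card = n := by
    rw [hfeq, Finset.card_filter_add_card_filter_not]
    simp
  omega


lemma ostat_le_one {n k : ℕ} (hk1 : 1 ≤ k) (hk2 : k ≤ n) {v : Fin n → ℝ}
    (hv : ∀ i, v i ≤ 1) : ostat v k ≤ 1 := by
  rw [ostat_le_iff v hk1 hk2]
  have : (Finset.univ.filter fun i => v i ≤ (1:ℝ)) = Finset.univ :=
    Finset.filter_true_of_mem (fun i _ => hv i)
  simp [this]; omega

lemma ostat_nonneg {n k : ℕ} (hk1 : 1 ≤ k) (hk2 : k ≤ n) {v : Fin n → ℝ}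
    (hv : ∀ i, 0 ≤ v i) : 0 ≤ ostat v k := by
  by_contra h
  push_neg at h
  have h2 := (ostat_le_iff v hk1 hk2 (ostat v k)).mp le_rfl
  have hempty : (Finset.univ.filter fun i => v i ≤ ostat v k) = ∅ := by
    apply Finset.filter_false_of_mem
    intro i _
    exact not_le.mpr (lt_of_lt_of_le h (hv i))
  rw [hempty] at h2
  simp at h2
  omega

lemma measurable_ostat {n k : ℕ} (hk1 : 1 ≤ k) (hk2 : k ≤ n) :
    Measurable (fun v : Fin n → ℝ => ostat v k) := by
  apply measurable_of_Iic
  intro x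
  have : (fun v : Fin n → ℝ => ostat v k) ⁻¹' Set.Iic x
      = ⋃ (s : Finset (Fin n)) (_ : k ≤ s.card), ⋂ i ∈ s, {v : Fin n → ℝ | v i ≤ x} := by
    ext v
    simp only [Set.mem_preimage, Set.mem_Iic, Set.mem_iUnion, Set.mem_iInter, Set.mem_setOf_eq]
    rw [ostat_le_iff v hk1 hk2]
    constructor
    · intro h
      exact ⟨Finset.univ.filter fun i => v i ≤ x, h,
        fun i hi => (Finset.mem_filter.mp hi).2⟩
    · rintro ⟨s, hs, hall⟩
      calc k ≤ s.card := hs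
        _ ≤ (Finset.univ.filter fun i => v i ≤ x).card :=
          Finset.card_le_card (fun i hi => Finset.mem_filter.mpr ⟨Finset.mem_univ i, hall i hi⟩)
  rw [this]
  exact MeasurableSet.iUnion fun s => MeasurableSet.iUnion fun _ =>
    MeasurableSet.biInter (Set.to_countable _) fun i _ =>
      measurableSet_Iic.preimage (measurable_pi_apply i)

variable {μ : Measure ℝ} [IsProbabilityMeasure μ]

lemma pi_measure_all_le (n : ℕ) (x : ℝ) :
    (Measure.pi fun _ : Fin n => μ) {v | ∀ i, v i ≤ x} = μ (Set.Iic x) ^ n := by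
  have h : {v : Fin n → ℝ | ∀ i, v i ≤ x} = Set.pi Set.univ (fun _ => Set.Iic x) := by
    ext v; simp [Set.mem_pi, Pi.le_def]
  rw [h, Measure.pi_pi]
  simp

lemma pi_measure_atmost_one (n : ℕ) (hn : 1 ≤ n) (x : ℝ) :
    (Measure.pi fun _ : Fin n => μ) {v | (Finset.univ.filter fun i => x < v i).card ≤ 1}
      = μ (Set.Iic x) ^ n + n * (μ (Set.Ioi x) * μ (Set.Iic x) ^ (n-1)) := by
  set A : Set (Fin n → ℝ) := {v | ∀ i, v i ≤ x} with hA
  set B : Fin n → Set (Fin n → ℝ) :=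
    fun i => {v | x < v i ∧ ∀ j, j ≠ i → v j ≤ x} with hB
  have hBpi : ∀ i, B i = Set.pi Set.univ (fun j => if j = i then Set.Ioi x else Set.Iic x) := by
    intro i
    ext v
    simp only [hB, Set.mem_setOf_eq, Set.mem_pi, Set.mem_univ, forall_true_left]
    constructor
    · rintro ⟨h1, h2⟩ j
      by_cases hj : j = i
      · subst hj; simp [h1]
      · simp [hj, h2 j hj]
    · intro h
      refine ⟨by simpa using h i, fun j hj => by simpa [hj] using h j⟩
  have hAm : MeasurableSet A := by
    have : A = Set.pi Set.univ (fun _ => Set.Iic x) := by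
      ext v; simp [hA, Set.mem_pi, Pi.le_def]
    rw [this]; exact MeasurableSet.univ_pi fun _ => measurableSet_Iic
  have hBm : ∀ i, MeasurableSet (B i) := by
    intro i; rw [hBpi i]
    exact MeasurableSet.univ_pi fun j => by split <;> [exact measurableSet_Ioi; exact measurableSet_Iic]
  have hset : {v : Fin n → ℝ | (Finset.univ.filter fun i => x < v i).card ≤ 1}
      = A ∪ ⋃ i, B i := by
    ext v
    simp only [Set.mem_setOf_eq, Set.mem_union, Set.mem_iUnion, hA, hB]
    constructor
    · intro h
      rcases Finset.eq_empty_or_nonempty (Finset.univ.filter fun i => x < v i) with he | ⟨i, hi⟩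
      · left
        intro i
        by_contra hx
        have : i ∈ (Finset.univ.filter fun j => x < v j) :=
          Finset.mem_filter.mpr ⟨Finset.mem_univ i, not_le.mp hx⟩
        simp [he] at this
      · right
        refine ⟨i, (Finset.mem_filter.mp hi).2, fun j hj => ?_⟩
        by_contra hx
        have hjmem : j ∈ (Finset.univ.filter fun j => x < v j) :=
          Finset.mem_filter.mpr ⟨Finset.mem_univ j, not_le.mp hx⟩
        have : ({i, j} : Finset (Fin n)) ⊆ Finset.univ.filter fun j => x < v j := by
          intro a ha
          rcases Finset.mem_insert.mp ha with rfl | ha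
          · exact hi
          · simpa [Finset.mem_singleton.mp ha] using hjmem
        have hc := Finset.card_le_card this
        rw [Finset.card_pair (fun e => hj e.symm)] at hc
        omega
    · rintro (h | ⟨i, h1, h2⟩)
      · have : (Finset.univ.filter fun i => x < v i) = ∅ :=
          Finset.filter_false_of_mem (fun i _ => not_lt.mpr (h i))
        simp [this]
      · have : (Finset.univ.filter fun j => x < v j) ⊆ {i} := by
          intro j hj
          rw [Finset.mem_singleton]
          by_contra hne
          exact absurd ((Finset.mem_filter.mp hj).2) (not_lt.mpr (h2 j hne))
        simpa using Finset.card_le_card this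
  have hdisj : Disjoint A (⋃ i, B i) := by
    rw [Set.disjoint_iUnion_right]
    intro i
    rw [Set.disjoint_left]
    rintro v hv ⟨h1, _⟩
    exact absurd (hv i) (not_le.mpr h1)
  have hpair : Pairwise (Function.onFun Disjoint B) := by
    intro i j hij
    rw [Function.onFun, Set.disjoint_left]
    rintro v ⟨h1, h2⟩ ⟨h3, h4⟩
    exact absurd h1 (not_lt.mpr (h4 i hij))
  rw [hset, measure_union hdisj (MeasurableSet.iUnion hBm),
    measure_iUnion hpair hBm]
  have hBval : ∀ i, (Measure.pi fun _ : Fin n => μ) (B i)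
      = μ (Set.Ioi x) * μ (Set.Iic x) ^ (n-1) := by
    intro i
    rw [hBpi i, Measure.pi_pi]
    rw [show (fun j => μ (if j = i then Set.Ioi x else Set.Iic x))
        = (fun j => if j = i then μ (Set.Ioi x) else μ (Set.Iic x)) from by
      funext j; split <;> rfl]
    rw [← Finset.mul_prod_erase Finset.univ _ (Finset.mem_univ i)]
    simp only [if_pos rfl]
    congr 1
    rw [Finset.prod_congr rfl (fun j hj => if_neg (Finset.ne_of_mem_erase hj))]
    rw [Finset.prod_const, Finset.card_erase_of_mem (Finset.mem_univ i)]
    simp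
  simp only [hBval, tsum_fintype, Finset.sum_const, Finset.card_univ, Fintype.card_fin]
  rw [pi_measure_all_le]
  simp [nsmul_eq_mul]

section density
variable {μ : Measure ℝ} [IsProbabilityMeasure μ] {f : ℝ → ℝ}

lemma mu_compl_Icc_zero (hf : Continuous f)
    (hsupp : ∀ x, x ∉ Set.Icc (0 : ℝ) 1 → f x = 0)
    (hμ : μ = MeasureTheory.volume.withDensity fun x => ENNReal.ofReal (f x)) :
    μ (Set.Icc (0:ℝ) 1)ᶜ = 0 := by
  rw [hμ, withDensity_apply _ (measurableSet_Icc.compl)]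
  refine le_antisymm ?_ zero_le
  refine le_trans (setLIntegral_mono (g := fun _ => (0:ENNReal)) measurable_const
    (fun x hx => le_of_eq (by simp [hsupp x hx]))) ?_
  simp

lemma mu_Icc_one (hf : Continuous f)
    (hsupp : ∀ x, x ∉ Set.Icc (0 : ℝ) 1 → f x = 0)
    (hμ : μ = MeasureTheory.volume.withDensity fun x => ENNReal.ofReal (f x)) :
    μ (Set.Icc (0:ℝ) 1) = 1 := by
  have h := measure_add_measure_compl (μ := μ) (s := Set.Icc (0:ℝ) 1) measurableSet_Icc
  rw [mu_compl_Icc_zero hf hsupp hμ] at h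
  simpa using h

lemma mu_Iic_eq_one (hf : Continuous f)
    (hsupp : ∀ x, x ∉ Set.Icc (0 : ℝ) 1 → f x = 0)
    (hμ : μ = MeasureTheory.volume.withDensity fun x => ENNReal.ofReal (f x))
    {t : ℝ} (ht : 1 ≤ t) : μ (Set.Iic t) = 1 := by
  refine le_antisymm prob_le_one ?_
  rw [← mu_Icc_one hf hsupp hμ]
  exact measure_mono (fun x hx => le_trans hx.2 ht)

lemma mu_Icc_pos (hf : Continuous f) (hf0 : ∀ x, 0 ≤ f x)
    (hμ : μ = MeasureTheory.volume.withDensity fun x => ENNReal.ofReal (f x))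
    {u w : ℝ} (huw : u < w) (hpos : ∀ t ∈ Set.Icc u w, 0 < f t) :
    0 < μ (Set.Icc u w) := by
  obtain ⟨z, hz, hzmin⟩ := isCompact_Icc.exists_isMinOn (Set.nonempty_Icc.mpr huw.le)
    hf.continuousOn
  have hε : 0 < f z := hpos z hz
  have hge : ENNReal.ofReal (f z) * volume (Set.Icc u w) ≤ μ (Set.Icc u w) := by
    rw [hμ, withDensity_apply _ measurableSet_Icc, ← setLIntegral_const]
    exact setLIntegral_mono (hf.measurable.ennreal_ofReal)
      (fun x hx => ENNReal.ofReal_le_ofReal (hzmin hx))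
  refine lt_of_lt_of_le ?_ hge
  rw [Real.volume_Icc]
  exact ENNReal.mul_pos (by simp [hε]) (by simp; linarith)

lemma exists_pos_interval (hf : Continuous f)
    (hsupp : ∀ x, x ∉ Set.Icc (0 : ℝ) 1 → f x = 0)
    (hsup : sSup {x | 0 < f x} = 1) {y : ℝ} (hy : y < 1) :
    ∃ u w, y < u ∧ u < w ∧ w < 1 ∧ ∀ t ∈ Set.Icc u w, 0 < f t := by
  set S := {x | 0 < f x} with hS
  have hsup' : sSup S = 1 := hsup
  have hne : S.Nonempty := by
    by_contra h
    rw [Set.not_nonempty_iff_eq_empty] at h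
    rw [h] at hsup'
    simp [Real.sSup_empty] at hsup'
  have hsub : S ⊆ Set.Icc 0 1 := by
    intro x hx
    by_contra h
    exact absurd (hsupp x h) (ne_of_gt hx)
  obtain ⟨z, hzS, hyz⟩ : ∃ z ∈ S, y < z := by
    by_contra h
    push_neg at h
    have : sSup S ≤ y := csSup_le hne h
    rw [hsup'] at this
    linarith
  have hz1 : z ≤ 1 := (hsub hzS).2
  have hopen : IsOpen S := isOpen_Ioi.preimage hf
  obtain ⟨δ, hδ, hball⟩ := Metric.isOpen_iff.mp hopen z hzS
  set u₀ := max y (z - δ) with hu₀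
  have hu₀z : u₀ < z := max_lt hyz (by linarith)
  refine ⟨(u₀ + z)/2, ((u₀ + z)/2 + z)/2, ?_, by linarith, by
      have : (u₀ + z)/2 < z := by linarith
      linarith, ?_⟩
  · have : y ≤ u₀ := le_max_left _ _
    linarith
  · intro t ht
    apply hball
    rw [Real.ball_eq_Ioo]
    have h1 : z - δ ≤ u₀ := le_max_right _ _
    have h2 := ht.1
    have h3 := ht.2
    exact ⟨by linarith, by linarith⟩

lemma mu_Ioi_pos (hf : Continuous f) (hf0 : ∀ x, 0 ≤ f x)
    (hsupp : ∀ x, x ∉ Set.Icc (0 : ℝ) 1 → f x = 0)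
    (hμ : μ = MeasureTheory.volume.withDensity fun x => ENNReal.ofReal (f x))
    (hsup : sSup {x | 0 < f x} = 1) {y : ℝ} (hy : y < 1) :
    0 < μ (Set.Ioi y) := by
  obtain ⟨u, w, hyu, huw, hw1, hpos⟩ := exists_pos_interval hf hsupp hsup hy
  refine lt_of_lt_of_le (mu_Icc_pos hf hf0 hμ huw hpos) (measure_mono ?_)
  intro t ht
  exact lt_of_lt_of_le hyu ht.1

end density

lemma integrableOn_aux {φ : ℝ → ℝ} (hm : Measurable φ) (h0 : ∀ t, 0 ≤ φ t)
    (h1 : ∀ t, φ t ≤ 1) (hz : ∀ t, 1 ≤ t → φ t = 0) :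
    IntegrableOn φ (Set.Ioi (0:ℝ)) volume := by
  have hsplit : Set.Ioi (0:ℝ) = Set.Ioc 0 1 ∪ Set.Ioi 1 :=
    (Set.Ioc_union_Ioi_eq_Ioi zero_le_one).symm
  rw [hsplit]
  apply IntegrableOn.union
  · have hconst : IntegrableOn (fun _ => (1:ℝ)) (Set.Ioc (0:ℝ) 1) volume :=
      (integrableOn_const_iff (C := (1:ℝ))).mpr (Or.inr (by rw [Real.volume_Ioc]; exact ENNReal.ofReal_lt_top))
    refine Integrable.mono' hconst hm.aestronglyMeasurable ?_
    exact Filter.Eventually.of_forall fun t => by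
      rw [Real.norm_eq_abs, abs_of_nonneg (h0 t)]; exact h1 t
  · refine (integrableOn_zero (s := Set.Ioi (1:ℝ))).congr_fun ?_ measurableSet_Ioi
    intro t ht
    exact (hz t (le_of_lt ht)).symm

lemma pi_eval_null {μ : Measure ℝ} [IsProbabilityMeasure μ] {n : ℕ} {s : Set ℝ}
    (hs : MeasurableSet s) (h0 : μ s = 0) (i : Fin n) :
    (Measure.pi fun _ : Fin n => μ) {v | v i ∈ s} = 0 := by
  have h : {v : Fin n → ℝ | v i ∈ s}
      = Set.pi Set.univ (fun j => if j = i then s else Set.univ) := by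
    ext v
    simp only [Set.mem_setOf_eq, Set.mem_pi, Set.mem_univ, forall_true_left]
    constructor
    · intro hv j
      by_cases hj : j = i
      · subst hj; simpa using hv
      · simp [hj]
    · intro hv
      simpa using hv i
  rw [h, Measure.pi_pi]
  exact Finset.prod_eq_zero (Finset.mem_univ i) (by simp [h0])

lemma ae_pi_mem {μ : Measure ℝ} [IsProbabilityMeasure μ] {n : ℕ} {s : Set ℝ}
    (hs : MeasurableSet s) (h1 : μ sᶜ = 0) :
    ∀ᵐ v ∂(Measure.pi fun _ : Fin n => μ), ∀ i, v i ∈ s := by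
  rw [MeasureTheory.ae_all_iff]
  intro i
  rw [MeasureTheory.ae_iff]
  have : {v : Fin n → ℝ | ¬ v i ∈ s} = {v : Fin n → ℝ | v i ∈ sᶜ} := rfl
  rw [this]
  exact pi_eval_null hs.compl h1 i

lemma main_step (μ : Measure ℝ) [IsProbabilityMeasure μ]
    (b : ℝ → ℝ) (hb : Measurable b)
    (T₀ a x₁ : ℝ) (hbT₀ : ∀ x, 0 ≤ x → b x ≤ T₀)
    (h0a : 0 < a) (hT₀a : T₀ < a) (hax : a < x₁)
    (hmuIcc : μ (Set.Icc (0:ℝ) 1)ᶜ = 0) (hmuIic1 : ∀ t : ℝ, 1 ≤ t → μ (Set.Iic t) = 1)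
    (n : ℕ) (hn2 : 2 ≤ n)
    (hqp : (μ (Set.Iic T₀)).toReal < (μ (Set.Iic a)).toReal)
    (h1 : ((μ (Set.Iic T₀)).toReal / (μ (Set.Iic a)).toReal)^(n-1)
        < (1 - (μ (Set.Iic x₁)).toReal) * (x₁ - a))
    (h2 : (n:ℝ) * (μ (Set.Iic T₀)).toReal^(n-1) < 1) :
    0 < ((Measure.pi fun _ : Fin n => μ).prod (Measure.pi fun _ : Fin n => μ))
        {ω : (Fin n → ℝ) × (Fin n → ℝ) | b (ostat ω.1 n) < ostat ω.2 (n - 1)} ∧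
    0 < ∫ ω in {ω : (Fin n → ℝ) × (Fin n → ℝ) | b (ostat ω.1 n) < ostat ω.2 (n - 1)},
          (ostat ω.1 n - ostat ω.2 (n - 1))
        ∂((Measure.pi fun _ : Fin n => μ).prod (Measure.pi fun _ : Fin n => μ)) := by
  have hn1 : 1 ≤ n := by omega
  have hk1 : 1 ≤ n - 1 := by omega
  have hkn : n - 1 ≤ n := by omega
  set Pn : Measure (Fin n → ℝ) := Measure.pi fun _ : Fin n => μ with hPn
  set pp : Measure ((Fin n → ℝ) × (Fin n → ℝ)) := Pn.prod Pn with hppdef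
  haveI : IsProbabilityMeasure pp := by rw [hppdef]; infer_instance
  set Fr : ℝ → ℝ := fun t => (μ (Set.Iic t)).toReal with hFr
  have hFrmono : Monotone Fr := fun s t hst =>
    ENNReal.toReal_mono (measure_ne_top _ _) (measure_mono (Set.Iic_subset_Iic.mpr hst))
  have hFr0 : ∀ t, 0 ≤ Fr t := fun t => ENNReal.toReal_nonneg
  have hFrle1 : ∀ t, Fr t ≤ 1 := fun t => by
    rw [hFr]
    exact le_trans (ENNReal.toReal_mono ENNReal.one_ne_top prob_le_one) (by simp)
  have hFr1 : ∀ t, 1 ≤ t → Fr t = 1 := fun t ht => by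
    rw [hFr]; simp only []; rw [hmuIic1 t ht]; simp
  set q : ℝ := Fr T₀ with hqdef
  set p : ℝ := Fr a with hpdef
  set Fx₁ : ℝ := Fr x₁ with hFx₁def
  have hq0 : 0 ≤ q := hFr0 _
  have hp0 : 0 < p := lt_of_le_of_lt hq0 hqp
  have hp1 : p ≤ 1 := hFrle1 _
  -- measurability
  have meas_Mx : Measurable (fun ω : (Fin n → ℝ) × (Fin n → ℝ) => ostat ω.1 n) :=
    (measurable_ostat hn1 le_rfl).comp measurable_fst
  have meas_Sy : Measurable (fun ω : (Fin n → ℝ) × (Fin n → ℝ) => ostat ω.2 (n-1)) :=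
    (measurable_ostat hk1 hkn).comp measurable_snd
  set G : Set ((Fin n → ℝ) × (Fin n → ℝ)) :=
    {ω | b (ostat ω.1 n) < ostat ω.2 (n - 1)} with hG
  have hGm : MeasurableSet G := measurableSet_lt (hb.comp meas_Mx) meas_Sy
  -- event computations
  have hMxle : ∀ t : ℝ, pp {ω : (Fin n → ℝ) × (Fin n → ℝ) | ostat ω.1 n ≤ t}
      = μ (Set.Iic t) ^ n := by
    intro t
    have hset : {ω : (Fin n → ℝ) × (Fin n → ℝ) | ostat ω.1 n ≤ t}
        = {v : Fin n → ℝ | ∀ i, v i ≤ t} ×ˢ (Set.univ : Set (Fin n → ℝ)) := by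
      ext ω
      simp [Set.mem_prod, ostat_max_le_iff hn1]
    rw [hset, hppdef, Measure.prod_prod, measure_univ, mul_one, hPn, pi_measure_all_le]
  have hSyle : ∀ t : ℝ, pp {ω : (Fin n → ℝ) × (Fin n → ℝ) | ostat ω.2 (n-1) ≤ t}
      = μ (Set.Iic t) ^ n + n * (μ (Set.Ioi t) * μ (Set.Iic t) ^ (n-1)) := by
    intro t
    have hset : {ω : (Fin n → ℝ) × (Fin n → ℝ) | ostat ω.2 (n-1) ≤ t}
        = (Set.univ : Set (Fin n → ℝ)) ×ˢ
          {v : Fin n → ℝ | (Finset.univ.filter fun i => t < v i).card ≤ 1} := by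
      ext ω
      simp [Set.mem_prod, ostat_snd_le_iff hn2]
    rw [hset, hppdef, Measure.prod_prod, measure_univ, one_mul, hPn,
      pi_measure_atmost_one n hn1]
  -- real-valued tail probabilities
  have hmeasMxle : ∀ t : ℝ, MeasurableSet {ω : (Fin n → ℝ) × (Fin n → ℝ) | ostat ω.1 n ≤ t} :=
    fun t => measurableSet_le meas_Mx measurable_const
  have hmeasSyle : ∀ t : ℝ, MeasurableSet {ω : (Fin n → ℝ) × (Fin n → ℝ) | ostat ω.2 (n-1) ≤ t} :=
    fun t => measurableSet_le meas_Sy measurable_const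
  have hcomplMx : ∀ t : ℝ, {ω : (Fin n → ℝ) × (Fin n → ℝ) | t < ostat ω.1 n}
      = {ω : (Fin n → ℝ) × (Fin n → ℝ) | ostat ω.1 n ≤ t}ᶜ := by
    intro t; ext ω; simp [not_le]
  have hcomplSy : ∀ t : ℝ, {ω : (Fin n → ℝ) × (Fin n → ℝ) | t < ostat ω.2 (n-1)}
      = {ω : (Fin n → ℝ) × (Fin n → ℝ) | ostat ω.2 (n-1) ≤ t}ᶜ := by
    intro t; ext ω; simp [not_le]
  have hIoi : ∀ t : ℝ, (μ (Set.Ioi t)).toReal = 1 - Fr t := by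
    intro t
    have : Set.Ioi t = (Set.Iic t)ᶜ := by ext s; simp
    rw [this, prob_compl_eq_one_sub measurableSet_Iic,
      ENNReal.toReal_sub_of_le prob_le_one ENNReal.one_ne_top]
    simp [hFr]
  have hψ1 : ∀ t : ℝ, (pp {ω : (Fin n → ℝ) × (Fin n → ℝ) | t < ostat ω.1 n}).toReal
      = 1 - Fr t ^ n := by
    intro t
    rw [hcomplMx t, prob_compl_eq_one_sub (hmeasMxle t), hMxle t,
      ENNReal.toReal_sub_of_le (pow_le_one' prob_le_one n) ENNReal.one_ne_top,
      ENNReal.toReal_pow]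
    simp [hFr]
  have hSum_le_one : ∀ t : ℝ,
      μ (Set.Iic t) ^ n + n * (μ (Set.Ioi t) * μ (Set.Iic t) ^ (n-1)) ≤ 1 := by
    intro t
    rw [← hSyle t]
    exact prob_le_one
  have hψ2 : ∀ t : ℝ, (pp {ω : (Fin n → ℝ) × (Fin n → ℝ) | t < ostat ω.2 (n-1)}).toReal
      = 1 - (Fr t ^ n + n * ((1 - Fr t) * Fr t ^ (n-1))) := by
    intro t
    rw [hcomplSy t, prob_compl_eq_one_sub (hmeasSyle t), hSyle t,
      ENNReal.toReal_sub_of_le (hSum_le_one t) ENNReal.one_ne_top]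
    rw [ENNReal.toReal_add (ENNReal.pow_ne_top (measure_ne_top μ _))
      (ENNReal.mul_ne_top (ENNReal.natCast_ne_top n)
        (ENNReal.mul_ne_top (measure_ne_top _ _) (ENNReal.pow_ne_top (measure_ne_top _ _)))),
      ENNReal.toReal_mul, ENNReal.toReal_mul, ENNReal.toReal_pow, ENNReal.toReal_pow,
      ENNReal.toReal_natCast, hIoi]
    simp [hFr]
  -- almost-everywhere bounds
  have haeIcc : ∀ᵐ ω ∂pp, (∀ i, ω.1 i ∈ Set.Icc (0:ℝ) 1) ∧ (∀ i, ω.2 i ∈ Set.Icc (0:ℝ) 1) := by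
    have haePn : ∀ᵐ v ∂Pn, ∀ i, v i ∈ Set.Icc (0:ℝ) 1 := ae_pi_mem measurableSet_Icc hmuIcc
    rw [MeasureTheory.ae_iff]
    have hsub : {ω : (Fin n → ℝ) × (Fin n → ℝ) |
          ¬((∀ i, ω.1 i ∈ Set.Icc (0:ℝ) 1) ∧ (∀ i, ω.2 i ∈ Set.Icc (0:ℝ) 1))}
        ⊆ ({v : Fin n → ℝ | ¬ ∀ i, v i ∈ Set.Icc (0:ℝ) 1} ×ˢ Set.univ)
          ∪ (Set.univ ×ˢ {v : Fin n → ℝ | ¬ ∀ i, v i ∈ Set.Icc (0:ℝ) 1}) := by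
      intro ω hω
      simp only [Set.mem_setOf_eq, not_and_or] at hω
      rcases hω with h | h
      · exact Or.inl ⟨h, Set.mem_univ _⟩
      · exact Or.inr ⟨Set.mem_univ _, h⟩
    refine le_antisymm (le_trans (measure_mono hsub) ?_) zero_le
    refine le_trans (measure_union_le _ _) ?_
    rw [hppdef, Measure.prod_prod, Measure.prod_prod]
    have h0 : Pn {v : Fin n → ℝ | ¬ ∀ i, v i ∈ Set.Icc (0:ℝ) 1} = 0 := by
      rw [← MeasureTheory.ae_iff]
      exact haePn
    rw [h0]
    simp
  have haeb : ∀ᵐ ω ∂pp, (0 ≤ ostat ω.1 n ∧ ostat ω.1 n ≤ 1)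
      ∧ (0 ≤ ostat ω.2 (n-1) ∧ ostat ω.2 (n-1) ≤ 1) := by
    filter_upwards [haeIcc] with ω hω
    exact ⟨⟨ostat_nonneg hn1 le_rfl (fun i => (hω.1 i).1),
        ostat_le_one hn1 le_rfl (fun i => (hω.1 i).2)⟩,
      ⟨ostat_nonneg hk1 hkn (fun i => (hω.2 i).1),
        ostat_le_one hk1 hkn (fun i => (hω.2 i).2)⟩⟩
  -- integrability
  have hIntMx : Integrable (fun ω : (Fin n → ℝ) × (Fin n → ℝ) => ostat ω.1 n) pp := by
    refine Integrable.mono' (integrable_const 1) meas_Mx.aestronglyMeasurable ?_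
    filter_upwards [haeb] with ω hω
    rw [Real.norm_eq_abs, abs_of_nonneg hω.1.1]
    exact hω.1.2
  have hIntSy : Integrable (fun ω : (Fin n → ℝ) × (Fin n → ℝ) => ostat ω.2 (n-1)) pp := by
    refine Integrable.mono' (integrable_const 1) meas_Sy.aestronglyMeasurable ?_
    filter_upwards [haeb] with ω hω
    rw [Real.norm_eq_abs, abs_of_nonneg hω.2.1]
    exact hω.2.2
  have hIntSub : Integrable
      (fun ω : (Fin n → ℝ) × (Fin n → ℝ) => ostat ω.1 n - ostat ω.2 (n-1)) pp :=
    hIntMx.sub hIntSy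
  -- layercake
  have hEMx : ∫ ω, ostat ω.1 n ∂pp
      = ∫ t in Set.Ioi (0:ℝ), (1 - Fr t ^ n) := by
    rw [Integrable.integral_eq_integral_meas_lt hIntMx
      (by filter_upwards [haeb] with ω hω; exact hω.1.1)]
    exact setIntegral_congr_fun measurableSet_Ioi (fun t _ => hψ1 t)
  have hESy : ∫ ω, ostat ω.2 (n-1) ∂pp
      = ∫ t in Set.Ioi (0:ℝ), (1 - (Fr t ^ n + n * ((1 - Fr t) * Fr t ^ (n-1)))) := by
    rw [Integrable.integral_eq_integral_meas_lt hIntSy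
      (by filter_upwards [haeb] with ω hω; exact hω.2.1)]
    exact setIntegral_congr_fun measurableSet_Ioi (fun t _ => hψ2 t)
  -- integrability of the tail probability functions
  have hFrMeas : Measurable Fr := hFrmono.measurable
  have hI1 : IntegrableOn (fun t => 1 - Fr t ^ n) (Set.Ioi (0:ℝ)) volume := by
    refine integrableOn_aux (measurable_const.sub (hFrMeas.pow_const n)) ?_ ?_ ?_
    · intro t
      have := pow_le_one₀ (hFr0 t) (hFrle1 t) (n := n)
      linarith
    · intro t
      have := pow_nonneg (hFr0 t) n
      linarith
    · intro t ht
      rw [hFr1 t ht]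
      simp
  have hI2 : IntegrableOn (fun t => 1 - (Fr t ^ n + n * ((1 - Fr t) * Fr t ^ (n-1))))
      (Set.Ioi (0:ℝ)) volume := by
    refine integrableOn_aux ?_ ?_ ?_ ?_
    · exact measurable_const.sub ((hFrMeas.pow_const n).add
        (measurable_const.mul ((measurable_const.sub hFrMeas).mul (hFrMeas.pow_const (n-1)))))
    · intro t
      rw [← hψ2 t]
      exact ENNReal.toReal_nonneg
    · intro t
      rw [← hψ2 t]
      exact le_trans (ENNReal.toReal_mono ENNReal.one_ne_top prob_le_one) (by simp)
    · intro t ht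
      rw [hFr1 t ht]
      simp
  -- the expected gap
  have hEdiff : ∫ ω, (ostat ω.1 n - ostat ω.2 (n-1)) ∂pp
      = ∫ t in Set.Ioi (0:ℝ), (n : ℝ) * ((1 - Fr t) * Fr t ^ (n-1)) := by
    rw [integral_sub hIntMx hIntSy, hEMx, hESy, ← integral_sub hI1 hI2]
    refine setIntegral_congr_fun measurableSet_Ioi (fun t _ => ?_)
    ring
  have hg0 : ∀ t, 0 ≤ (n : ℝ) * ((1 - Fr t) * Fr t ^ (n-1)) := by
    intro t
    have h1' := hFrle1 t
    have h2' := hFr0 t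
    have h3' := pow_nonneg h2' (n-1)
    exact mul_nonneg (Nat.cast_nonneg n) (mul_nonneg (by linarith) h3')
  have hgInt : IntegrableOn (fun t => (n : ℝ) * ((1 - Fr t) * Fr t ^ (n-1)))
      (Set.Ioi (0:ℝ)) volume :=
    (hI1.sub hI2).congr (Filter.Eventually.of_forall fun t => by
      simp only [Pi.sub_apply]; ring)
  have hsubset : Set.Icc a x₁ ⊆ Set.Ioi (0:ℝ) := fun t ht => lt_of_lt_of_le h0a ht.1
  have hstep1 : ∫ t in Set.Icc a x₁, (n : ℝ) * ((1 - Fr t) * Fr t ^ (n-1))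
      ≤ ∫ t in Set.Ioi (0:ℝ), (n : ℝ) * ((1 - Fr t) * Fr t ^ (n-1)) :=
    setIntegral_mono_set hgInt (Filter.Eventually.of_forall hg0)
      (HasSubset.Subset.eventuallyLE hsubset)
  have hconst : ∀ t ∈ Set.Icc a x₁,
      (n:ℝ) * ((1 - Fx₁) * p^(n-1)) ≤ (n:ℝ) * ((1 - Fr t) * Fr t^(n-1)) := by
    intro t ht
    have hFa : p ≤ Fr t := hFrmono ht.1
    have hFx : Fr t ≤ Fx₁ := hFrmono ht.2
    have hp' : (0:ℝ) ≤ p := hp0.le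
    have h1' : p^(n-1) ≤ Fr t^(n-1) := pow_le_pow_left₀ hp' hFa _
    have hmm : (1 - Fx₁) * p^(n-1) ≤ (1 - Fr t) * Fr t^(n-1) :=
      mul_le_mul (by linarith) h1' (pow_nonneg hp' _) (by linarith [hFrle1 t])
    exact mul_le_mul_of_nonneg_left hmm (Nat.cast_nonneg n)
  have hstep2 : (n:ℝ) * ((1 - Fx₁) * p^(n-1)) * (x₁ - a)
      ≤ ∫ t in Set.Icc a x₁, (n : ℝ) * ((1 - Fr t) * Fr t ^ (n-1)) := by
    have hh := setIntegral_ge_of_const_le_real measurableSet_Icc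
      (by rw [Real.volume_Icc]; exact ENNReal.ofReal_ne_top) hconst (hgInt.mono_set hsubset)
    rwa [Real.volume_real_Icc_of_le hax.le] at hh
  -- the complement of G is contained (a.e.) in a small event
  have hGc_ae : ∀ᵐ ω ∂pp, ω ∈ Gᶜ →
      ω ∈ {ω : (Fin n → ℝ) × (Fin n → ℝ) | ostat ω.2 (n-1) ≤ T₀} := by
    filter_upwards [haeb] with ω hω hmem
    have hbx : b (ostat ω.1 n) ≤ T₀ := hbT₀ _ hω.1.1
    have hnl : ¬ b (ostat ω.1 n) < ostat ω.2 (n-1) := hmem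
    show ostat ω.2 (n-1) ≤ T₀
    linarith [not_lt.mp hnl]
  have hGc_le : pp Gᶜ ≤ pp {ω : (Fin n → ℝ) × (Fin n → ℝ) | ostat ω.2 (n-1) ≤ T₀} :=
    measure_mono_ae hGc_ae
  have hSyT₀ : (pp {ω : (Fin n → ℝ) × (Fin n → ℝ) | ostat ω.2 (n-1) ≤ T₀}).toReal
      = q^n + (n:ℝ)*((1-q)*q^(n-1)) := by
    rw [hSyle T₀,
      ENNReal.toReal_add (ENNReal.pow_ne_top (measure_ne_top μ _))
      (ENNReal.mul_ne_top (ENNReal.natCast_ne_top n)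
        (ENNReal.mul_ne_top (measure_ne_top _ _) (ENNReal.pow_ne_top (measure_ne_top _ _)))),
      ENNReal.toReal_mul, ENNReal.toReal_mul, ENNReal.toReal_pow, ENNReal.toReal_pow,
      ENNReal.toReal_natCast, hIoi]
  have hqq : q^(n-1) * q = q^n := by rw [← pow_succ]; congr 1; omega
  have hbound : q^n + (n:ℝ)*((1-q)*q^(n-1)) ≤ (n:ℝ)*q^(n-1) := by
    have hn1' : (1:ℝ) ≤ (n:ℝ) := by exact_mod_cast hn1
    nlinarith [pow_nonneg hq0 n, pow_nonneg hq0 (n-1)]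
  have hGcTo : (pp Gᶜ).toReal ≤ (n:ℝ) * q^(n-1) :=
    le_trans (le_trans (ENNReal.toReal_mono (measure_ne_top _ _) hGc_le) hSyT₀.le) hbound
  have hIGc : |∫ ω in Gᶜ, (ostat ω.1 n - ostat ω.2 (n-1)) ∂pp| ≤ (pp Gᶜ).toReal := by
    rw [← Real.norm_eq_abs]
    refine le_trans (norm_integral_le_integral_norm _) ?_
    simp only [Real.norm_eq_abs]
    have hmono : ∫ ω in Gᶜ, |ostat ω.1 n - ostat ω.2 (n-1)| ∂pp
        ≤ ∫ _ω in Gᶜ, (1:ℝ) ∂pp := by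
      refine integral_mono_ae (hIntSub.abs.restrict) (integrable_const 1) ?_
      refine ae_restrict_of_ae ?_
      filter_upwards [haeb] with ω hω
      have := hω.1.1; have := hω.1.2; have := hω.2.1; have := hω.2.2
      rw [abs_le]
      constructor <;> linarith
    refine le_trans hmono ?_
    rw [setIntegral_const]
    simp [Measure.real]
  have hsplitG : (∫ ω in G, (ostat ω.1 n - ostat ω.2 (n-1)) ∂pp)
      + ∫ ω in Gᶜ, (ostat ω.1 n - ostat ω.2 (n-1)) ∂pp
      = ∫ ω, (ostat ω.1 n - ostat ω.2 (n-1)) ∂pp := integral_add_compl hGm hIntSub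
  have hppow : 0 < p^(n-1) := pow_pos hp0 _
  have hkey : q^(n-1) < p^(n-1) * ((1 - Fx₁) * (x₁ - a)) := by
    have hlt := mul_lt_mul_of_pos_left h1 hppow
    have hid : p^(n-1) * (q/p)^(n-1) = q^(n-1) := by
      rw [div_pow, mul_comm, div_mul_cancel₀ _ (ne_of_gt hppow)]
    calc q^(n-1) = p^(n-1) * (q/p)^(n-1) := hid.symm
      _ < p^(n-1) * ((1-Fx₁)*(x₁-a)) := hlt
  have hn0 : (0:ℝ) < (n:ℝ) := by exact_mod_cast hn1
  have htot : (n:ℝ)*q^(n-1) < ∫ ω, (ostat ω.1 n - ostat ω.2 (n-1)) ∂pp := by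
    rw [hEdiff]
    calc (n:ℝ)*q^(n-1) < (n:ℝ)*(p^(n-1)*((1-Fx₁)*(x₁-a))) :=
          mul_lt_mul_of_pos_left hkey hn0
      _ = (n:ℝ)*((1-Fx₁)*p^(n-1))*(x₁-a) := by ring
      _ ≤ ∫ t in Set.Icc a x₁, (n : ℝ) * ((1 - Fr t) * Fr t ^ (n-1)) := hstep2
      _ ≤ ∫ t in Set.Ioi (0:ℝ), (n : ℝ) * ((1 - Fr t) * Fr t ^ (n-1)) := hstep1
  have hintpos : 0 < ∫ ω in G, (ostat ω.1 n - ostat ω.2 (n-1)) ∂pp := by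
    have hle : ∫ ω in Gᶜ, (ostat ω.1 n - ostat ω.2 (n-1)) ∂pp ≤ (n:ℝ)*q^(n-1) :=
      le_trans (le_trans (le_abs_self _) hIGc) hGcTo
    linarith
  have hmeaspos : 0 < pp G := by
    by_contra hcon
    have hG0 : pp G = 0 := by
      rw [not_lt] at hcon
      exact le_antisymm hcon zero_le
    have hGc1 : pp Gᶜ = 1 := by
      rw [prob_compl_eq_one_sub hGm, hG0]
      simp
    have hGc1' : (pp Gᶜ).toReal = 1 := by rw [hGc1]; simp
    rw [hGc1'] at hGcTo
    linarith
  exact ⟨hmeaspos, hintpos⟩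

/-- For any bounded distribution with continuous density supported in `[0,1]`
whose support has supremum `1`, and any bias function `b` with `b(x) ≤ T < 1`
for all `x ≥ 0`, the Rooney Rule produces a positive expected change in
utility for all sufficiently large `n`: the event `{b(X_{(n:n)}) < Y_{(n-1:n)}}`
has positive probability and `E[(X_{(n:n)} − Y_{(n-1:n)})·1_G] > 0`. -/
theorem rooney_rule_bounded_distributions
    (μ : Measure ℝ) [IsProbabilityMeasure μ] (f : ℝ → ℝ)
    (hf : Continuous f) (hf0 : ∀ x, 0 ≤ f x)
    (hsupp : ∀ x, x ∉ Set.Icc (0 : ℝ) 1 → f x = 0)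
    (hμ : μ = MeasureTheory.volume.withDensity fun x => ENNReal.ofReal (f x))
    (hsup : sSup {x | 0 < f x} = 1)
    (T : ℝ) (hT : T < 1)
    (b : ℝ → ℝ) (hb : Measurable b) (hbT : ∀ x, 0 ≤ x → b x ≤ T) :
    ∃ N : ℕ, ∀ n : ℕ, N ≤ n →
      0 < ((Measure.pi fun _ : Fin n => μ).prod (Measure.pi fun _ : Fin n => μ))
          {ω : (Fin n → ℝ) × (Fin n → ℝ) | b (ostat ω.1 n) < ostat ω.2 (n - 1)} ∧
      0 < ∫ ω in {ω : (Fin n → ℝ) × (Fin n → ℝ) | b (ostat ω.1 n) < ostat ω.2 (n - 1)},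
            (ostat ω.1 n - ostat ω.2 (n - 1))
          ∂((Measure.pi fun _ : Fin n => μ).prod (Measure.pi fun _ : Fin n => μ)) := by
  classical
  set T₀ : ℝ := max T 0 with hT₀def
  have hT₀1 : T₀ < 1 := max_lt hT one_pos
  have hT₀0 : 0 ≤ T₀ := le_max_right _ _
  have hbT₀ : ∀ x, 0 ≤ x → b x ≤ T₀ := fun x hx => le_trans (hbT x hx) (le_max_left _ _)
  obtain ⟨u, w, hTu, huw, hw1, hfpos⟩ := exists_pos_interval hf hsupp hsup hT₀1
  set a : ℝ := w with hadef
  set x₁ : ℝ := (w + 1) / 2 with hx₁def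
  have hax : a < x₁ := by rw [hadef, hx₁def]; linarith
  have hx₁1 : x₁ < 1 := by rw [hx₁def]; linarith
  have h0a : 0 < a := lt_of_le_of_lt hT₀0 (lt_trans hTu huw)
  have hT₀a : T₀ < a := lt_trans hTu huw
  set q : ℝ := (μ (Set.Iic T₀)).toReal with hqdef
  set p : ℝ := (μ (Set.Iic a)).toReal with hpdef
  set Fx₁ : ℝ := (μ (Set.Iic x₁)).toReal with hFx₁def
  have hmuIcc : μ (Set.Icc (0:ℝ) 1)ᶜ = 0 := mu_compl_Icc_zero hf hsupp hμ
  have hmuIic1 : ∀ t : ℝ, 1 ≤ t → μ (Set.Iic t) = 1 := fun t ht => mu_Iic_eq_one hf hsupp hμ ht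
  -- q < p
  have hqp : q < p := by
    have hdecomp : μ (Set.Iic a) = μ (Set.Iic T₀) + μ (Set.Ioc T₀ a) := by
      rw [← Set.Iic_union_Ioc_eq_Iic hT₀a.le]
      exact measure_union (Set.Iic_disjoint_Ioc le_rfl) measurableSet_Ioc
    have hIoc : 0 < μ (Set.Ioc T₀ a) := by
      refine lt_of_lt_of_le (mu_Icc_pos hf hf0 hμ huw hfpos) (measure_mono ?_)
      intro t ht
      exact ⟨lt_of_lt_of_le hTu ht.1, ht.2⟩
    rw [hqdef, hpdef, hdecomp, ENNReal.toReal_add (measure_ne_top _ _) (measure_ne_top _ _)]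
    have : 0 < (μ (Set.Ioc T₀ a)).toReal :=
      ENNReal.toReal_pos (ne_of_gt hIoc) (measure_ne_top _ _)
    linarith
  have hq0 : 0 ≤ q := ENNReal.toReal_nonneg
  have hp0 : 0 < p := lt_of_le_of_lt hq0 hqp
  have hp1 : p ≤ 1 := le_trans (ENNReal.toReal_mono ENNReal.one_ne_top prob_le_one) (by simp)
  have hq1 : q < 1 := lt_of_lt_of_le hqp hp1
  -- F(x₁) < 1
  have hFx₁ : Fx₁ < 1 := by
    have hIoi : 0 < μ (Set.Ioi x₁) := mu_Ioi_pos hf hf0 hsupp hμ hsup hx₁1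
    have hcompl : μ (Set.Ioi x₁) = 1 - μ (Set.Iic x₁) := by
      rw [show Set.Ioi x₁ = (Set.Iic x₁)ᶜ from by ext s; simp]
      exact prob_compl_eq_one_sub measurableSet_Iic
    have hle : μ (Set.Iic x₁) ≤ 1 := prob_le_one
    have hne : μ (Set.Iic x₁) ≠ 1 := by
      intro h
      rw [h] at hcompl
      simp at hcompl
      exact absurd hcompl (ne_of_gt hIoi)
    rw [hFx₁def]
    calc (μ (Set.Iic x₁)).toReal < (1 : ENNReal).toReal := by
          exact ENNReal.toReal_strict_mono ENNReal.one_ne_top (lt_of_le_of_ne hle hne)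
      _ = 1 := by simp
  set c₁ : ℝ := (1 - Fx₁) * (x₁ - a) with hc₁def
  have hc₁ : 0 < c₁ := mul_pos (by linarith) (by linarith)
  -- eventual bounds
  have hr1 : 0 ≤ q / p := div_nonneg hq0 hp0.le
  have hr2 : q / p < 1 := (div_lt_one hp0).mpr hqp
  have hE1 : ∀ᶠ m : ℕ in Filter.atTop, (q/p)^m < c₁ :=
    (tendsto_pow_atTop_nhds_zero_of_lt_one hr1 hr2).eventually_lt_const hc₁
  have hE2 : ∀ᶠ m : ℕ in Filter.atTop, ((m:ℝ)+1) * q^m < 1 := by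
    have t1 := tendsto_self_mul_const_pow_of_lt_one hq0 hq1
    have t2 := tendsto_pow_atTop_nhds_zero_of_lt_one hq0 hq1
    have t3 := t1.add t2
    rw [add_zero] at t3
    have t4 : Filter.Tendsto (fun m : ℕ => ((m:ℝ)+1) * q^m) Filter.atTop (nhds 0) := by
      refine t3.congr (fun m => ?_)
      ring
    exact t4.eventually_lt_const one_pos
  obtain ⟨M1, hM1⟩ := Filter.eventually_atTop.mp hE1
  obtain ⟨M2, hM2⟩ := Filter.eventually_atTop.mp hE2
  refine ⟨max 2 (max (M1+1) (M2+1)), fun n hn => ?_⟩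
  have hn2 : 2 ≤ n := le_trans (le_max_left _ _) hn
  have hm1 : M1 ≤ n - 1 := by
    have := le_trans (le_trans (le_max_left _ _) (le_max_right 2 _)) hn
    omega
  have hm2 : M2 ≤ n - 1 := by
    have := le_trans (le_trans (le_max_right _ _) (le_max_right 2 _)) hn
    omega
  have hcond1 : (q/p)^(n-1) < c₁ := hM1 _ hm1
  have hcond2 : (n:ℝ) * q^(n-1) < 1 := by
    have := hM2 _ hm2
    have hcast : ((n-1 : ℕ):ℝ) + 1 = (n:ℝ) := by
      have : (n - 1) + 1 = n := by omega
      exact_mod_cast congrArg (Nat.cast : ℕ → ℝ) this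
    rwa [hcast] at this
  exact main_step μ b hb T₀ a x₁ hbT₀ h0a hT₀a hax hmuIcc hmuIic1 n hn2 hqp hcond1 hcond2
end

section
/- Let μ be a probability distribution on [0,1] with continuous density f such that sup{x : f(x) > 0} = 1, let F be its CDF, and let T < 1 with F(T) < 1. Then there exist constants η > 0 and K > 0 such that for every n ≥ 2, if Y₁,…,Yₙ are i.i.d. with law μ, Y_{(n:n)} is their maximum and Y_{(n-1:n)} their second largest, then E[Y_{(n:n)} − Y_{(n-1:n)} | Y_{(n-1:n)} ≥ T] ≥ K·(F(T) + η)^{n−1}. -/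
open MeasureTheory Real

section ListLemmas

lemma countP_ofFn {n : ℕ} (w : Fin n → ℝ) (p : ℝ → Bool) :
    (List.ofFn w).countP p = ∑ i, if p (w i) then 1 else 0 := by
  induction n with
  | zero => simp
  | succ n ih =>
    rw [List.ofFn_succ, List.countP_cons, Fin.sum_univ_succ, ih]
    omega

lemma two_le_sum_ite {n : ℕ} (p : Fin n → Prop) [DecidablePred p] {i j : Fin n}
    (hij : i ≠ j) (hi : p i) (hj : p j) : 2 ≤ ∑ k, if p k then (1 : ℕ) else 0 := by
  calc (2:ℕ) = ∑ k ∈ ({i, j} : Finset (Fin n)), if p k then 1 else 0 := by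
        rw [Finset.sum_pair hij]; simp [hi, hj]
    _ ≤ _ := Finset.sum_le_sum_of_subset (Finset.subset_univ _)

lemma exists_two_of_two_le_sum {n : ℕ} (p : Fin n → Prop) [DecidablePred p]
    (h : 2 ≤ ∑ k, if p k then (1 : ℕ) else 0) : ∃ i j, i ≠ j ∧ p i ∧ p j := by
  by_contra hc
  push_neg at hc
  by_cases he : ∃ i, p i
  · obtain ⟨i, hi⟩ := he
    have hle : ∑ k, (if p k then (1:ℕ) else 0) ≤ ∑ k, if k = i then (1:ℕ) else 0 := by
      refine Finset.sum_le_sum fun k _ => ?_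
      by_cases hk : p k
      · by_cases hki : k = i
        · simp [hi, hki]
        · exact absurd hi (hc k i hki hk)
      · simp [hk]
    simp [Finset.sum_ite_eq'] at hle h
    omega
  · push_neg at he
    simp [he] at h

variable {m : ℕ} (v : Fin (m + 2) → ℝ)

noncomputable def srt (v : Fin (m + 2) → ℝ) : List ℝ :=
  List.insertionSort (· ≤ ·) (List.ofFn v)

lemma srt_length : (srt v).length = m + 2 := by
  show (List.insertionSort (· ≤ ·) (List.ofFn v)).length = m + 2
  rw [List.length_insertionSort, List.length_ofFn]

lemma srt_sorted : (srt v).Pairwise (· ≤ ·) :=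
  List.pairwise_insertionSort _ _

lemma srt_perm : (srt v).Perm (List.ofFn v) :=
  List.perm_insertionSort _ _

lemma srt_countP (p : ℝ → Bool) :
    (srt v).countP p = ∑ i, if p (v i) then 1 else 0 := by
  rw [List.Perm.countP_eq p (srt_perm v), countP_ofFn]

lemma srt_sorted_le {i j : ℕ} (hi : i < m + 2) (hj : j < m + 2) (hij : i ≤ j) :
    (srt v)[i]'(by rw [srt_length]; exact hi) ≤ (srt v)[j]'(by rw [srt_length]; exact hj) := by
  rcases eq_or_lt_of_le hij with rfl | h
  · exact le_of_eq (by congr)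
  · exact List.pairwise_iff_getElem.1 (srt_sorted v) i j _ _ h

lemma srt_getD (k : ℕ) (hk : k < m + 2) :
    (srt v).getD k 0 = (srt v)[k]'(by rw [srt_length]; exact hk) := by
  rw [List.getD_eq_getElem?_getD, List.getElem?_eq_getElem]
  rfl

lemma mem_srt_iff {x : ℝ} : x ∈ srt v ↔ ∃ i, v i = x := by
  rw [List.Perm.mem_iff (srt_perm v), List.mem_ofFn]

end ListLemmas

section C
variable {m : ℕ} (v : Fin (m + 2) → ℝ)

-- C1: if the (m)-th entry is ≤ x then at most one entry exceeds x
lemma srt_countP_le_one {x : ℝ} (h : (srt v).getD m 0 ≤ x) :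
    (srt v).countP (fun y => decide (x < y)) ≤ 1 := by
  have hlen := srt_length v
  have hsplit : srt v = (srt v).take (m+1) ++ (srt v).drop (m+1) := (List.take_append_drop _ _).symm
  rw [srt_getD v m (by omega)] at h
  rw [hsplit, List.countP_append]
  have h1 : ((srt v).take (m+1)).countP (fun y => decide (x < y)) = 0 := by
    rw [List.countP_eq_zero]
    intro a ha
    rw [List.mem_take_iff_getElem] at ha
    obtain ⟨i, hi, rfl⟩ := ha
    simp only [decide_eq_true_eq]
    push_neg
    exact le_trans (srt_sorted_le v (by omega) (by omega) (by omega)) h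
  have h2 : ((srt v).drop (m+1)).countP (fun y => decide (x < y)) ≤ 1 := by
    calc _ ≤ ((srt v).drop (m+1)).length := List.countP_le_length
      _ = 1 := by rw [List.length_drop, hlen]; omega
  omega

-- C2: if at most one entry exceeds x then the m-th entry is ≤ x
lemma srt_le_of_countP {x : ℝ} (h : (srt v).countP (fun y => decide (x < y)) ≤ 1) :
    (srt v).getD m 0 ≤ x := by
  have hlen := srt_length v
  by_contra hc
  push_neg at hc
  rw [srt_getD v m (by omega)] at hc
  have hsub : ((srt v).drop m).countP (fun y => decide (x < y)) ≤
      (srt v).countP (fun y => decide (x < y)) := (List.drop_sublist _ _).countP_le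
  have hdlen : ((srt v).drop m).length = 2 := by rw [List.length_drop, hlen]; omega
  have hall : ((srt v).drop m).countP (fun y => decide (x < y)) = 2 := by
    rw [List.countP_eq_length.2, hdlen]
    intro a ha
    rw [List.mem_drop_iff_getElem] at ha
    obtain ⟨i, hi, rfl⟩ := ha
    simp only [decide_eq_true_eq]
    exact lt_of_lt_of_le hc (srt_sorted_le v (by omega) (by omega) (by omega))
  omega

-- C3: if x ≤ the m-th entry then at least two entries are ≥ x
lemma two_le_countP_of_le {x : ℝ} (h : x ≤ (srt v).getD m 0) :
    2 ≤ (srt v).countP (fun y => decide (x ≤ y)) := by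
  have hlen := srt_length v
  rw [srt_getD v m (by omega)] at h
  have hsub : ((srt v).drop m).countP (fun y => decide (x ≤ y)) ≤
      (srt v).countP (fun y => decide (x ≤ y)) := (List.drop_sublist _ _).countP_le
  have hdlen : ((srt v).drop m).length = 2 := by rw [List.length_drop, hlen]; omega
  have hall : ((srt v).drop m).countP (fun y => decide (x ≤ y)) = 2 := by
    rw [List.countP_eq_length.2, hdlen]
    intro a ha
    rw [List.mem_drop_iff_getElem] at ha
    obtain ⟨i, hi, rfl⟩ := ha
    simp only [decide_eq_true_eq]
    exact le_trans h (srt_sorted_le v (by omega) (by omega) (by omega))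
  omega

-- C4: if at least two entries are ≥ x then x ≤ the m-th entry
lemma le_srt_of_two_le_countP {x : ℝ} (h : 2 ≤ (srt v).countP (fun y => decide (x ≤ y))) :
    x ≤ (srt v).getD m 0 := by
  have hlen := srt_length v
  by_contra hc
  push_neg at hc
  rw [srt_getD v m (by omega)] at hc
  have hsplit : srt v = (srt v).take (m+1) ++ (srt v).drop (m+1) := (List.take_append_drop _ _).symm
  rw [hsplit, List.countP_append] at h
  have h1 : ((srt v).take (m+1)).countP (fun y => decide (x ≤ y)) = 0 := by
    rw [List.countP_eq_zero]
    intro a ha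
    rw [List.mem_take_iff_getElem] at ha
    obtain ⟨i, hi, rfl⟩ := ha
    simp only [decide_eq_true_eq]
    push_neg
    exact lt_of_le_of_lt (srt_sorted_le v (by omega) (by omega) (by omega)) hc
  have h2 : ((srt v).drop (m+1)).countP (fun y => decide (x ≤ y)) ≤ 1 := by
    calc _ ≤ ((srt v).drop (m+1)).length := List.countP_le_length
      _ = 1 := by rw [List.length_drop, hlen]; omega
  omega

-- max lemmas
lemma le_srt_last (i : Fin (m + 2)) : v i ≤ (srt v).getD (m + 1) 0 := by
  have hlen := srt_length v
  rw [srt_getD v (m+1) (by omega)]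
  have hmem : v i ∈ srt v := (mem_srt_iff v).2 ⟨i, rfl⟩
  rw [List.mem_iff_getElem] at hmem
  obtain ⟨j, hj, hji⟩ := hmem
  rw [← hji]
  exact srt_sorted_le v (by omega) (by omega) (by omega)

lemma exists_srt_last : ∃ i, v i = (srt v).getD (m + 1) 0 := by
  rw [srt_getD v (m+1) (by omega)]
  exact (mem_srt_iff v).1 (List.getElem_mem _)

lemma exists_srt_m : ∃ i, v i = (srt v).getD m 0 := by
  rw [srt_getD v m (by omega)]
  exact (mem_srt_iff v).1 (List.getElem_mem _)

lemma srt_m_le_last : (srt v).getD m 0 ≤ (srt v).getD (m + 1) 0 := by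
  rw [srt_getD v m (by omega), srt_getD v (m+1) (by omega)]
  exact srt_sorted_le v (by omega) (by omega) (by omega)

end C

section O
variable {m : ℕ}

lemma erase_nonempty (i : Fin (m + 2)) : (Finset.univ.erase i).Nonempty := by
  rw [← Finset.card_pos, Finset.card_erase_of_mem (Finset.mem_univ i), Finset.card_univ,
    Fintype.card_fin]
  omega

lemma ostat_top (v : Fin (m + 2) → ℝ) : ostat v (m + 2) = (srt v).getD (m + 1) 0 := rfl

lemma ostat_snd (v : Fin (m + 2) → ℝ) : ostat v (m + 1) = (srt v).getD m 0 := rfl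

lemma le_ostat_top (v : Fin (m + 2) → ℝ) (i : Fin (m + 2)) : v i ≤ ostat v (m + 2) :=
  le_srt_last v i

lemma ostat_snd_le_top (v : Fin (m + 2) → ℝ) : ostat v (m + 1) ≤ ostat v (m + 2) :=
  srt_m_le_last v

lemma ostat_snd_le (v : Fin (m + 2) → ℝ) {a : ℝ} (h : ∀ i : Fin (m + 2), i ≠ 0 → v i ≤ a) :
    ostat v (m + 1) ≤ a := by
  rw [ostat_snd]
  apply srt_le_of_countP
  rw [srt_countP]
  simp only [decide_eq_true_eq]
  by_contra hc
  push_neg at hc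
  obtain ⟨i, j, hij, hi, hj⟩ := exists_two_of_two_le_sum (fun k => a < v k) hc
  have hi0 : i = 0 := by
    by_contra h0
    exact absurd (h i h0) (not_le.2 hi)
  have hj0 : j = 0 := by
    by_contra h0
    exact absurd (h j h0) (not_le.2 hj)
  exact hij (hi0.trans hj0.symm)

lemma le_ostat_snd (v : Fin (m + 2) → ℝ) {x : ℝ} {i j : Fin (m + 2)} (hij : i ≠ j)
    (hi : x ≤ v i) (hj : x ≤ v j) : x ≤ ostat v (m + 1) := by
  rw [ostat_snd]
  apply le_srt_of_two_le_countP
  rw [srt_countP]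
  simp only [decide_eq_true_eq]
  exact two_le_sum_ite _ hij hi hj

lemma ostat_top_eq_sup' (v : Fin (m + 2) → ℝ) :
    ostat v (m + 2) = Finset.univ.sup' ⟨0, Finset.mem_univ 0⟩ v := by
  apply le_antisymm
  · obtain ⟨i, hi⟩ := exists_srt_last v
    rw [ostat_top, ← hi]
    exact Finset.le_sup' v (Finset.mem_univ i)
  · exact Finset.sup'_le _ _ fun i _ => le_ostat_top v i

lemma ostat_snd_eq_inf' (v : Fin (m + 2) → ℝ) :
    ostat v (m + 1) =
      Finset.univ.inf' ⟨0, Finset.mem_univ 0⟩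
        (fun i => (Finset.univ.erase i).sup' (erase_nonempty i) v) := by
  apply le_antisymm
  · apply Finset.le_inf'
    intro i _
    have h2 : 2 ≤ (srt v).countP (fun y => decide ((srt v).getD m 0 ≤ y)) :=
      two_le_countP_of_le v (le_refl _)
    rw [srt_countP] at h2
    simp only [decide_eq_true_eq] at h2
    obtain ⟨j, k, hjk, hj, hk⟩ := exists_two_of_two_le_sum _ h2
    rw [ostat_snd]
    by_cases hji : j = i
    · subst hji
      have hki : k ≠ j := fun h => hjk h.symm
      exact le_trans hk (Finset.le_sup' v (Finset.mem_erase.2 ⟨hki, Finset.mem_univ _⟩))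
    · exact le_trans hj (Finset.le_sup' v (Finset.mem_erase.2 ⟨hji, Finset.mem_univ _⟩))
  · obtain ⟨i0, hi0⟩ := exists_srt_last v
    refine Finset.inf'_le_of_le _ (Finset.mem_univ i0) ?_
    apply Finset.sup'_le
    intro j hj
    rw [Finset.mem_erase] at hj
    rw [ostat_snd]
    by_contra hgt
    push_neg at hgt
    have hvi0 : (srt v).getD m 0 < v i0 := by
      calc (srt v).getD m 0 < v j := hgt
        _ ≤ (srt v).getD (m+1) 0 := le_srt_last v j
        _ = v i0 := hi0.symm
    have h2 : 2 ≤ ∑ k, if (srt v).getD m 0 < v k then 1 else 0 :=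
      two_le_sum_ite _ hj.1 hgt hvi0
    have h1 : (srt v).countP (fun y => decide ((srt v).getD m 0 < y)) ≤ 1 :=
      srt_countP_le_one v (le_refl _)
    rw [srt_countP] at h1
    simp only [decide_eq_true_eq] at h1
    omega

lemma measurable_inf'_aux {δ α : Type*} [MeasurableSpace δ] [MeasurableSpace α]
    [SemilatticeInf α] [MeasurableInf₂ α] {ι : Type*} {s : Finset ι} (hs : s.Nonempty)
    {f : ι → δ → α} (hf : ∀ n ∈ s, Measurable (f n)) : Measurable (s.inf' hs f) :=
  Finset.inf'_induction hs _ (fun _f hf _g hg => hf.inf hg) fun n hn => hf n hn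

lemma measurable_ostat_top :
    Measurable (fun v : Fin (m + 2) → ℝ => ostat v (m + 2)) := by
  have : (fun v : Fin (m + 2) → ℝ => ostat v (m + 2)) =
      Finset.univ.sup' ⟨0, Finset.mem_univ 0⟩ (fun i (v : Fin (m + 2) → ℝ) => v i) := by
    funext v
    rw [ostat_top_eq_sup' v]
    exact (Finset.sup'_apply (C := fun _ : Fin (m + 2) → ℝ => ℝ) _
      (fun i (w : Fin (m + 2) → ℝ) => w i) v).symm
  rw [this]
  exact Finset.measurable_sup' _ fun i _ => measurable_pi_apply i

lemma measurable_ostat_snd :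
    Measurable (fun v : Fin (m + 2) → ℝ => ostat v (m + 1)) := by
  have : (fun v : Fin (m + 2) → ℝ => ostat v (m + 1)) =
      Finset.univ.inf' ⟨0, Finset.mem_univ 0⟩
        (fun i (v : Fin (m + 2) → ℝ) => (Finset.univ.erase i).sup' (erase_nonempty i) v) := by
    funext v
    rw [ostat_snd_eq_inf' v]
    exact (Finset.inf'_apply _ _ _).symm
  rw [this]
  refine measurable_inf'_aux _ fun i _ => ?_
  have h2 : (fun v : Fin (m + 2) → ℝ => (Finset.univ.erase i).sup' (erase_nonempty i) v) =
      (Finset.univ.erase i).sup' (erase_nonempty i) (fun j (v : Fin (m + 2) → ℝ) => v j) := by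
    funext v
    simp [Finset.sup'_apply]
  rw [h2]
  exact Finset.measurable_sup' _ fun j _ => measurable_pi_apply j

end O

section M
variable {μ : Measure ℝ} {f : ℝ → ℝ}

lemma mu_compl_null (hsupp : ∀ x, x ∉ Set.Icc (0:ℝ) 1 → f x = 0)
    (hμ : μ = MeasureTheory.volume.withDensity fun x => ENNReal.ofReal (f x)) :
    μ (Set.Icc (0:ℝ) 1)ᶜ = 0 := by
  rw [hμ, withDensity_apply _ measurableSet_Icc.compl]
  have h0 : ∫⁻ x in (Set.Icc (0:ℝ) 1)ᶜ, ENNReal.ofReal (f x) ∂MeasureTheory.volume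
      = ∫⁻ _ in (Set.Icc (0:ℝ) 1)ᶜ, (0:ENNReal) ∂MeasureTheory.volume :=
    setLIntegral_congr_fun measurableSet_Icc.compl
      (fun x hx => by rw [hsupp x hx, ENNReal.ofReal_zero])
  rw [h0]
  simp

lemma mu_Iio_one [IsProbabilityMeasure μ]
    (hsupp : ∀ x, x ∉ Set.Icc (0:ℝ) 1 → f x = 0)
    (hμ : μ = MeasureTheory.volume.withDensity fun x => ENNReal.ofReal (f x)) :
    μ (Set.Iio (1:ℝ)) = 1 := by
  have hs : μ {(1:ℝ)} = 0 := by
    rw [hμ, withDensity_apply _ (measurableSet_singleton 1),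
      Measure.restrict_eq_zero.mpr Real.volume_singleton, lintegral_zero_measure]
  have hIoi : μ (Set.Ioi (1:ℝ)) = 0 := by
    refine measure_mono_null ?_ (mu_compl_null hsupp hμ)
    intro x hx
    simp only [Set.mem_Ioi] at hx
    simp only [Set.mem_compl_iff, Set.mem_Icc]
    push_neg
    intro _
    linarith
  have hIci : μ (Set.Ici (1:ℝ)) = 0 := by
    refine measure_mono_null (fun x hx => ?_) (measure_union_null hs hIoi)
    rcases eq_or_lt_of_le (Set.mem_Ici.1 hx) with h | h
    · exact Or.inl h.symm
    · exact Or.inr h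
  rw [← Set.compl_Ici, measure_compl measurableSet_Ici (measure_ne_top μ _), measure_univ, hIci]
  simp

lemma exists_cdf_close [IsProbabilityMeasure μ]
    (hsupp : ∀ x, x ∉ Set.Icc (0:ℝ) 1 → f x = 0)
    (hμ : μ = MeasureTheory.volume.withDensity fun x => ENNReal.ofReal (f x))
    {c : ℝ} (hc0 : 0 ≤ c) (hc : c < 1) :
    ∃ x : ℝ, x < 1 ∧ c ≤ (μ (Set.Iic x)).toReal := by
  have hun : Set.Iio (1:ℝ) = ⋃ k : ℕ, Set.Iic (1 - 1/((k:ℝ)+1)) := by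
    ext x
    simp only [Set.mem_Iio, Set.mem_iUnion, Set.mem_Iic]
    constructor
    · intro hx
      obtain ⟨k, hk⟩ := exists_nat_one_div_lt (show 0 < 1 - x by linarith)
      exact ⟨k, by linarith⟩
    · rintro ⟨k, hk⟩
      have : 0 < 1/((k:ℝ)+1) := by positivity
      linarith
  have hmono : Monotone fun k : ℕ => Set.Iic (1 - 1/((k:ℝ)+1)) := by
    intro i j hij
    apply Set.Iic_subset_Iic.2
    have h1 : 1/((j:ℝ)+1) ≤ 1/((i:ℝ)+1) := by
      apply one_div_le_one_div_of_le (by positivity)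
      have : (i:ℝ) ≤ j := by exact_mod_cast hij
      linarith
    linarith
  have htend := tendsto_measure_iUnion_atTop (μ := μ) hmono
  rw [← hun, mu_Iio_one hsupp hμ] at htend
  have hlt : ENNReal.ofReal c < 1 := ENNReal.ofReal_lt_one.2 hc
  obtain ⟨k, hk⟩ := (htend.eventually_const_lt hlt).exists
  have hxlt : (1:ℝ) - 1/((k:ℝ)+1) < 1 := by
    have : 0 < 1/((k:ℝ)+1) := by positivity
    linarith
  refine ⟨1 - 1/((k:ℝ)+1), hxlt, ?_⟩
  have h2 := ENNReal.toReal_mono (measure_ne_top μ _) hk.le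
  rwa [ENNReal.toReal_ofReal hc0] at h2

lemma exists_interval_pos (hf : Continuous f)
    (hsupp : ∀ x, x ∉ Set.Icc (0:ℝ) 1 → f x = 0)
    (hμ : μ = MeasureTheory.volume.withDensity fun x => ENNReal.ofReal (f x))
    (hsup : sSup {x | 0 < f x} = 1) :
    ∀ b : ℝ, b < 1 → ∃ a : ℝ, b < a ∧ a < 1 ∧ 0 < μ (Set.Ioc b a) := by
  intro b hb
  have hne : {x | 0 < f x}.Nonempty := by
    by_contra h
    rw [Set.not_nonempty_iff_eq_empty] at h
    rw [h, Real.sSup_empty] at hsup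
    norm_num at hsup
  obtain ⟨x, hxS, hbx⟩ := exists_lt_of_lt_csSup hne (by rw [hsup]; exact hb)
  have hfx : 0 < f x := hxS
  have hx1 : x ≤ 1 := by
    by_contra h
    push_neg at h
    have : x ∉ Set.Icc (0:ℝ) 1 := by
      simp only [Set.mem_Icc]
      push_neg
      intro _
      linarith
    exact absurd (hsupp x this) (ne_of_gt hfx)
  have hev : ∀ᶠ y in nhds x, f x / 2 < f y :=
    (hf.tendsto x).eventually (eventually_gt_nhds (by linarith))
  obtain ⟨ε, hε, hball⟩ := Metric.eventually_nhds_iff.1 hev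
  set l := max b (x - ε/2) with hldef
  have hlx : l < x := max_lt hbx (by linarith)
  set a := (l + x)/2 with hadef
  have hla : l < a := by rw [hadef]; linarith
  have hax : a < x := by rw [hadef]; linarith
  refine ⟨a, lt_of_le_of_lt (le_max_left b (x - ε/2)) hla, lt_of_lt_of_le hax hx1, ?_⟩
  have hsub : Set.Ioc l a ⊆ Set.Ioc b a := Set.Ioc_subset_Ioc_left (le_max_left _ _)
  refine lt_of_lt_of_le ?_ (measure_mono hsub)
  rw [hμ, withDensity_apply _ measurableSet_Ioc]
  have hlow : ∀ y ∈ Set.Ioc l a, ENNReal.ofReal (f x / 2) ≤ ENNReal.ofReal (f y) := by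
    intro y hy
    apply ENNReal.ofReal_le_ofReal
    have hyl := hy.1
    have hya := hy.2
    have hlr : x - ε/2 ≤ l := le_max_right b (x - ε/2)
    have hdist : dist y x < ε := by
      rw [Real.dist_eq, abs_sub_lt_iff]
      constructor
      · linarith
      · linarith
    exact (hball hdist).le
  calc (0:ENNReal) < ENNReal.ofReal (f x / 2) * MeasureTheory.volume (Set.Ioc l a) := by
        apply ENNReal.mul_pos
        · simp only [ne_eq, ENNReal.ofReal_eq_zero, not_le]
          linarith
        · rw [Real.volume_Ioc]
          simp only [ne_eq, ENNReal.ofReal_eq_zero, not_le]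
          linarith
    _ = ∫⁻ _ in Set.Ioc l a, ENNReal.ofReal (f x / 2) ∂MeasureTheory.volume :=
        (setLIntegral_const _ _).symm
    _ ≤ ∫⁻ y in Set.Ioc l a, ENNReal.ofReal (f y) ∂MeasureTheory.volume :=
        setLIntegral_mono (by exact ENNReal.measurable_ofReal.comp hf.measurable) hlow

end M

/-- For a distribution on `[0,1]` with continuous density whose support has
supremum `1`, and a threshold `T < 1` with `F(T) < 1`, there are constants
`η > 0` and `K > 0` such that for every `n ≥ 2`,
`E[Y_{(n:n)} − Y_{(n-1:n)} | Y_{(n-1:n)} ≥ T] ≥ K (F(T) + η)^{n−1}`. -/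
theorem conditional_gap_lower_bound
    (μ : Measure ℝ) [IsProbabilityMeasure μ] (f : ℝ → ℝ)
    (hf : Continuous f) (hf0 : ∀ x, 0 ≤ f x)
    (hsupp : ∀ x, x ∉ Set.Icc (0 : ℝ) 1 → f x = 0)
    (hμ : μ = MeasureTheory.volume.withDensity fun x => ENNReal.ofReal (f x))
    (hsup : sSup {x | 0 < f x} = 1)
    (T : ℝ) (hT : T < 1) (hFT : (μ (Set.Iic T)).toReal < 1) :
    ∃ η : ℝ, 0 < η ∧ ∃ K : ℝ, 0 < K ∧ ∀ n : ℕ, 2 ≤ n →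
      K * ((μ (Set.Iic T)).toReal + η) ^ (n - 1) ≤
        (∫ v in {v : Fin n → ℝ | T ≤ ostat v (n - 1)},
            (ostat v n - ostat v (n - 1)) ∂(Measure.pi fun _ : Fin n => μ)) /
          ((Measure.pi fun _ : Fin n => μ) {v : Fin n → ℝ | T ≤ ostat v (n - 1)}).toReal := by
  set FT := (μ (Set.Iic T)).toReal with hFTdef
  have hFT0 : 0 ≤ FT := ENNReal.toReal_nonneg
  set c := (1 + FT)/2 with hcdef
  have hc0 : 0 ≤ c := by rw [hcdef]; linarith
  have hc1 : c < 1 := by rw [hcdef]; linarith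
  obtain ⟨x0, hx01, hx0F⟩ := exists_cdf_close hsupp hμ hc0 hc1
  set T0 := max T x0 with hT0def
  have hT01 : T0 < 1 := max_lt hT hx01
  have hTT0 : T ≤ T0 := le_max_left _ _
  have hcT0 : c ≤ (μ (Set.Iic T0)).toReal :=
    le_trans hx0F (ENNReal.toReal_mono (measure_ne_top μ _)
      (measure_mono (Set.Iic_subset_Iic.2 (le_max_right _ _))))
  obtain ⟨a, hT0a, ha1, hqm⟩ := exists_interval_pos hf hsupp hμ hsup T0 hT01
  set b := (a+1)/2 with hbdef
  have hab : a < b := by rw [hbdef]; linarith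
  have hb1 : b < 1 := by rw [hbdef]; linarith
  obtain ⟨a2, hba2, ha21, hqb'⟩ := exists_interval_pos hf hsupp hμ hsup b hb1
  have hqb : 0 < μ (Set.Ioc b 1) :=
    lt_of_lt_of_le hqb' (measure_mono (Set.Ioc_subset_Ioc_right ha21.le))
  set δ := b - a with hδdef
  have hδ : 0 < δ := by rw [hδdef]; linarith
  set p := (μ (Set.Iic T0)).toReal with hpdef
  have hp0 : 0 < p := lt_of_lt_of_le (by rw [hcdef]; linarith) hcT0
  have hp1 : p ≤ 1 := by
    have h := ENNReal.toReal_mono ENNReal.one_ne_top (prob_le_one (μ := μ) (s := Set.Iic T0))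
    simpa using h
  set q1 := (μ (Set.Ioc b 1)).toReal with hq1def
  set q2 := (μ (Set.Ioc T0 a)).toReal with hq2def
  have hq1' : 0 < q1 := ENNReal.toReal_pos hqb.ne' (measure_ne_top μ _)
  have hq2' : 0 < q2 := ENNReal.toReal_pos hqm.ne' (measure_ne_top μ _)
  set η := (1 - FT)/4 with hηdef
  have hη : 0 < η := by rw [hηdef]; linarith
  set K := δ * q1 * q2 / p with hKdef
  have hK : 0 < K := div_pos (by positivity) hp0
  refine ⟨η, hη, K, hK, ?_⟩
  intro n hn
  obtain ⟨m, rfl⟩ : ∃ m, n = m + 2 := ⟨n - 2, by omega⟩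
  simp only [show m + 2 - 1 = m + 1 from rfl]
  set s := FT + η with hsdef
  have hs0 : 0 ≤ s := by rw [hsdef]; linarith
  have hsp : s ≤ p := by
    have hsc : s < c := by rw [hsdef, hcdef, hηdef]; linarith
    linarith
  set P := Measure.pi (fun _ : Fin (m+2) => μ) with hPdef
  set S : Fin (m+2) → Set ℝ :=
    fun k => if k = 0 then Set.Ioc b 1 else if k = 1 then Set.Ioc T0 a else Set.Iic T0 with hSdef
  set B := Set.pi Set.univ S with hBdef
  set A := {v : Fin (m+2) → ℝ | T ≤ ostat v (m+1)} with hAdef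
  have hne01 : (0 : Fin (m+2)) ≠ 1 := by simp [Fin.ext_iff]
  have hmemB : ∀ v ∈ B, (b < v 0 ∧ v 0 ≤ 1) ∧ (T0 < v 1 ∧ v 1 ≤ a) ∧
      ∀ k : Fin (m+2), k ≠ 0 → k ≠ 1 → v k ≤ T0 := by
    intro v hv
    rw [hBdef, Set.mem_univ_pi] at hv
    have h0 := hv 0
    have h1 := hv 1
    rw [hSdef] at h0 h1
    simp only [if_pos rfl, if_neg hne01.symm, if_pos rfl] at h0 h1
    refine ⟨h0, h1, fun k hk0 hk1 => ?_⟩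
    have hk := hv k
    rw [hSdef] at hk
    simp only [if_neg hk0, if_neg hk1] at hk
    exact hk
  have hBsubA : B ⊆ A := by
    intro v hv
    obtain ⟨⟨h0b, h01⟩, ⟨h1T0, h1a⟩, hrest⟩ := hmemB v hv
    rw [hAdef]
    exact le_ostat_snd v hne01 (by linarith) (by linarith)
  have hgap : ∀ v ∈ B, δ ≤ ostat v (m+2) - ostat v (m+1) := by
    intro v hv
    obtain ⟨⟨h0b, h01⟩, ⟨h1T0, h1a⟩, hrest⟩ := hmemB v hv
    have htop : b ≤ ostat v (m+2) := le_trans h0b.le (le_ostat_top v 0)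
    have hsnd : ostat v (m+1) ≤ a := by
      apply ostat_snd_le v
      intro i hi
      by_cases hi1 : i = 1
      · subst hi1; exact h1a
      · exact le_trans (hrest i hi hi1) hT0a.le
    rw [hδdef]
    linarith
  have hSmeas : ∀ k, MeasurableSet (S k) := by
    intro k
    rw [hSdef]
    by_cases h0 : k = 0
    · simp only [if_pos h0]; exact measurableSet_Ioc
    by_cases h1 : k = 1
    · simp only [if_neg h0, if_pos h1]; exact measurableSet_Ioc
    · simp only [if_neg h0, if_neg h1]; exact measurableSet_Iic
  have hBmeas : MeasurableSet B := MeasurableSet.univ_pi hSmeas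
  have hPB : P B = μ (Set.Ioc b 1) * (μ (Set.Ioc T0 a) * μ (Set.Iic T0) ^ m) := by
    rw [hBdef, hPdef, Measure.pi_pi, Fin.prod_univ_succ, Fin.prod_univ_succ]
    have e0 : S 0 = Set.Ioc b 1 := by simp [hSdef]
    have e1 : S ((0 : Fin (m+1)).succ) = Set.Ioc T0 a := by
      have h : ((0 : Fin (m+1)).succ : Fin (m+2)) = 1 := Fin.succ_zero_eq_one
      rw [h]
      simp [hSdef, Ne.symm hne01]
    have e2 : ∀ i : Fin m, S (i.succ.succ) = Set.Iic T0 := by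
      intro i
      have h2 : (i.succ.succ : Fin (m+2)) ≠ 0 := Fin.succ_ne_zero _
      have h3 : (i.succ.succ : Fin (m+2)) ≠ 1 := by
        intro h
        rw [← Fin.succ_zero_eq_one] at h
        exact Fin.succ_ne_zero i ((Fin.succ_injective _) h)
      simp [hSdef, h2, h3]
    rw [e0, e1, Finset.prod_congr rfl (fun i _ => congrArg μ (e2 i)), Finset.prod_const,
      Finset.card_univ, Fintype.card_fin]
  have hpne : μ (Set.Iic T0) ≠ 0 := by
    intro h
    rw [hpdef, h] at hp0
    simp at hp0
  have hPBpos : 0 < P B := by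
    rw [hPB]
    exact ENNReal.mul_pos hqb.ne' (ENNReal.mul_pos hqm.ne' (pow_ne_zero m hpne)).ne'
  have hg : Measurable (fun v : Fin (m+2) → ℝ => ostat v (m+2) - ostat v (m+1)) :=
    measurable_ostat_top.sub measurable_ostat_snd
  have hAmeas : MeasurableSet A := by
    rw [hAdef]
    exact measurableSet_le measurable_const measurable_ostat_snd
  have haebound : ∀ᵐ v ∂P, ‖ostat v (m+2) - ostat v (m+1)‖ ≤ 1 := by
    have hnull : ∀ i : Fin (m+2), P (Function.eval i ⁻¹' (Set.Icc (0:ℝ) 1)ᶜ) = 0 := by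
      intro i
      rw [hPdef]
      exact Measure.pi_eval_preimage_null (μ := fun _ : Fin (m+2) => μ) (i := i) (mu_compl_null hsupp hμ)
    have hae : ∀ᵐ v ∂P, ∀ i, v i ∈ Set.Icc (0:ℝ) 1 := by
      rw [MeasureTheory.ae_iff]
      refine measure_mono_null (fun v hv => ?_) (measure_iUnion_null hnull)
      obtain ⟨i, hi⟩ := not_forall.1 hv
      exact Set.mem_iUnion.2 ⟨i, hi⟩
    filter_upwards [hae] with v hv
    obtain ⟨i1, htop⟩ := exists_srt_last v
    obtain ⟨i2, hsnd⟩ := exists_srt_m v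
    have h1 := Set.mem_Icc.1 (hv i1)
    have h2 := Set.mem_Icc.1 (hv i2)
    have e1 : ostat v (m+2) = v i1 := by rw [ostat_top]; exact htop.symm
    have e2 : ostat v (m+1) = v i2 := by rw [ostat_snd]; exact hsnd.symm
    rw [Real.norm_eq_abs, abs_le]
    constructor
    · rw [e1, e2]; linarith
    · rw [e1, e2]; linarith
  have hInt : Integrable (fun v : Fin (m+2) → ℝ => ostat v (m+2) - ostat v (m+1)) P :=
    Integrable.mono' (integrable_const 1) hg.aestronglyMeasurable haebound
  have h1 : δ * (P B).toReal ≤ ∫ v in B, (ostat v (m+2) - ostat v (m+1)) ∂P :=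
    setIntegral_ge_of_const_le_real hBmeas (measure_ne_top P B) hgap hInt.integrableOn
  have h2 : (∫ v in B, (ostat v (m+2) - ostat v (m+1)) ∂P) ≤
      ∫ v in A, (ostat v (m+2) - ostat v (m+1)) ∂P :=
    setIntegral_mono_set hInt.integrableOn
      (Filter.Eventually.of_forall fun v => sub_nonneg.2 (ostat_snd_le_top v))
      (HasSubset.Subset.eventuallyLE hBsubA)
  have hPApos : 0 < P A := lt_of_lt_of_le hPBpos (measure_mono hBsubA)
  have hden0 : 0 < (P A).toReal := ENNReal.toReal_pos hPApos.ne' (measure_ne_top _ _)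
  have hden1 : (P A).toReal ≤ 1 := by
    have h := ENNReal.toReal_mono ENNReal.one_ne_top (prob_le_one (μ := P) (s := A))
    simpa using h
  have hKs : K * s ^ (m+1) ≤ δ * (P B).toReal := by
    have hPBr : (P B).toReal = q1 * (q2 * p^m) := by
      rw [hPB, ENNReal.toReal_mul, ENNReal.toReal_mul, ENNReal.toReal_pow]
    rw [hPBr, hKdef, div_mul_eq_mul_div, div_le_iff₀ hp0]
    have hpow : s^(m+1) ≤ p^(m+1) := pow_le_pow_left₀ hs0 hsp _
    calc δ*q1*q2*s^(m+1) ≤ δ*q1*q2*p^(m+1) := by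
          apply mul_le_mul_of_nonneg_left hpow (by positivity)
      _ = δ*(q1*(q2*p^m))*p := by rw [pow_succ]; ring
  have h3 : K * s^(m+1) ≤ ∫ v in A, (ostat v (m+2) - ostat v (m+1)) ∂P :=
    le_trans hKs (le_trans h1 h2)
  have hfinal : (∫ v in A, (ostat v (m+2) - ostat v (m+1)) ∂P) ≤
      (∫ v in A, (ostat v (m+2) - ostat v (m+1)) ∂P) / (P A).toReal := by
    rw [le_div_iff₀ hden0]
    have hnn : 0 ≤ ∫ v in A, (ostat v (m+2) - ostat v (m+1)) ∂P :=
      le_trans (by positivity) h3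
    exact mul_le_of_le_one_right hnn hden1
  exact le_trans h3 hfinal
end

section
/- Let X and Y be independent random variables, each uniformly distributed on the four-element set {1, 5, 9, 13}. Then E[X | X > 2Y] = 10 and E[X | X > 3Y] = 9; in particular, E[X | X > 3Y] < E[X | X > 2Y], so the function β ↦ E[X | X > βY] is not monotonically increasing in β. -/
open MeasureTheory

lemma my_smul_prod (c : ENNReal) (μ ν : Measure ℝ) [SFinite μ] [SFinite ν] :
    (c • μ).prod ν = c • μ.prod ν := by
  ext s hs
  rw [Measure.prod_apply hs, Measure.smul_apply, Measure.prod_apply hs,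
    lintegral_smul_measure, smul_eq_mul]

lemma my_prod_smul (c : ENNReal) (hc : c ≠ ⊤) (μ ν : Measure ℝ) [SFinite μ] [SFinite ν] :
    μ.prod (c • ν) = c • μ.prod ν := by
  ext s hs
  rw [Measure.prod_apply hs, Measure.smul_apply, Measure.prod_apply hs, smul_eq_mul,
    ← lintegral_const_mul' _ _ hc]
  simp

lemma intg_dirac (a : ℝ × ℝ) (s : Set (ℝ × ℝ)) :
    Integrable (fun p : ℝ × ℝ => p.1) ((Measure.dirac a).restrict s) := by
  refine Integrable.restrict ?_
  refine ⟨measurable_fst.aestronglyMeasurable, ?_⟩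
  rw [HasFiniteIntegral, lintegral_dirac]
  exact ENNReal.coe_lt_top

/-- The uniform distribution on the four-element set `{1, 5, 9, 13}`. -/
noncomputable def unifFour : Measure ℝ :=
  (4 : ENNReal)⁻¹ •
    (Measure.dirac 1 + Measure.dirac 5 + Measure.dirac 9 + Measure.dirac 13)

lemma unifFour_prod : unifFour.prod unifFour = (16 : ENNReal)⁻¹ •
    (Measure.dirac ((1:ℝ),(1:ℝ)) + Measure.dirac (1,5) + Measure.dirac (1,9) + Measure.dirac (1,13)
    + (Measure.dirac (5,1) + Measure.dirac (5,5) + Measure.dirac (5,9) + Measure.dirac (5,13))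
    + (Measure.dirac (9,1) + Measure.dirac (9,5) + Measure.dirac (9,9) + Measure.dirac (9,13))
    + (Measure.dirac (13,1) + Measure.dirac (13,5) + Measure.dirac (13,9) + Measure.dirac (13,13))) := by
  rw [unifFour, my_smul_prod, my_prod_smul _ (by norm_num), smul_smul]
  have h16 : (4:ENNReal)⁻¹ * 4⁻¹ = 16⁻¹ := by
    rw [← ENNReal.mul_inv (by norm_num) (by norm_num)]; norm_num
  rw [h16]
  congr 1
  simp only [Measure.prod_add, Measure.add_prod, Measure.dirac_prod_dirac]
  abel

/-- For `X, Y` independent and uniform on `{1,5,9,13}`: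
`E[X | X > 2Y] = 10` and `E[X | X > 3Y] = 9`, so a stronger biased filter
yields a *smaller* conditional expectation; `β ↦ E[X | X > βY]` is not
monotonically increasing. -/
theorem conditional_expectation_nonmonotone :
    (∫ p in {p : ℝ × ℝ | 2 * p.2 < p.1}, p.1 ∂(unifFour.prod unifFour)) /
        ((unifFour.prod unifFour) {p : ℝ × ℝ | 2 * p.2 < p.1}).toReal = 10 ∧
    (∫ p in {p : ℝ × ℝ | 3 * p.2 < p.1}, p.1 ∂(unifFour.prod unifFour)) /
        ((unifFour.prod unifFour) {p : ℝ × ℝ | 3 * p.2 < p.1}).toReal = 9 ∧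
    (∫ p in {p : ℝ × ℝ | 3 * p.2 < p.1}, p.1 ∂(unifFour.prod unifFour)) /
        ((unifFour.prod unifFour) {p : ℝ × ℝ | 3 * p.2 < p.1}).toReal <
      (∫ p in {p : ℝ × ℝ | 2 * p.2 < p.1}, p.1 ∂(unifFour.prod unifFour)) /
        ((unifFour.prod unifFour) {p : ℝ × ℝ | 2 * p.2 < p.1}).toReal := by
  have i2 : (∫ p in {p : ℝ × ℝ | 2 * p.2 < p.1}, p.1 ∂(unifFour.prod unifFour)) = 40/16 := by
    rw [unifFour_prod, Measure.restrict_smul, integral_smul_measure]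
    simp only [Measure.restrict_add, integral_add_measure, intg_dirac,
      integrable_add_measure, and_self, true_and, and_true]
    rw [setIntegral_dirac, setIntegral_dirac, setIntegral_dirac, setIntegral_dirac,
      setIntegral_dirac, setIntegral_dirac, setIntegral_dirac, setIntegral_dirac,
      setIntegral_dirac, setIntegral_dirac, setIntegral_dirac, setIntegral_dirac,
      setIntegral_dirac, setIntegral_dirac, setIntegral_dirac, setIntegral_dirac]
    simp only [Set.mem_setOf_eq]
    norm_num
  have i3 : (∫ p in {p : ℝ × ℝ | 3 * p.2 < p.1}, p.1 ∂(unifFour.prod unifFour)) = 27/16 := by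
    rw [unifFour_prod, Measure.restrict_smul, integral_smul_measure]
    simp only [Measure.restrict_add, integral_add_measure, intg_dirac,
      integrable_add_measure, and_self, true_and, and_true]
    rw [setIntegral_dirac, setIntegral_dirac, setIntegral_dirac, setIntegral_dirac,
      setIntegral_dirac, setIntegral_dirac, setIntegral_dirac, setIntegral_dirac,
      setIntegral_dirac, setIntegral_dirac, setIntegral_dirac, setIntegral_dirac,
      setIntegral_dirac, setIntegral_dirac, setIntegral_dirac, setIntegral_dirac]
    simp only [Set.mem_setOf_eq]
    norm_num
  have m2 : ((unifFour.prod unifFour) {p : ℝ × ℝ | 2 * p.2 < p.1}).toReal = 4/16 := by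
    rw [unifFour_prod]
    simp only [Measure.smul_apply, Measure.coe_add, Pi.add_apply, Measure.dirac_apply,
      Set.indicator_apply, Set.mem_setOf_eq, Pi.one_apply]
    norm_num
  have m3 : ((unifFour.prod unifFour) {p : ℝ × ℝ | 3 * p.2 < p.1}).toReal = 3/16 := by
    rw [unifFour_prod]
    simp only [Measure.smul_apply, Measure.coe_add, Pi.add_apply, Measure.dirac_apply,
      Set.indicator_apply, Set.mem_setOf_eq, Pi.one_apply]
    norm_num
  rw [i2, i3, m2, m3]
  norm_num
end

section
/- Fix δ > 0 and let m ≥ 1 be an integer. Then ∫₁^∞ x · (1+δ)·m·(1 − x^{-(1+δ)})^{m−1}·x^{-(2+δ)} dx = Γ(m+1)·Γ(δ/(1+δ)) / Γ(m + δ/(1+δ)). Moreover this quantity is at least Γ(δ/(1+δ))·m^{1/(1+δ)}, and there exist a > 0 and m₀ such that for all m ≥ m₀ it is at most (1 + a(ln m)²/m)·Γ(δ/(1+δ))·m^{1/(1+δ)}. -/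
open MeasureTheory Real

lemma real_beta_aux {u v : ℝ} (hu : 0 < u) (hv : 0 < v) :
    ∫ x in (0:ℝ)..1, x ^ (u - 1) * (1 - x) ^ (v - 1)
      = Real.Gamma u * Real.Gamma v / Real.Gamma (u + v) := by
  have key : Complex.Gamma u * Complex.Gamma v
      = Complex.Gamma (u + v) * Complex.betaIntegral u v := by
    have := Complex.Gamma_mul_Gamma_eq_betaIntegral
      (s := (u : ℂ)) (t := (v : ℂ)) (by simpa using hu) (by simpa using hv)
    simpa using this
  have hbeta : Complex.betaIntegral u v
      = ((∫ x in (0:ℝ)..1, x ^ (u - 1) * (1 - x) ^ (v - 1) : ℝ) : ℂ) := by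
    rw [Complex.betaIntegral, ← intervalIntegral.integral_ofReal]
    refine intervalIntegral.integral_congr fun x hx => ?_
    rw [Set.uIcc_of_le (by norm_num : (0:ℝ) ≤ 1)] at hx
    rw [Complex.ofReal_mul, Complex.ofReal_cpow hx.1,
      Complex.ofReal_cpow (by linarith [hx.2] : (0:ℝ) ≤ 1 - x)]
    push_cast
    ring
  rw [hbeta] at key
  have h3 : ((u : ℂ) + v) = ((u + v : ℝ) : ℂ) := by push_cast; ring
  rw [h3, Complex.Gamma_ofReal, Complex.Gamma_ofReal, Complex.Gamma_ofReal,
    ← Complex.ofReal_mul, ← Complex.ofReal_mul] at key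
  have key' : Real.Gamma u * Real.Gamma v
      = Real.Gamma (u + v) * ∫ x in (0:ℝ)..1, x ^ (u - 1) * (1 - x) ^ (v - 1) :=
    Complex.ofReal_inj.1 key
  have hpos : Real.Gamma (u + v) ≠ 0 := (Real.Gamma_pos_of_pos (by linarith)).ne'
  field_simp
  linarith [key']

lemma power_law_integral_eq (δ : ℝ) (hδ : 0 < δ) (m : ℕ) (hm : 1 ≤ m) :
    (∫ x in Set.Ioi (1 : ℝ),
        x * ((1 + δ) * m * (1 - x ^ (-(1 + δ))) ^ (m - 1) * x ^ (-(2 + δ)))) =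
      Real.Gamma ((m : ℝ) + 1) * Real.Gamma (δ / (1 + δ)) /
        Real.Gamma ((m : ℝ) + δ / (1 + δ)) := by
  have h1δ : (0:ℝ) < 1 + δ := by linarith
  set c : ℝ := 1 / (1 + δ) with hc
  have hc0 : 0 < c := by positivity
  have hc1 : c < 1 := by rw [hc, div_lt_one h1δ]; linarith
  have hcc : (1 + δ) * c = 1 := by rw [hc]; field_simp
  have hs : δ / (1 + δ) = 1 - c := by rw [hc]; field_simp; ring
  have hmR : (1:ℝ) ≤ (m:ℝ) := by exact_mod_cast hm
  have hm0 : (m:ℝ) ≠ 0 := by positivity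
  set f : ℝ → ℝ := fun x => x ^ (-(1 + δ)) with hf
  have hneg : -(1 + δ) < 0 := by linarith
  have himg : f '' Set.Ioi 1 = Set.Ioo 0 1 := by
    ext u
    simp only [Set.mem_image, Set.mem_Ioi, Set.mem_Ioo]
    constructor
    · rintro ⟨x, hx, rfl⟩
      exact ⟨Real.rpow_pos_of_pos (lt_trans zero_lt_one hx) _,
        Real.rpow_lt_one_of_one_lt_of_neg hx hneg⟩
    · rintro ⟨hu0, hu1⟩
      refine ⟨u ^ (-c), ?_, ?_⟩
      · exact (Real.one_lt_rpow_iff_of_pos hu0).2 (Or.inr ⟨hu1, by linarith⟩)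
      · show (u ^ (-c)) ^ (-(1 + δ)) = u
        rw [← Real.rpow_mul hu0.le, neg_mul_neg, mul_comm, hcc, Real.rpow_one]
  have hinj : Set.InjOn f (Set.Ioi 1) := by
    intro x hx y hy hxy
    have hx0 : (0:ℝ) < x := lt_trans zero_lt_one hx
    have hy0 : (0:ℝ) < y := lt_trans zero_lt_one hy
    have h2 := congrArg (fun t : ℝ => t ^ (-c)) hxy
    simp only [hf] at h2
    rwa [← Real.rpow_mul hx0.le, ← Real.rpow_mul hy0.le, neg_mul_neg, hcc,
      Real.rpow_one, Real.rpow_one] at h2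
  have hderiv : ∀ x ∈ Set.Ioi (1:ℝ),
      HasDerivWithinAt f (-(1 + δ) * x ^ (-(1 + δ) - 1)) (Set.Ioi 1) x := by
    intro x hx
    have hx0 : x ≠ 0 := by
      have : (0:ℝ) < x := lt_trans zero_lt_one hx
      exact this.ne'
    exact (Real.hasDerivAt_rpow_const (Or.inl hx0)).hasDerivWithinAt
  have hcov := integral_image_eq_integral_abs_deriv_smul measurableSet_Ioi hderiv hinj
      (fun u : ℝ => (m:ℝ) * u ^ (-c) * (1 - u) ^ (m - 1))
  rw [himg] at hcov
  have hrhs : (∫ x in Set.Ioi (1:ℝ),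
        |(-(1 + δ) * x ^ (-(1 + δ) - 1))| •
          ((m:ℝ) * (f x) ^ (-c) * (1 - f x) ^ (m - 1)))
      = ∫ x in Set.Ioi (1:ℝ),
        x * ((1 + δ) * m * (1 - x ^ (-(1 + δ))) ^ (m - 1) * x ^ (-(2 + δ))) := by
    refine setIntegral_congr_fun measurableSet_Ioi fun x hx => ?_
    have hx0 : (0:ℝ) < x := lt_trans zero_lt_one hx
    have he : -(1 + δ) - 1 = -(2 + δ) := by ring
    have habs : |(-(1 + δ) * x ^ (-(1 + δ) - 1))| = (1 + δ) * x ^ (-(2 + δ)) := by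
      rw [he, abs_mul, abs_neg, abs_of_pos h1δ,
        abs_of_pos (Real.rpow_pos_of_pos hx0 _)]
    have hxc : (f x) ^ (-c) = x := by
      show (x ^ (-(1 + δ))) ^ (-c) = x
      rw [← Real.rpow_mul hx0.le, neg_mul_neg, hcc, Real.rpow_one]
    rw [smul_eq_mul, habs, hxc]
    show (1 + δ) * x ^ (-(2 + δ)) * ((m:ℝ) * x * (1 - x ^ (-(1 + δ))) ^ (m - 1))
      = x * ((1 + δ) * ↑m * (1 - x ^ (-(1 + δ))) ^ (m - 1) * x ^ (-(2 + δ)))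
    ring
  rw [hrhs] at hcov
  rw [← hcov]
  have hIoo : (∫ u in Set.Ioo (0:ℝ) 1, (m:ℝ) * u ^ (-c) * (1 - u) ^ (m - 1))
      = (m:ℝ) * ∫ u in (0:ℝ)..1, u ^ ((1 - c) - 1) * (1 - u) ^ ((m:ℝ) - 1) := by
    rw [← MeasureTheory.integral_Ioc_eq_integral_Ioo,
      ← intervalIntegral.integral_of_le zero_le_one,
      ← intervalIntegral.integral_const_mul]
    refine intervalIntegral.integral_congr fun u hu => ?_
    have h1 : u ^ ((1 - c) - 1) = u ^ (-c) := by norm_num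
    have h2 : (1 - u) ^ ((m:ℝ) - 1) = (1 - u) ^ (m - 1) := by
      rw [show (m:ℝ) - 1 = ((m - 1 : ℕ) : ℝ) by
          rw [Nat.cast_sub hm]; norm_num,
        Real.rpow_natCast]
    rw [h1, h2]; ring
  rw [hIoo, real_beta_aux (by linarith : (0:ℝ) < 1 - c) (by positivity : (0:ℝ) < (m:ℝ))]
  rw [hs, Real.Gamma_add_one hm0, add_comm (1 - c) ((m:ℝ))]
  ring

lemma gautschi_low {t : ℝ} (ht0 : 0 < t) (ht1 : t < 1) {x : ℝ} (hx : 1 ≤ x) :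
    x ^ (1 - t) * Real.Gamma (x + t) ≤ Real.Gamma (x + 1) := by
  have hx0 : (0:ℝ) < x := lt_of_lt_of_le one_pos hx
  have key := Real.Gamma_mul_add_mul_le_rpow_Gamma_mul_rpow_Gamma
    (s := x) (t := x + 1) (a := 1 - t) (b := t) hx0 (by linarith) (by linarith) ht0
    (by ring)
  rw [show (1 - t) * x + t * (x + 1) = x + t by ring] at key
  calc x ^ (1 - t) * Real.Gamma (x + t)
      ≤ x ^ (1 - t) * (Real.Gamma x ^ (1 - t) * Real.Gamma (x + 1) ^ t) := by
        exact mul_le_mul_of_nonneg_left key (Real.rpow_nonneg hx0.le _)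
    _ = (x * Real.Gamma x) ^ (1 - t) * Real.Gamma (x + 1) ^ t := by
        rw [Real.mul_rpow hx0.le (Real.Gamma_pos_of_pos hx0).le]; ring
    _ = Real.Gamma (x + 1) ^ (1 - t) * Real.Gamma (x + 1) ^ t := by
        rw [← Real.Gamma_add_one hx0.ne']
    _ = Real.Gamma (x + 1) := by
        rw [← Real.rpow_add (Real.Gamma_pos_of_pos (by linarith)), sub_add_cancel,
          Real.rpow_one]

lemma gautschi_up {t : ℝ} (ht0 : 0 < t) (ht1 : t < 1) {x : ℝ} (hx : 1 ≤ x) :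
    Real.Gamma (x + 1) ≤ (x + t) ^ (1 - t) * Real.Gamma (x + t) := by
  have hx0 : (0:ℝ) < x := lt_of_lt_of_le one_pos hx
  have hxt : (0:ℝ) < x + t := by linarith
  have key := Real.Gamma_mul_add_mul_le_rpow_Gamma_mul_rpow_Gamma
    (s := x + t) (t := x + t + 1) (a := t) (b := 1 - t) hxt (by linarith) ht0
    (by linarith) (by ring)
  rw [show t * (x + t) + (1 - t) * (x + t + 1) = x + 1 by ring] at key
  calc Real.Gamma (x + 1)
      ≤ Real.Gamma (x + t) ^ t * Real.Gamma (x + t + 1) ^ (1 - t) := key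
    _ = Real.Gamma (x + t) ^ t * ((x + t) * Real.Gamma (x + t)) ^ (1 - t) := by
        rw [Real.Gamma_add_one hxt.ne']
    _ = (x + t) ^ (1 - t) *
        (Real.Gamma (x + t) ^ t * Real.Gamma (x + t) ^ (1 - t)) := by
        rw [Real.mul_rpow hxt.le (Real.Gamma_pos_of_pos hxt).le]; ring
    _ = (x + t) ^ (1 - t) * Real.Gamma (x + t) := by
        rw [← Real.rpow_add (Real.Gamma_pos_of_pos hxt), add_sub_cancel, Real.rpow_one]

/-- The expected maximum of `m` i.i.d. power law samples:
`E[Z_{(m:m)}] = Γ(m+1)Γ(δ/(1+δ))/Γ(m + δ/(1+δ))`, which is at least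
`Γ(δ/(1+δ)) m^{1/(1+δ)}` and asymptotically at most
`(1 + O((ln m)²/m))·Γ(δ/(1+δ)) m^{1/(1+δ)}`. -/
theorem expected_max_power_law (δ : ℝ) (hδ : 0 < δ) :
    (∀ m : ℕ, 1 ≤ m →
      (∫ x in Set.Ioi (1 : ℝ),
          x * ((1 + δ) * m * (1 - x ^ (-(1 + δ))) ^ (m - 1) * x ^ (-(2 + δ)))) =
        Real.Gamma ((m : ℝ) + 1) * Real.Gamma (δ / (1 + δ)) /
          Real.Gamma ((m : ℝ) + δ / (1 + δ))) ∧
    (∀ m : ℕ, 1 ≤ m →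
      Real.Gamma (δ / (1 + δ)) * (m : ℝ) ^ (1 / (1 + δ)) ≤
        ∫ x in Set.Ioi (1 : ℝ),
          x * ((1 + δ) * m * (1 - x ^ (-(1 + δ))) ^ (m - 1) * x ^ (-(2 + δ)))) ∧
    ∃ a : ℝ, 0 < a ∧ ∃ m₀ : ℕ, ∀ m : ℕ, m₀ ≤ m →
      (∫ x in Set.Ioi (1 : ℝ),
          x * ((1 + δ) * m * (1 - x ^ (-(1 + δ))) ^ (m - 1) * x ^ (-(2 + δ)))) ≤
        (1 + a * (Real.log m) ^ 2 / m) *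
          (Real.Gamma (δ / (1 + δ)) * (m : ℝ) ^ (1 / (1 + δ))) := by
  have h1δ : (0:ℝ) < 1 + δ := by linarith
  set t : ℝ := δ / (1 + δ) with htdef
  have ht0 : 0 < t := by positivity
  have ht1 : t < 1 := by rw [htdef, div_lt_one h1δ]; linarith
  have htc : 1 - t = 1 / (1 + δ) := by rw [htdef]; field_simp; ring
  have hΓt : 0 < Real.Gamma t := Real.Gamma_pos_of_pos ht0
  refine ⟨fun m hm => power_law_integral_eq δ hδ m hm, fun m hm => ?_, 1, one_pos, 3,
    fun m hm => ?_⟩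
  · -- lower bound
    have hmR : (1:ℝ) ≤ (m:ℝ) := by exact_mod_cast hm
    have hmt : (0:ℝ) < (m:ℝ) + t := by linarith
    rw [power_law_integral_eq δ hδ m hm, le_div_iff₀ (Real.Gamma_pos_of_pos hmt)]
    have key := gautschi_low ht0 ht1 hmR
    rw [htc] at key
    have h2 := mul_le_mul_of_nonneg_left key hΓt.le
    calc Real.Gamma t * (m:ℝ) ^ (1 / (1 + δ)) * Real.Gamma ((m:ℝ) + t)
        = Real.Gamma t * ((m:ℝ) ^ (1 / (1 + δ)) * Real.Gamma ((m:ℝ) + t)) := by ring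
      _ ≤ Real.Gamma t * Real.Gamma ((m:ℝ) + 1) := h2
      _ = Real.Gamma ((m:ℝ) + 1) * Real.Gamma t := by ring
  · -- upper bound, m ≥ 3
    have hm1 : 1 ≤ m := by omega
    have hmR : (1:ℝ) ≤ (m:ℝ) := by exact_mod_cast hm1
    have hm3 : (3:ℝ) ≤ (m:ℝ) := by exact_mod_cast hm
    have hmpos : (0:ℝ) < (m:ℝ) := by linarith
    have hmt : (0:ℝ) < (m:ℝ) + t := by linarith
    have hΓmt : 0 < Real.Gamma ((m:ℝ) + t) := Real.Gamma_pos_of_pos hmt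
    rw [power_law_integral_eq δ hδ m hm1, div_le_iff₀ hΓmt]
    -- log m ≥ 1
    have hlog : 1 ≤ Real.log (m:ℝ) := by
      have h := Real.exp_one_lt_d9
      have : Real.exp 1 < (m:ℝ) := by linarith
      exact ((Real.lt_log_iff_exp_lt hmpos).2 this).le
    have hlog2 : 1 ≤ (Real.log (m:ℝ)) ^ 2 := by nlinarith
    have key := gautschi_up ht0 ht1 hmR
    have step1 : ((m:ℝ) + t) ^ (1 - t) ≤ ((m:ℝ) + 1) ^ (1 - t) :=
      Real.rpow_le_rpow hmt.le (by linarith) (by linarith)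
    have step2 : ((m:ℝ) + 1) ^ (1 - t)
        ≤ (1 + (Real.log (m:ℝ)) ^ 2 / (m:ℝ)) * (m:ℝ) ^ (1 - t) := by
      have he : (m:ℝ) + 1 = (m:ℝ) * (1 + 1 / (m:ℝ)) := by field_simp
      have h11 : (1:ℝ) ≤ 1 + 1 / (m:ℝ) := by
        have : (0:ℝ) < 1 / (m:ℝ) := by positivity
        linarith
      calc ((m:ℝ) + 1) ^ (1 - t)
          = (m:ℝ) ^ (1 - t) * (1 + 1 / (m:ℝ)) ^ (1 - t) := by
            rw [he, Real.mul_rpow hmpos.le (by linarith)]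
        _ ≤ (m:ℝ) ^ (1 - t) * (1 + 1 / (m:ℝ)) ^ (1:ℝ) := by
            exact mul_le_mul_of_nonneg_left
              (Real.rpow_le_rpow_of_exponent_le h11 (by linarith))
              (Real.rpow_nonneg hmpos.le _)
        _ = (m:ℝ) ^ (1 - t) * (1 + 1 / (m:ℝ)) := by rw [Real.rpow_one]
        _ ≤ (m:ℝ) ^ (1 - t) * (1 + (Real.log (m:ℝ)) ^ 2 / (m:ℝ)) := by
            refine mul_le_mul_of_nonneg_left ?_ (Real.rpow_nonneg hmpos.le _)
            have h12 : 1 / (m:ℝ) ≤ (Real.log (m:ℝ)) ^ 2 / (m:ℝ) :=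
              div_le_div_of_nonneg_right hlog2 hmpos.le
            linarith
        _ = (1 + (Real.log (m:ℝ)) ^ 2 / (m:ℝ)) * (m:ℝ) ^ (1 - t) := by ring
    calc Real.Gamma ((m:ℝ) + 1) * Real.Gamma t
        ≤ (((m:ℝ) + t) ^ (1 - t) * Real.Gamma ((m:ℝ) + t)) * Real.Gamma t :=
          mul_le_mul_of_nonneg_right key hΓt.le
      _ = ((m:ℝ) + t) ^ (1 - t) * Real.Gamma t * Real.Gamma ((m:ℝ) + t) := by ring
      _ ≤ ((1 + (Real.log (m:ℝ)) ^ 2 / (m:ℝ)) * (m:ℝ) ^ (1 - t)) * Real.Gamma t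
            * Real.Gamma ((m:ℝ) + t) := by
          refine mul_le_mul_of_nonneg_right (mul_le_mul_of_nonneg_right
            (le_trans step1 step2) hΓt.le) hΓmt.le
      _ = (1 + 1 * (Real.log (m:ℝ)) ^ 2 / (m:ℝ)) *
            (Real.Gamma t * (m:ℝ) ^ (1 / (1 + δ))) * Real.Gamma ((m:ℝ) + t) := by
          rw [htc]; ring
end

section
/- Fix δ > 0 and integers m ≥ 2 and k with 1 ≤ k ≤ m − 1. Then ∫₁^∞ x·f_{(m−k:m)}(x) dx = (1 − 1/(k(1+δ)))·∫₁^∞ x·f_{(m−k+1:m)}(x) dx, where f_{(p:m)}(x) = (1+δ)(m−p+1)·C(m,p−1)·(1−x^{-(1+δ)})^{p−1}·(x^{-(1+δ)})^{m−p+1}·x^{-1} for x ≥ 1. That is, the expectation of the (k+1)-st largest of m i.i.d. power-law samples equals (1 − 1/(k(1+δ))) times the expectation of the k-th largest. -/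
open MeasureTheory Real Finset

private lemma contOn_g (a : ℝ) (q r : ℕ) :
    ContinuousOn (fun x : ℝ => (1 - x ^ (-a)) ^ q * (x ^ (-a)) ^ r) (Set.Ioi 1) := by
  have h : ContinuousOn (fun x : ℝ => x ^ (-a)) (Set.Ioi 1) := fun x hx =>
    (Real.continuousAt_rpow_const x _ (Or.inl (by
      have : (1:ℝ) < x := hx
      linarith))).continuousWithinAt
  exact (((continuousOn_const.sub h).pow q).mul (h.pow r))

private lemma g_integrable (a : ℝ) (ha : 1 < a) (q r : ℕ) (hr : 1 ≤ r) :
    IntegrableOn (fun x : ℝ => (1 - x ^ (-a)) ^ q * (x ^ (-a)) ^ r) (Set.Ioi 1) := by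
  have ha0 : (0:ℝ) < a := by linarith
  have hexp : -(a * r) < -1 := by
    have : (1:ℝ) ≤ r := by exact_mod_cast hr
    nlinarith
  have hint : IntegrableOn (fun x : ℝ => x ^ (-(a * r))) (Set.Ioi 1) :=
    integrableOn_Ioi_rpow_of_lt hexp one_pos
  refine hint.integrable.mono ((contOn_g a q r).aestronglyMeasurable measurableSet_Ioi) ?_
  rw [ae_restrict_iff' measurableSet_Ioi]
  filter_upwards with x hx
  have hx1 : (1:ℝ) < x := hx
  have hx0 : (0:ℝ) < x := by linarith
  have hu0 : 0 ≤ x ^ (-a) := Real.rpow_nonneg hx0.le _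
  have hu1 : x ^ (-a) ≤ 1 :=
    Real.rpow_le_one_of_one_le_of_nonpos hx1.le (by linarith)
  have h1 : (0:ℝ) ≤ 1 - x ^ (-a) := by linarith
  have h2 : (1 - x ^ (-a)) ^ q ≤ 1 := pow_le_one₀ h1 (by linarith)
  have hre : (x ^ (-a)) ^ r = x ^ (-(a * r)) := by
    rw [← Real.rpow_natCast (x ^ (-a)) r, ← Real.rpow_mul hx0.le]
    ring_nf
  rw [Real.norm_eq_abs, abs_of_nonneg (by positivity), Real.norm_eq_abs,
    abs_of_nonneg (Real.rpow_nonneg hx0.le _), ← hre]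
  calc (1 - x ^ (-a)) ^ q * (x ^ (-a)) ^ r ≤ 1 * (x ^ (-a)) ^ r := by
        apply mul_le_mul_of_nonneg_right h2 (by positivity)
    _ = (x ^ (-a)) ^ r := one_mul _

private lemma key_id (a : ℝ) (ha : 1 < a) (n k : ℕ) (hk : 1 ≤ k) :
    a * ((n : ℝ) + 1) *
        (∫ x in Set.Ioi (1:ℝ), (1 - x ^ (-a)) ^ n * (x ^ (-a)) ^ (k + 1)) =
      (a * (k : ℝ) - 1) *
        ∫ x in Set.Ioi (1:ℝ), (1 - x ^ (-a)) ^ (n + 1) * (x ^ (-a)) ^ k := by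
  have ha0 : (0:ℝ) < a := by linarith
  have hak : (1:ℝ) < a * k := by
    have : (1:ℝ) ≤ k := by exact_mod_cast hk
    nlinarith
  set F : ℝ → ℝ := fun x => (1 - x ^ (-a)) ^ (n + 1) * x ^ (1 - a * k) with hF
  set F' : ℝ → ℝ := fun x =>
    a * ((n : ℝ) + 1) * ((1 - x ^ (-a)) ^ n * (x ^ (-a)) ^ (k + 1)) +
      (1 - a * k) * ((1 - x ^ (-a)) ^ (n + 1) * (x ^ (-a)) ^ k) with hF'
  have hderiv : ∀ x ∈ Set.Ioi (1:ℝ), HasDerivAt F (F' x) x := by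
    intro x hx
    have hx1 : (1:ℝ) < x := hx
    have hx0 : (0:ℝ) < x := by linarith
    have h1 : HasDerivAt (fun x : ℝ => x ^ (-a)) (-a * x ^ (-a - 1)) x :=
      Real.hasDerivAt_rpow_const (Or.inl hx0.ne')
    have h2 : HasDerivAt (fun x : ℝ => 1 - x ^ (-a)) (a * x ^ (-a - 1)) x := by
      have := h1.const_sub 1
      refine this.congr_deriv ?_; ring
    have h3 : HasDerivAt (fun x : ℝ => (1 - x ^ (-a)) ^ (n + 1))
        (((n:ℝ) + 1) * (1 - x ^ (-a)) ^ n * (a * x ^ (-a - 1))) x := by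
      have := h2.pow (n + 1)
      refine this.congr_deriv ?_
      push_cast
      ring_nf
    have h4 : HasDerivAt (fun x : ℝ => x ^ (1 - a * k))
        ((1 - a * k) * x ^ (1 - a * k - 1)) x :=
      Real.hasDerivAt_rpow_const (Or.inl hx0.ne')
    have := h3.mul h4
    refine this.congr_deriv ?_
    have e1 : (x ^ (-a)) ^ (k + 1) = x ^ (-a - 1 + (1 - a * k)) := by
      rw [← Real.rpow_natCast (x ^ (-a)) (k+1), ← Real.rpow_mul hx0.le]
      push_cast; ring_nf
    have e2 : (x ^ (-a)) ^ k = x ^ (1 - a * k - 1) := by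
      rw [← Real.rpow_natCast (x ^ (-a)) k, ← Real.rpow_mul hx0.le]
      ring_nf
    simp only [hF']
    rw [e1, e2, Real.rpow_add hx0]
    ring
  have hcont : ContinuousWithinAt F (Set.Ici (1:ℝ)) 1 := by
    apply ContinuousAt.continuousWithinAt
    have h : ContinuousAt (fun x : ℝ => x ^ (-a)) 1 :=
      Real.continuousAt_rpow_const 1 _ (Or.inl one_ne_zero)
    have h' : ContinuousAt (fun x : ℝ => x ^ (1 - a * k)) 1 :=
      Real.continuousAt_rpow_const 1 _ (Or.inl one_ne_zero)
    exact (((continuousAt_const.sub h).pow (n+1)).mul h')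
  have htend : Filter.Tendsto F Filter.atTop (nhds 0) := by
    have t1 : Filter.Tendsto (fun x : ℝ => (1 - x ^ (-a)) ^ (n + 1))
        Filter.atTop (nhds 1) := by
      have : Filter.Tendsto (fun x : ℝ => x ^ (-a)) Filter.atTop (nhds 0) :=
        tendsto_rpow_neg_atTop ha0
      have := ((tendsto_const_nhds (x := (1:ℝ))).sub this).pow (n+1)
      simpa using this
    have t2 : Filter.Tendsto (fun x : ℝ => x ^ (1 - a * k))
        Filter.atTop (nhds 0) := by
      have : Filter.Tendsto (fun x : ℝ => x ^ (-(a * k - 1)))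
          Filter.atTop (nhds 0) := tendsto_rpow_neg_atTop (by linarith)
      convert this using 2; ring
    have := t1.mul t2
    simpa using this
  have hint1 := g_integrable a ha n (k + 1) (by omega)
  have hint2 := g_integrable a ha (n + 1) k hk
  have hFint : IntegrableOn F' (Set.Ioi (1:ℝ)) :=
    (hint1.const_mul _).add (hint2.const_mul _)
  have hF1 : F 1 = 0 := by
    simp [hF, Real.one_rpow]
  have := integral_Ioi_of_hasDerivAt_of_tendsto hcont hderiv hFint htend
  rw [hF1, sub_zero] at this
  rw [hF'] at this
  rw [integral_add (hint1.const_mul _) (hint2.const_mul _),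
    integral_const_mul, integral_const_mul] at this
  linarith [this]


/-- Recurrence for expected order statistics of the power law distribution:
the expectation of the `(k+1)`-st largest of `m` samples equals
`(1 − 1/(k(1+δ)))` times the expectation of the `k`-th largest. -/
theorem expected_order_statistic_recurrence
    (δ : ℝ) (hδ : 0 < δ) (m k : ℕ) (hm : 2 ≤ m) (hk1 : 1 ≤ k) (hk : k ≤ m - 1) :
    (∫ x in Set.Ioi (1 : ℝ), x * plPdf δ (m - k) m x) =
      (1 - 1 / ((k : ℝ) * (1 + δ))) *
        ∫ x in Set.Ioi (1 : ℝ), x * plPdf δ (m - k + 1) m x := by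
  set a : ℝ := 1 + δ with ha_def
  have ha : 1 < a := by simp [ha_def]; linarith
  have hkm : k < m := by omega
  have e1 : m - (m - k) + 1 = k + 1 := by omega
  have e2 : m - (m - k + 1) + 1 = k := by omega
  have e3 : m - k + 1 - 1 = m - k := by omega
  have e4 : m - k - 1 + 1 = m - k := by omega
  have hL : ∀ x ∈ Set.Ioi (1:ℝ), x * plPdf δ (m - k) m x =
      (a * ((k:ℝ) + 1) * (m.choose (m - k - 1) : ℝ)) *
        ((1 - x ^ (-a)) ^ (m - k - 1) * (x ^ (-a)) ^ (k + 1)) := by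
    intro x hx
    have hx1 : (1:ℝ) < x := hx
    have hxne : x ≠ 0 := by linarith
    simp only [plPdf, if_pos hx1.le, e1, Nat.cast_sub hkm.le, ← ha_def]
    field_simp
    ring
  have hR : ∀ x ∈ Set.Ioi (1:ℝ), x * plPdf δ (m - k + 1) m x =
      (a * (k:ℝ) * (m.choose (m - k) : ℝ)) *
        ((1 - x ^ (-a)) ^ (m - k) * (x ^ (-a)) ^ k) := by
    intro x hx
    have hx1 : (1:ℝ) < x := hx
    have hxne : x ≠ 0 := by linarith
    simp only [plPdf, if_pos hx1.le, e2, e3, Nat.cast_add, Nat.cast_one,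
      Nat.cast_sub hkm.le, ← ha_def]
    field_simp
    ring
  rw [setIntegral_congr_fun measurableSet_Ioi hL,
    setIntegral_congr_fun measurableSet_Ioi hR, integral_const_mul, integral_const_mul]
  set J₁ := ∫ x in Set.Ioi (1:ℝ), (1 - x ^ (-a)) ^ (m - k - 1) * (x ^ (-a)) ^ (k + 1)
    with hJ₁
  set J₂ := ∫ x in Set.Ioi (1:ℝ), (1 - x ^ (-a)) ^ (m - k) * (x ^ (-a)) ^ k with hJ₂
  have hkey := key_id a ha (m - k - 1) k hk1
  have e5 : ((m - k - 1 : ℕ) : ℝ) + 1 = ((m - k : ℕ) : ℝ) := by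
    rw [← Nat.cast_add_one, e4]
  rw [e4, e5, ← hJ₁, ← hJ₂] at hkey
  have hCn := Nat.choose_succ_right_eq m (m - k - 1)
  have e6 : m - (m - k - 1) = k + 1 := by omega
  rw [e4, e6] at hCn
  have hC : ((k:ℝ) + 1) * (m.choose (m - k - 1) : ℝ) =
      ((m - k : ℕ) : ℝ) * (m.choose (m - k) : ℝ) := by
    have := congrArg (Nat.cast : ℕ → ℝ) hCn
    push_cast at this
    linarith
  have hk0 : (k:ℝ) ≠ 0 := by positivity
  have ha0 : a ≠ 0 := by intro h; rw [h] at ha; linarith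
  have hr : (1 - 1 / ((k:ℝ) * a)) * (a * (k:ℝ) * (m.choose (m - k) : ℝ) * J₂) =
      (m.choose (m - k) : ℝ) * ((a * (k:ℝ) - 1) * J₂) := by
    field_simp
  rw [hr]
  linear_combination (a * J₁) * hC + ((m.choose (m - k) : ℝ)) * hkey
end
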